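/- arXiv:2211.06245 — 9 statements merged into one kernel-verified Lean document; each statement's English description precedes it below -/
import Mathlib

section
/- Let H = (V, E) be a hypergraph and let EI(H) denote its edge intersection hypergraph. If EI(H) is the cycle C_n (as a 2-uniform hypergraph on V = {1,...,n}), then every vertex v of V has degree at least 3 in H, i.e., v is contained in at least three hyperedges of H. -/
open Finset

/-- Edge intersection hypergraph of a hypergraph with edge set `E` on vertex set `Fin n`. -/
def EIh {n : ℕ} (E : Finset (Finset (Fin n))) : Finset (Finset (Fin n)) :=
  ((E ×ˢ E).filter fun p => p.1 ≠ p.2 ∧ 2 ≤ (p.1 ∩ p.2).card).image fun p => p.1 ∩ p.2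

/-- The edge set of the cycle `C_n` on vertex set `Fin n`. -/
def cyc (n : ℕ) [NeZero n] : Finset (Finset (Fin n)) :=
  Finset.univ.image fun i : Fin n => ({i, i + 1} : Finset (Fin n))

/-- Degree of a vertex in a hypergraph. -/
def hdeg {n : ℕ} (E : Finset (Finset (Fin n))) (v : Fin n) : ℕ :=
  (E.filter fun e => v ∈ e).card

theorem stmt_0 (n : ℕ) [NeZero n] (hn : 3 ≤ n) (E : Finset (Finset (Fin n)))
    (hEI : EIh E = cyc n) : ∀ v : Fin n, 3 ≤ hdeg E v := by
  intro v
  have h1 : (1 : Fin n) ≠ 0 := by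
    intro h
    have := congrArg Fin.val h
    rw [Fin.val_one'] at this
    simp at this
    omega
  have h2 : (2 : Fin n) ≠ 0 := by
    intro h
    have := congrArg Fin.val h
    have h2' : 2 % n = 0 := this
    rw [Nat.mod_eq_of_lt (by omega)] at h2'
    omega
  have key : ∀ w : Fin n, ∃ a b : Finset (Fin n), a ∈ E ∧ b ∈ E ∧ a ≠ b ∧
      a ∩ b = ({w, w + 1} : Finset (Fin n)) := by
    intro w
    have hw : ({w, w + 1} : Finset (Fin n)) ∈ EIh E := by
      rw [hEI]
      exact mem_image.mpr ⟨w, mem_univ _, rfl⟩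
    obtain ⟨p, hp, hpe⟩ := mem_image.mp hw
    rw [mem_filter, mem_product] at hp
    exact ⟨p.1, p.2, hp.1.1, hp.1.2, hp.2.1, hpe⟩
  obtain ⟨e1, e2, he1, he2, he12, hei⟩ := key v
  obtain ⟨f1, f2, hf1, hf2, hf12, hfi⟩ := key (v - 1)
  have hsub : v - 1 + 1 = v := by rw [sub_add_cancel]
  rw [hsub] at hfi
  -- all four contain v
  have hv1 : v ∈ e1 ∩ e2 := by rw [hei]; simp
  have hv2 : v ∈ f1 ∩ f2 := by rw [hfi]; simp
  have hve1 : v ∈ e1 := (mem_inter.mp hv1).1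
  have hve2 : v ∈ e2 := (mem_inter.mp hv1).2
  have hvf1 : v ∈ f1 := (mem_inter.mp hv2).1
  have hvf2 : v ∈ f2 := (mem_inter.mp hv2).2
  -- the two intersections differ
  have hneq : e1 ∩ e2 ≠ f1 ∩ f2 := by
    rw [hei, hfi]
    intro h
    have hmem : v + 1 ∈ ({v - 1, v} : Finset (Fin n)) := by
      rw [← h]; simp
    simp only [mem_insert, mem_singleton] at hmem
    rcases hmem with h' | h'
    · apply h2
      have : (v + 1) - (v - 1) = 2 := by
        rw [sub_sub_eq_add_sub, add_assoc, add_sub_cancel_left]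
        ext
        simp [Fin.val_add]
      rw [h', sub_self] at this
      exact this.symm
    · apply h1
      have : (v + 1) - v = 1 := by rw [add_sub_cancel_left]
      rw [h', sub_self] at this
      exact this.symm
  -- find g ∉ {e1, e2} containing v, g ∈ E
  have hg : ∃ g, g ∈ E ∧ v ∈ g ∧ g ∉ ({e1, e2} : Finset (Finset (Fin n))) := by
    by_cases hc1 : f1 ∈ ({e1, e2} : Finset (Finset (Fin n)))
    · refine ⟨f2, hf2, hvf2, ?_⟩
      intro hc2
      simp only [mem_insert, mem_singleton] at hc1 hc2
      apply hneq
      rcases hc1 with h' | h' <;> rcases hc2 with h'' | h''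
      · exact absurd (h'.trans h''.symm) hf12
      · rw [h', h'']
      · rw [h', h'', inter_comm]
      · exact absurd (h'.trans h''.symm) hf12
    · exact ⟨f1, hf1, hvf1, hc1⟩
  obtain ⟨g, hgE, hvg, hgne⟩ := hg
  have hsubset : ({g, e1, e2} : Finset (Finset (Fin n))) ⊆ E.filter fun e => v ∈ e := by
    intro x hx
    simp only [mem_insert, mem_singleton] at hx
    rcases hx with h | h | h <;> subst h <;> rw [mem_filter]
    · exact ⟨hgE, hvg⟩
    · exact ⟨he1, hve1⟩
    · exact ⟨he2, hve2⟩
  have hcard : ({g, e1, e2} : Finset (Finset (Fin n))).card = 3 := by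
    rw [card_insert_of_notMem hgne, card_pair he12]
  calc 3 = ({g, e1, e2} : Finset (Finset (Fin n))).card := hcard.symm
    _ ≤ _ := card_le_card hsubset
end

section
/- Let H = (V, E) be a k-uniform hypergraph with EI(H) = C_n. If H is 3-regular (every vertex has degree exactly 3), then |E| is minimum among all k-uniform hypergraphs H' = (V, E') with EI(H') = C_n; moreover |E| = 3n/k. -/
open Finset

lemma mem_EIh {n : ℕ} {E : Finset (Finset (Fin n))} {s : Finset (Fin n)}
    (h : s ∈ EIh E) : ∃ a ∈ E, ∃ b ∈ E, a ≠ b ∧ a ∩ b = s := by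
  simp only [EIh, mem_image, mem_filter, mem_product, Prod.exists] at h
  obtain ⟨a, b, ⟨⟨ha, hb⟩, hne, _⟩, hab⟩ := h
  exact ⟨a, ha, b, hb, hne, hab⟩

lemma mem_cyc {n : ℕ} [NeZero n] (i : Fin n) : ({i, i + 1} : Finset (Fin n)) ∈ cyc n := by
  simp only [cyc, mem_image]
  exact ⟨i, mem_univ i, rfl⟩

open Fin.NatCast in
lemma one_ne_zero_fin {n : ℕ} [NeZero n] (hn : 3 ≤ n) : (1 : Fin n) ≠ 0 := by
  intro h
  have h2 : ((1:ℕ) : Fin n).val = 1 := Fin.val_cast_of_lt (by omega)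
  rw [show ((1:ℕ):Fin n) = (1:Fin n) by push_cast; ring, h] at h2
  simp at h2

open Fin.NatCast Fin.CommRing in
lemma two_ne_zero_fin {n : ℕ} [NeZero n] (hn : 3 ≤ n) : (1 : Fin n) + 1 ≠ 0 := by
  intro h
  have h2 : ((2:ℕ) : Fin n).val = 2 := Fin.val_cast_of_lt (by omega)
  rw [show ((2:ℕ):Fin n) = (1:Fin n)+1 by push_cast; ring, h] at h2
  simp at h2

/-- The two cycle edges at `v` are distinct. -/
lemma cyc_edges_ne {n : ℕ} [NeZero n] (hn : 3 ≤ n) (v : Fin n) :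
    ({v - 1, v} : Finset (Fin n)) ≠ ({v, v + 1} : Finset (Fin n)) := by
  intro h
  have hv1 : v + 1 ∈ ({v - 1, v} : Finset (Fin n)) := by
    rw [h]; simp
  simp only [mem_insert, mem_singleton] at hv1
  rcases hv1 with h1 | h1
  · -- v + 1 = v - 1
    have h2 : v + (1 + 1) = v + 0 := by
      rw [← add_assoc, h1, sub_add_cancel, add_zero]
    exact two_ne_zero_fin hn (add_left_cancel h2)
  · -- v + 1 = v
    have h2 : v + 1 = v + 0 := by rw [h1, add_zero]
    exact one_ne_zero_fin hn (add_left_cancel h2)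

lemma deg_ge_three {n : ℕ} [NeZero n] (hn : 3 ≤ n) (E : Finset (Finset (Fin n)))
    (hEI : EIh E = cyc n) (v : Fin n) : 3 ≤ hdeg E v := by
  have hm1 : ({v, v + 1} : Finset (Fin n)) ∈ EIh E := by rw [hEI]; exact mem_cyc v
  have hm2 : ({v - 1, v} : Finset (Fin n)) ∈ EIh E := by
    rw [hEI]
    have := mem_cyc (v - 1) (n := n)
    rwa [sub_add_cancel] at this
  obtain ⟨a, ha, b, hb, hab, hiab⟩ := mem_EIh hm1
  obtain ⟨c, hc, d, hd, hcd, hicd⟩ := mem_EIh hm2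
  have hva : v ∈ a := by
    have : v ∈ a ∩ b := by rw [hiab]; simp
    exact mem_of_mem_inter_left this
  have hvb : v ∈ b := by
    have : v ∈ a ∩ b := by rw [hiab]; simp
    exact mem_of_mem_inter_right this
  have hvc : v ∈ c := by
    have : v ∈ c ∩ d := by rw [hicd]; simp
    exact mem_of_mem_inter_left this
  have hvd : v ∈ d := by
    have : v ∈ c ∩ d := by rw [hicd]; simp
    exact mem_of_mem_inter_right this
  have hne : c ∩ d ≠ a ∩ b := by rw [hiab, hicd]; exact cyc_edges_ne hn v
  -- one of c, d is not in {a, b}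
  have key : c ∉ ({a, b} : Finset (Finset (Fin n))) ∨ d ∉ ({a, b} : Finset (Finset (Fin n))) := by
    by_contra hcon
    push_neg at hcon
    obtain ⟨h1, h2⟩ := hcon
    simp only [mem_insert, mem_singleton] at h1 h2
    rcases h1 with h1 | h1 <;> rcases h2 with h2 | h2
    · exact hcd (h1.trans h2.symm)
    · exact hne (by rw [h1, h2])
    · exact hne (by rw [h1, h2, inter_comm])
    · exact hcd (h1.trans h2.symm)
  obtain ⟨e5, he5E, hve5, he5⟩ : ∃ e5, e5 ∈ E ∧ v ∈ e5 ∧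
      e5 ∉ ({a, b} : Finset (Finset (Fin n))) := by
    rcases key with h | h
    · exact ⟨c, hc, hvc, h⟩
    · exact ⟨d, hd, hvd, h⟩
  have hsub : ({a, b, e5} : Finset (Finset (Fin n))) ⊆ E.filter fun e => v ∈ e := by
    intro x hx
    simp only [mem_insert, mem_singleton] at hx
    rcases hx with rfl | rfl | rfl <;> simp [mem_filter, ha, hb, he5E, hva, hvb, hve5]
  have hcard : ({a, b, e5} : Finset (Finset (Fin n))).card = 3 := by
    simp only [mem_insert, mem_singleton] at he5
    push_neg at he5
    rw [card_insert_of_notMem (by simp [hab, he5.1.symm, he5.2.symm]),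
      card_insert_of_notMem (by simp [he5.2.symm]), card_singleton]
  calc 3 = ({a, b, e5} : Finset (Finset (Fin n))).card := hcard.symm
    _ ≤ _ := card_le_card hsub

lemma sum_hdeg {n : ℕ} (E : Finset (Finset (Fin n))) :
    ∑ v : Fin n, hdeg E v = ∑ e ∈ E, e.card := by
  simp only [hdeg, card_filter]
  rw [Finset.sum_comm]
  refine Finset.sum_congr rfl fun e _ => ?_
  rw [← card_filter, filter_univ_mem]

theorem stmt_1 (n k : ℕ) [NeZero n] (hn : 3 ≤ n) (E : Finset (Finset (Fin n)))
    (hunif : ∀ e ∈ E, e.card = k) (hEI : EIh E = cyc n)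
    (hreg : ∀ v : Fin n, hdeg E v = 3) :
    (∀ E' : Finset (Finset (Fin n)), (∀ e ∈ E', e.card = k) → EIh E' = cyc n →
      E.card ≤ E'.card) ∧ E.card * k = 3 * n := by
  have hk : 2 ≤ k := by
    have hm : ({0, 0 + 1} : Finset (Fin n)) ∈ EIh E := by rw [hEI]; exact mem_cyc 0
    obtain ⟨a, ha, b, hb, hab, hiab⟩ := mem_EIh hm
    have h2 : ({0, 0 + 1} : Finset (Fin n)).card = 2 := by
      rw [card_insert_of_notMem (by simp [(one_ne_zero_fin hn).symm]), card_singleton]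
    calc 2 = (a ∩ b).card := by rw [hiab, h2]
      _ ≤ a.card := card_le_card inter_subset_left
      _ = k := hunif a ha
  have hEcard : E.card * k = 3 * n := by
    calc E.card * k = ∑ e ∈ E, e.card := by
          rw [Finset.sum_congr rfl hunif, sum_const, smul_eq_mul]
      _ = ∑ v : Fin n, hdeg E v := (sum_hdeg E).symm
      _ = ∑ _v : Fin n, 3 := Finset.sum_congr rfl fun v _ => hreg v
      _ = 3 * n := by simp [mul_comm]
  refine ⟨fun E' hunif' hEI' => ?_, hEcard⟩
  have hE'card : 3 * n ≤ E'.card * k := by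
    calc 3 * n = ∑ _v : Fin n, 3 := by simp [mul_comm]
      _ ≤ ∑ v : Fin n, hdeg E' v :=
          Finset.sum_le_sum fun v _ => deg_ge_three hn E' hEI' v
      _ = ∑ e ∈ E', e.card := sum_hdeg E'
      _ = E'.card * k := by rw [Finset.sum_congr rfl hunif', sum_const, smul_eq_mul]
  have := hEcard ▸ hE'card
  exact Nat.le_of_mul_le_mul_right this (by omega)
end

section
/- Let H = (V, E) be a k-uniform hypergraph on n vertices with EI(H) = C_n. Then |E| ≥ 3n/k. -/
open Finset

theorem stmt_2 (n k : ℕ) [NeZero n] (hn : 3 ≤ n) (E : Finset (Finset (Fin n)))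
    (hunif : ∀ e ∈ E, e.card = k) (hEI : EIh E = cyc n) :
    3 * n ≤ E.card * k := by
  -- basic arithmetic facts in Fin n
  have h1 : (1 : Fin n) ≠ 0 := by
    simp [Fin.ext_iff, Fin.val_one']
    omega
  have h2 : (1 + 1 : Fin n) ≠ 0 := by
    simp [Fin.ext_iff, Fin.add_def, Fin.val_one']
    rw [Nat.mod_eq_of_lt (by omega)]
    omega
  -- for each i, the cycle edge {i,i+1} is an intersection of two distinct hyperedges
  have hpair : ∀ i : Fin n, ∃ a b, a ∈ E ∧ b ∈ E ∧ a ≠ b ∧ a ∩ b = {i, i + 1} := by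
    intro i
    have hmem : ({i, i + 1} : Finset (Fin n)) ∈ EIh E := by
      rw [hEI, cyc]
      exact mem_image.2 ⟨i, mem_univ i, rfl⟩
    simp only [EIh, mem_image, mem_filter, mem_product] at hmem
    obtain ⟨⟨a, b⟩, ⟨⟨ha, hb⟩, hab, _⟩, heq⟩ := hmem
    exact ⟨a, b, ha, hb, hab, heq⟩
  -- each vertex has degree at least 3
  have hdeg3 : ∀ v : Fin n, 3 ≤ (E.filter fun e => v ∈ e).card := by
    intro v
    obtain ⟨a, b, ha, hb, hab, habe⟩ := hpair (v - 1)
    obtain ⟨c, d, hc, hd, hcd, hcde⟩ := hpair v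
    have hv1 : (v - 1) + 1 = v := by abel
    rw [hv1] at habe
    have hva : v ∈ a := by
      have : v ∈ a ∩ b := by rw [habe]; simp
      exact (mem_inter.1 this).1
    have hvb : v ∈ b := by
      have : v ∈ a ∩ b := by rw [habe]; simp
      exact (mem_inter.1 this).2
    have hvc : v ∈ c := by
      have : v ∈ c ∩ d := by rw [hcde]; simp
      exact (mem_inter.1 this).1
    have hvd : v ∈ d := by
      have : v ∈ c ∩ d := by rw [hcde]; simp
      exact (mem_inter.1 this).2
    have hne : a ∩ b ≠ c ∩ d := by
      rw [habe, hcde]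
      intro h
      have : v + 1 ∈ ({v - 1, v} : Finset (Fin n)) := by rw [h]; simp
      simp only [mem_insert, mem_singleton] at this
      rcases this with h' | h'
      · apply h2
        have : v + 1 - (v - 1) = 1 + 1 := by abel
        rw [h'] at this
        simpa using this.symm
      · exact h1 (by simpa using congrArg (· - v) h')
    have hsub : ∀ x ∈ ({a, b, c, d} : Finset (Finset (Fin n))), x ∈ E.filter fun e => v ∈ e := by
      intro x hx
      simp only [mem_insert, mem_singleton] at hx
      rcases hx with rfl | rfl | rfl | rfl <;> simp_all [mem_filter]
    by_cases hca : c = a ∨ c = b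
    · -- then d ∉ {a, b}
      have hda : d ≠ a ∧ d ≠ b := by
        constructor <;> rintro rfl
        · rcases hca with rfl | rfl
          · exact hcd rfl
          · exact hne (inter_comm d c)
        · rcases hca with rfl | rfl
          · exact hne rfl
          · exact hcd rfl
      have : ({a, b, d} : Finset (Finset (Fin n))).card = 3 := by
        rw [card_insert_of_notMem (by simp [hab, hda.1.symm]),
            card_insert_of_notMem (by simp [hda.2.symm])]
        simp
      calc 3 = ({a, b, d} : Finset (Finset (Fin n))).card := this.symm
        _ ≤ _ := card_le_card (by
            intro x hx
            apply hsub
            simp only [mem_insert, mem_singleton] at hx ⊢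
            tauto)
    · push_neg at hca
      have : ({a, b, c} : Finset (Finset (Fin n))).card = 3 := by
        rw [card_insert_of_notMem (by simp [hab, hca.1.symm]),
            card_insert_of_notMem (by simp [hca.2.symm])]
        simp
      calc 3 = ({a, b, c} : Finset (Finset (Fin n))).card := this.symm
        _ ≤ _ := card_le_card (by
            intro x hx
            apply hsub
            simp only [mem_insert, mem_singleton] at hx ⊢
            tauto)
  -- double counting
  have hsum : ∑ v : Fin n, (E.filter fun e => v ∈ e).card = ∑ e ∈ E, e.card := by
    simp only [card_filter]
    rw [Finset.sum_comm]
    congr 1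
    ext e
    simp [Finset.card_filter, Finset.filter_mem_eq_inter]
  calc 3 * n = ∑ _v : Fin n, 3 := by simp [mul_comm]
    _ ≤ ∑ v : Fin n, (E.filter fun e => v ∈ e).card := Finset.sum_le_sum fun v _ => hdeg3 v
    _ = ∑ e ∈ E, e.card := hsum
    _ = ∑ e ∈ E, k := Finset.sum_congr rfl hunif
    _ = E.card * k := by simp [mul_comm]
end

section
/- If H = (V, E) is a 4-uniform hypergraph with EI(H) = C_n, then n ≥ 11. -/
open Finset

namespace EIaux

instance instLorComm : Std.Commutative (α := ℕ) (· ||| ·) := ⟨fun a b => Nat.lor_comm a b⟩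
instance instLorAssoc : Std.Associative (α := ℕ) (· ||| ·) := ⟨fun a b c => Nat.lor_assoc a b c⟩

/-- bitmask of a finset of `Fin n` -/
def msk {n : ℕ} (S : Finset (Fin n)) : ℕ := Finset.fold (· ||| ·) 0 (fun v => 2 ^ v.val) S

lemma testBit_msk {n : ℕ} (S : Finset (Fin n)) (j : ℕ) :
    (msk S).testBit j = true ↔ ∃ v ∈ S, v.val = j := by
  classical
  induction S using Finset.induction_on with
  | empty => simp [msk]
  | @insert a S ha ih =>
    rw [msk, Finset.fold_insert ha, Nat.testBit_lor]
    rw [msk] at ih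
    simp only [Bool.or_eq_true, Nat.testBit_two_pow, decide_eq_true_eq, Finset.mem_insert, ih]
    constructor
    · rintro (h | ⟨v, hv, hvj⟩)
      · exact ⟨a, Or.inl rfl, h⟩
      · exact ⟨v, Or.inr hv, hvj⟩
    · rintro ⟨v, (rfl | hv), hvj⟩
      · exact Or.inl hvj
      · exact Or.inr ⟨v, hv, hvj⟩

lemma msk_inter {n : ℕ} (A B : Finset (Fin n)) : msk (A ∩ B) = msk A &&& msk B := by
  classical
  refine Nat.eq_of_testBit_eq fun j => ?_
  rw [Bool.eq_iff_iff, Nat.testBit_land, Bool.and_eq_true, testBit_msk, testBit_msk, testBit_msk]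
  constructor
  · rintro ⟨v, hv, rfl⟩
    exact ⟨⟨v, (Finset.mem_inter.mp hv).1, rfl⟩, ⟨v, (Finset.mem_inter.mp hv).2, rfl⟩⟩
  · rintro ⟨⟨v, hv, rfl⟩, ⟨u, hu, huv⟩⟩
    have : u = v := Fin.val_injective huv
    subst this
    exact ⟨u, Finset.mem_inter.mpr ⟨hv, hu⟩, rfl⟩

lemma msk_insert {n : ℕ} (a : Fin n) (S : Finset (Fin n)) :
    msk (insert a S) = 2 ^ a.val ||| msk S := by
  classical
  refine Nat.eq_of_testBit_eq fun j => ?_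
  rw [Bool.eq_iff_iff, Nat.testBit_lor, Bool.or_eq_true, testBit_msk, testBit_msk,
    Nat.testBit_two_pow]
  simp only [Finset.mem_insert, decide_eq_true_eq]
  constructor
  · rintro ⟨v, (rfl | hv), hvj⟩
    · exact Or.inl hvj
    · exact Or.inr ⟨v, hv, hvj⟩
  · rintro (h | ⟨v, hv, hvj⟩)
    · exact ⟨a, Or.inl rfl, h⟩
    · exact ⟨v, Or.inr hv, hvj⟩

lemma msk_empty {n : ℕ} : msk (∅ : Finset (Fin n)) = 0 := rfl

lemma msk_singleton {n : ℕ} (a : Fin n) : msk ({a} : Finset (Fin n)) = 2 ^ a.val := by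
  rw [show ({a} : Finset (Fin n)) = insert a ∅ from rfl, msk_insert, msk_empty, Nat.or_zero]

lemma land_msk_eq_zero {n : ℕ} {x : Fin n} {S : Finset (Fin n)} (hx : x ∉ S) :
    2 ^ x.val &&& msk S = 0 := by
  refine Nat.eq_of_testBit_eq fun j => ?_
  rw [Nat.testBit_land, Nat.zero_testBit, Nat.testBit_two_pow]
  cases h : (msk S).testBit j with
  | false => simp
  | true =>
    rw [testBit_msk] at h
    obtain ⟨v, hv, rfl⟩ := h
    have hne : ¬ (x.val = v.val) := fun hh => hx (Fin.val_injective hh ▸ hv)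
    simp [hne]

lemma single_bit_land {n : ℕ} {S : Finset (Fin n)} (h : S.card ≤ 1) :
    msk S &&& (msk S - 1) = 0 := by
  classical
  rcases S.eq_empty_or_nonempty with rfl | hS
  · rw [msk_empty]; exact Nat.zero_and _
  · obtain ⟨a, rfl⟩ := Finset.card_eq_one.mp (le_antisymm h (Finset.card_pos.mpr hS))
    rw [msk_singleton]
    refine Nat.eq_of_testBit_eq fun j => ?_
    rw [Nat.testBit_land, Nat.zero_testBit, Nat.testBit_two_pow, Nat.testBit_two_pow_sub_one]
    rcases Nat.lt_trichotomy j a.val with h' | h' | h' <;> simp <;> omega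

/-! ### Boolean DFS search for the core combinatorial structure -/

def okb (pl : List ℕ) (e f : ℕ) : Bool :=
  e == f || (e &&& f) &&& ((e &&& f) - 1) == 0 || pl.contains (e &&& f)

def fm (n i w : ℕ) : ℕ := 2 ^ (i % n) ||| 2 ^ ((i+1) % n) ||| 2 ^ ((i+2) % n) ||| 2 ^ w

def gm (n i x y : ℕ) : ℕ := 2 ^ ((i+1) % n) ||| 2 ^ ((i+2) % n) ||| 2 ^ x ||| 2 ^ y

def goG (n : ℕ) (pl Fs : List ℕ) : ℕ → ℕ → List ℕ → Bool
  | 0, _, _ => true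
  | k + 1, i, Gs => (List.range n).any fun x =>
      (2 ^ x &&& Fs.getD i 0 == 0) && (List.range n).any fun y =>
        Nat.blt x y && (2 ^ y &&& Fs.getD i 0 == 0) &&
        (Fs.all fun f => okb pl (gm n i x y) f) && (Gs.all fun g => okb pl (gm n i x y) g) &&
        goG n pl Fs k (i + 1) (Gs ++ [gm n i x y])

def goW (n : ℕ) (pl : List ℕ) : ℕ → ℕ → List ℕ → Bool
  | 0, _, Fs => goG n pl Fs n 0 []
  | k + 1, i, Fs => (List.range n).any fun w =>
      (2 ^ w &&& (2 ^ (i % n) ||| 2 ^ ((i+1) % n) ||| 2 ^ ((i+2) % n)) == 0) &&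
      (Fs.all fun f => okb pl (fm n i w) f) && goW n pl k (i + 1) (Fs ++ [fm n i w])

def plist (n : ℕ) : List ℕ := (List.range n).map fun k => 2 ^ k ||| 2 ^ ((k+1) % n)

lemma getD_map_range {n i : ℕ} (f : ℕ → ℕ) (h : i < n) :
    ((List.range n).map f).getD i 0 = f i := by
  rw [List.getD_eq_getElem?_getD]
  simp [List.getElem?_map, List.getElem?_range h]

section Complete

variable {n : ℕ} {pl : List ℕ} {W X Y : ℕ → ℕ}

lemma goG_complete
    (hXn : ∀ i, X i < n) (hYn : ∀ i, Y i < n) (hXY : ∀ i, X i < Y i)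
    (hXF : ∀ i, 2 ^ X i &&& fm n i (W i) = 0) (hYF : ∀ i, 2 ^ Y i &&& fm n i (W i) = 0)
    (hGF : ∀ i j, okb pl (gm n i (X i) (Y i)) (fm n j (W j)) = true)
    (hGG : ∀ i j, okb pl (gm n i (X i) (Y i)) (gm n j (X j) (Y j)) = true) :
    ∀ k i, i + k = n →
      goG n pl ((List.range n).map fun j => fm n j (W j)) k i
        ((List.range i).map fun j => gm n j (X j) (Y j)) = true := by
  intro k
  induction k with
  | zero => intro i hi; rfl
  | succ k ih =>
    intro i hi
    have hin : i < n := by omega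
    rw [goG]
    refine List.any_eq_true.mpr ⟨X i, List.mem_range.mpr (hXn i), ?_⟩
    rw [Bool.and_eq_true]
    constructor
    · rw [getD_map_range _ hin, hXF i]; rfl
    refine List.any_eq_true.mpr ⟨Y i, List.mem_range.mpr (hYn i), ?_⟩
    rw [Bool.and_eq_true, Bool.and_eq_true, Bool.and_eq_true, Bool.and_eq_true]
    refine ⟨⟨⟨⟨?_, ?_⟩, ?_⟩, ?_⟩, ?_⟩
    · rw [Nat.blt_eq]; exact hXY i
    · rw [getD_map_range _ hin, hYF i]; rfl
    · refine List.all_eq_true.mpr fun f hf => ?_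
      obtain ⟨j, _, rfl⟩ := List.mem_map.mp hf
      exact hGF i j
    · refine List.all_eq_true.mpr fun g hg => ?_
      obtain ⟨j, _, rfl⟩ := List.mem_map.mp hg
      exact hGG i j
    · have heq : ((List.range i).map fun j => gm n j (X j) (Y j)) ++ [gm n i (X i) (Y i)]
          = (List.range (i+1)).map fun j => gm n j (X j) (Y j) := by
        rw [List.range_succ, List.map_append]; rfl
      rw [heq]
      exact ih (i+1) (by omega)

lemma goW_complete
    (hWn : ∀ i, W i < n)
    (hW0 : ∀ i, 2 ^ W i &&& (2 ^ (i % n) ||| 2 ^ ((i+1) % n) ||| 2 ^ ((i+2) % n)) = 0)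
    (hFF : ∀ i j, okb pl (fm n i (W i)) (fm n j (W j)) = true)
    (hXn : ∀ i, X i < n) (hYn : ∀ i, Y i < n) (hXY : ∀ i, X i < Y i)
    (hXF : ∀ i, 2 ^ X i &&& fm n i (W i) = 0) (hYF : ∀ i, 2 ^ Y i &&& fm n i (W i) = 0)
    (hGF : ∀ i j, okb pl (gm n i (X i) (Y i)) (fm n j (W j)) = true)
    (hGG : ∀ i j, okb pl (gm n i (X i) (Y i)) (gm n j (X j) (Y j)) = true) :
    goW n pl n 0 [] = true := by
  suffices h : ∀ k i, i + k = n →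
      goW n pl k i ((List.range i).map fun j => fm n j (W j)) = true by
    have := h n 0 (by omega)
    simpa using this
  intro k
  induction k with
  | zero =>
    intro i hi
    rw [goW]
    have hh : i = n := by omega
    subst hh
    exact goG_complete hXn hYn hXY hXF hYF hGF hGG i 0 (by omega)
  | succ k ih =>
    intro i hi
    rw [goW]
    refine List.any_eq_true.mpr ⟨W i, List.mem_range.mpr (hWn i), ?_⟩
    rw [Bool.and_eq_true, Bool.and_eq_true]
    refine ⟨⟨?_, ?_⟩, ?_⟩
    · rw [hW0 i]; rfl
    · refine List.all_eq_true.mpr fun f hf => ?_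
      obtain ⟨j, _, rfl⟩ := List.mem_map.mp hf
      exact hFF i j
    · have heq : ((List.range i).map fun j => fm n j (W j)) ++ [fm n i (W i)]
          = (List.range (i+1)).map fun j => fm n j (W j) := by
        rw [List.range_succ, List.map_append]; rfl
      rw [heq]
      exact ih (i+1) (by omega)

end Complete

set_option maxRecDepth 1000000 in
set_option maxHeartbeats 12000000 in
lemma noCore : ∀ m, 4 ≤ m → m ≤ 10 → goW m (plist m) m 0 [] = false := by
  intro m h4 h10
  interval_cases m <;> decide

end EIaux

theorem stmt_4 (n : ℕ) [NeZero n] (E : Finset (Finset (Fin n)))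
    (hunif : ∀ e ∈ E, e.card = 4) (hEI : EIh E = cyc n) : 11 ≤ n := by
  classical
  open EIaux Fin.NatCast in
  by_contra hlt
  push_neg at hlt
  -- every size-≥2 intersection of distinct edges is a cyclic pair
  have hup : ∀ {A B : Finset (Fin n)}, A ∈ E → B ∈ E → A ≠ B → 2 ≤ (A ∩ B).card →
      ∃ k : Fin n, A ∩ B = {k, k + 1} := by
    intro A B hA hB hne h2
    have hmem : A ∩ B ∈ EIh E :=
      Finset.mem_image.mpr ⟨(A, B),
        Finset.mem_filter.mpr ⟨Finset.mem_product.mpr ⟨hA, hB⟩, hne, h2⟩, rfl⟩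
    rw [hEI] at hmem
    obtain ⟨k, _, hk⟩ := Finset.mem_image.mp hmem
    exact ⟨k, hk.symm⟩
  -- every cyclic pair is an intersection of two distinct edges
  have hlo : ∀ k : Fin n, ∃ A B, A ∈ E ∧ B ∈ E ∧ A ≠ B ∧ A ∩ B = {k, k + 1} := by
    intro k
    have hmem : ({k, k + 1} : Finset (Fin n)) ∈ EIh E := by
      rw [hEI]; exact Finset.mem_image.mpr ⟨k, Finset.mem_univ k, rfl⟩
    obtain ⟨p, hp, hpe⟩ := Finset.mem_image.mp hmem
    obtain ⟨hprod, hne, _⟩ := Finset.mem_filter.mp hp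
    exact ⟨p.1, p.2, (Finset.mem_product.mp hprod).1, (Finset.mem_product.mp hprod).2, hne, hpe⟩
  have hn4 : 4 ≤ n := by
    obtain ⟨A, B, hA, -, -, -⟩ := hlo 0
    calc 4 = A.card := (hunif A hA).symm
    _ ≤ (Finset.univ : Finset (Fin n)).card := Finset.card_le_univ A
    _ = n := by simp
  -- basic arithmetic facts in `Fin n`
  have hv1 : ∀ a : Fin n, (a + 1).val = (a.val + 1) % n := by
    intro a
    have h := congrArg Fin.val (Fin.add_def a 1)
    simpa [Fin.val_one'] using h
  have hd1 : ∀ a : Fin n, a ≠ a + 1 := by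
    intro a h
    have hv := congrArg Fin.val h
    rw [hv1 a] at hv
    rcases Nat.lt_or_ge (a.val + 1) n with h' | h'
    · rw [Nat.mod_eq_of_lt h'] at hv; omega
    · have hv2 : a.val + 1 = n := by have := a.isLt; omega
      rw [hv2, Nat.mod_self] at hv
      have := a.isLt; omega
  have hd2 : ∀ a : Fin n, a ≠ a + 1 + 1 := by
    intro a h
    have hv := congrArg Fin.val h
    rw [hv1 (a+1), hv1 a, Nat.mod_add_mod] at hv
    have ha := a.isLt
    rcases Nat.lt_or_ge (a.val + 2) n with h' | h'
    · rw [Nat.mod_eq_of_lt h'] at hv; omega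
    · rcases Nat.lt_or_ge (a.val + 2) (2 * n) with h'' | h''
      · have hv2 : (a.val + 2) % n = a.val + 2 - n := by
          rw [Nat.mod_eq_sub_mod h', Nat.mod_eq_of_lt (by omega)]
        rw [hv2] at hv; omega
      · omega
  have hd21 : ∀ a : Fin n, a + 1 ≠ a + 1 + 1 := fun a => hd1 (a + 1)
  have hcardP : ∀ a : Fin n, ({a, a + 1} : Finset (Fin n)).card = 2 := by
    intro a
    rw [Finset.card_insert_of_notMem (by rw [Finset.mem_singleton]; exact hd1 a),
      Finset.card_singleton]
  have hcardT : ∀ a : Fin n, ({a, a + 1, a + 1 + 1} : Finset (Fin n)).card = 3 := by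
    intro a
    rw [Finset.card_insert_of_notMem (by simp [hd1 a, hd2 a]), hcardP (a + 1)]
  -- every "triple" is contained in some edge
  have htrip : ∀ a : Fin n, ∃ e, e ∈ E ∧ ({a, a + 1, a + 1 + 1} : Finset (Fin n)) ⊆ e := by
    intro a
    by_contra htr
    push_neg at htr
    obtain ⟨A₁, A₂, hA₁, hA₂, hAne, hAint⟩ := hlo a
    obtain ⟨B₁, B₂, hB₁, hB₂, hBne, hBint⟩ := hlo (a + 1)
    have hpA₁ : ({a, a + 1} : Finset (Fin n)) ⊆ A₁ := hAint ▸ Finset.inter_subset_left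
    have hpA₂ : ({a, a + 1} : Finset (Fin n)) ⊆ A₂ := hAint ▸ Finset.inter_subset_right
    have hpB₁ : ({a + 1, a + 1 + 1} : Finset (Fin n)) ⊆ B₁ := hBint ▸ Finset.inter_subset_left
    have hpB₂ : ({a + 1, a + 1 + 1} : Finset (Fin n)) ⊆ B₂ := hBint ▸ Finset.inter_subset_right
    have hT : ∀ {C : Finset (Fin n)}, C ∈ E → ({a, a + 1} : Finset (Fin n)) ⊆ C →
        a + 1 + 1 ∈ C → False := by
      intro C hC hsub hmem
      refine htr C hC ?_
      rw [Finset.insert_subset_iff, Finset.insert_subset_iff]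
      exact ⟨hsub (Finset.mem_insert_self _ _), hsub (by simp), Finset.singleton_subset_iff.mpr hmem⟩
    have hT' : ∀ {C : Finset (Fin n)}, C ∈ E → ({a + 1, a + 1 + 1} : Finset (Fin n)) ⊆ C →
        a ∈ C → False := by
      intro C hC hsub hmem
      refine htr C hC ?_
      rw [Finset.insert_subset_iff, Finset.insert_subset_iff]
      exact ⟨hmem, hsub (Finset.mem_insert_self _ _), Finset.singleton_subset_iff.mpr (hsub (by simp))⟩
    -- any A-side edge meets any B-side edge exactly in a+1
    have hABint : ∀ {A B : Finset (Fin n)}, A ∈ E → B ∈ E →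
        ({a, a + 1} : Finset (Fin n)) ⊆ A → ({a + 1, a + 1 + 1} : Finset (Fin n)) ⊆ B →
        ∀ u ∈ A ∩ B, u = a + 1 := by
      intro A B hA hB hpa hpb u hu
      by_contra hune
      have hAneB : A ≠ B := by
        rintro rfl
        exact hT hA hpa (hpb (by simp))
      have ha1 : a + 1 ∈ A ∩ B := Finset.mem_inter.mpr ⟨hpa (by simp), hpb (by simp)⟩
      have h2 : 2 ≤ (A ∩ B).card := by
        have hsub2 : ({u, a + 1} : Finset (Fin n)) ⊆ A ∩ B := by
          rw [Finset.insert_subset_iff, Finset.singleton_subset_iff]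
          exact ⟨hu, ha1⟩
        calc 2 = ({u, a + 1} : Finset (Fin n)).card := by
                rw [Finset.card_insert_of_notMem (by rw [Finset.mem_singleton]; exact hune),
                  Finset.card_singleton]
        _ ≤ (A ∩ B).card := Finset.card_le_card hsub2
      obtain ⟨k, hk⟩ := hup hA hB hAneB h2
      have ha1k : a + 1 ∈ ({k, k + 1} : Finset (Fin n)) := hk ▸ ha1
      rcases Finset.mem_insert.mp ha1k with h | h
      · -- a + 1 = k, so k + 1 = a + 1 + 1 ∈ A, contradiction
        have : a + 1 + 1 ∈ A ∩ B := by
          rw [hk, ← h]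
          simp
        exact hT hA hpa (Finset.mem_inter.mp this).1
      · -- a + 1 = k + 1, so k = a ∈ B, contradiction
        rw [Finset.mem_singleton] at h
        have hka : k = a := by
          have := add_right_cancel (a := k) (b := 1) (c := a) (by rw [← h])
          exact this
        have : a ∈ A ∩ B := by
          rw [hk, hka]
          simp
        exact hT' hB hpb (Finset.mem_inter.mp this).2
    -- the 11-element disjoint union
    have hAB12 : ∀ {A B : Finset (Fin n)}, A ∈ E → B ∈ E →
        ({a, a + 1} : Finset (Fin n)) ⊆ A → ({a + 1, a + 1 + 1} : Finset (Fin n)) ⊆ B →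
        Disjoint (A \ {a, a + 1}) (B \ {a + 1, a + 1 + 1}) := by
      intro A B hA hB hpa hpb
      rw [Finset.disjoint_left]
      intro u hu hu'
      have h1 := Finset.mem_sdiff.mp hu
      have h2 := Finset.mem_sdiff.mp hu'
      have : u = a + 1 := hABint hA hB hpa hpb u (Finset.mem_inter.mpr ⟨h1.1, h2.1⟩)
      exact h1.2 (by simp [this])
    have hdTA : ∀ {A : Finset (Fin n)}, A ∈ E → ({a, a + 1} : Finset (Fin n)) ⊆ A →
        Disjoint ({a, a + 1, a + 1 + 1} : Finset (Fin n)) (A \ {a, a + 1}) := by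
      intro A hA hpa
      rw [Finset.disjoint_left]
      intro u hu hu'
      have h1 := Finset.mem_sdiff.mp hu'
      rcases Finset.mem_insert.mp hu with rfl | hu2
      · exact h1.2 (by simp)
      rcases Finset.mem_insert.mp hu2 with rfl | hu3
      · exact h1.2 (by simp)
      rw [Finset.mem_singleton] at hu3
      subst hu3
      exact hT hA hpa h1.1
    have hdTB : ∀ {B : Finset (Fin n)}, B ∈ E → ({a + 1, a + 1 + 1} : Finset (Fin n)) ⊆ B →
        Disjoint ({a, a + 1, a + 1 + 1} : Finset (Fin n)) (B \ {a + 1, a + 1 + 1}) := by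
      intro B hB hpb
      rw [Finset.disjoint_left]
      intro u hu hu'
      have h1 := Finset.mem_sdiff.mp hu'
      rcases Finset.mem_insert.mp hu with rfl | hu2
      · exact hT' hB hpb h1.1
      · exact h1.2 (by simpa using hu2)
    have hdAA : Disjoint (A₁ \ {a, a + 1}) (A₂ \ {a, a + 1}) := by
      rw [Finset.disjoint_left]
      intro u hu hu'
      have h1 := Finset.mem_sdiff.mp hu
      have h2 := Finset.mem_sdiff.mp hu'
      have : u ∈ A₁ ∩ A₂ := Finset.mem_inter.mpr ⟨h1.1, h2.1⟩
      rw [hAint] at this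
      exact h1.2 this
    have hdBB : Disjoint (B₁ \ {a + 1, a + 1 + 1}) (B₂ \ {a + 1, a + 1 + 1}) := by
      rw [Finset.disjoint_left]
      intro u hu hu'
      have h1 := Finset.mem_sdiff.mp hu
      have h2 := Finset.mem_sdiff.mp hu'
      have : u ∈ B₁ ∩ B₂ := Finset.mem_inter.mpr ⟨h1.1, h2.1⟩
      rw [hBint] at this
      exact h1.2 this
    have hcA : ∀ {A : Finset (Fin n)}, A ∈ E → ({a, a + 1} : Finset (Fin n)) ⊆ A →
        (A \ {a, a + 1}).card = 2 := by
      intro A hA hpa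
      rw [Finset.card_sdiff_of_subset hpa, hunif A hA, hcardP a]
    have hcB : ∀ {B : Finset (Fin n)}, B ∈ E → ({a + 1, a + 1 + 1} : Finset (Fin n)) ⊆ B →
        (B \ {a + 1, a + 1 + 1}).card = 2 := by
      intro B hB hpb
      rw [Finset.card_sdiff_of_subset hpb, hunif B hB, hcardP (a + 1)]
    set U : Finset (Fin n) :=
      (({a, a + 1, a + 1 + 1} : Finset (Fin n)) ∪ (A₁ \ {a, a + 1}) ∪ (A₂ \ {a, a + 1})
        ∪ (B₁ \ {a + 1, a + 1 + 1})) ∪ (B₂ \ {a + 1, a + 1 + 1}) with hU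
    have hUcard : U.card = 11 := by
      rw [hU]
      rw [Finset.card_union_of_disjoint (by
        refine Finset.disjoint_union_left.mpr ⟨Finset.disjoint_union_left.mpr
          ⟨Finset.disjoint_union_left.mpr ⟨hdTB hB₂ hpB₂, hAB12 hA₁ hB₂ hpA₁ hpB₂⟩,
            hAB12 hA₂ hB₂ hpA₂ hpB₂⟩, hdBB⟩)]
      rw [Finset.card_union_of_disjoint (by
        refine Finset.disjoint_union_left.mpr ⟨Finset.disjoint_union_left.mpr
          ⟨hdTB hB₁ hpB₁, hAB12 hA₁ hB₁ hpA₁ hpB₁⟩, hAB12 hA₂ hB₁ hpA₂ hpB₁⟩)]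
      rw [Finset.card_union_of_disjoint (Finset.disjoint_union_left.mpr
        ⟨hdTA hA₂ hpA₂, hdAA⟩)]
      rw [Finset.card_union_of_disjoint (hdTA hA₁ hpA₁)]
      rw [hcardT a, hcA hA₁ hpA₁, hcA hA₂ hpA₂, hcB hB₁ hpB₁, hcB hB₂ hpB₂]
    have := Finset.card_le_univ U
    rw [hUcard] at this
    simp only [Finset.card_univ, Fintype.card_fin] at this
    omega
  choose eT heTE heTsub using htrip
  have hsd1 : ∀ a : Fin n, (eT a \ {a, a + 1, a + 1 + 1}).card = 1 := by
    intro a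
    rw [Finset.card_sdiff_of_subset (heTsub a), hunif _ (heTE a), hcardT a]
  choose wF hwF using fun a => Finset.card_eq_one.mp (hsd1 a)
  have hwFmem : ∀ a : Fin n, wF a ∈ eT a \ ({a, a + 1, a + 1 + 1} : Finset (Fin n)) := by
    intro a; rw [hwF a]; exact Finset.mem_singleton_self _
  have hwFT : ∀ a : Fin n, wF a ∉ ({a, a + 1, a + 1 + 1} : Finset (Fin n)) :=
    fun a => (Finset.mem_sdiff.mp (hwFmem a)).2
  have heTeq : ∀ a : Fin n, eT a = {a, a + 1, a + 1 + 1, wF a} := by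
    intro a
    have h1 := Finset.union_sdiff_of_subset (heTsub a)
    rw [hwF a] at h1
    rw [← h1]
    ext x
    simp only [Finset.mem_union, Finset.mem_insert, Finset.mem_singleton]
    tauto
  -- a second edge through each pair {a+1, a+2}
  have hsecond : ∀ a : Fin n, ∃ G, G ∈ E ∧ G ≠ eT a ∧ G ∩ eT a = {a + 1, a + 1 + 1} := by
    intro a
    obtain ⟨B₁, B₂, hB₁, hB₂, hBne, hBint⟩ := hlo (a + 1)
    have hpB₁ : ({a + 1, a + 1 + 1} : Finset (Fin n)) ⊆ B₁ := hBint ▸ Finset.inter_subset_left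
    have hpB₂ : ({a + 1, a + 1 + 1} : Finset (Fin n)) ⊆ B₂ := hBint ▸ Finset.inter_subset_right
    have key : ∀ G, G ∈ E → G ≠ eT a → ({a + 1, a + 1 + 1} : Finset (Fin n)) ⊆ G →
        G ∩ eT a = {a + 1, a + 1 + 1} := by
      intro G hG hGne hpG
      have hTsub : ({a + 1, a + 1 + 1} : Finset (Fin n)) ⊆ eT a := by
        refine Finset.Subset.trans ?_ (heTsub a)
        exact Finset.subset_insert _ _
      have hsubint : ({a + 1, a + 1 + 1} : Finset (Fin n)) ⊆ G ∩ eT a :=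
        Finset.subset_inter hpG hTsub
      have h2 : 2 ≤ (G ∩ eT a).card := by
        calc 2 = ({a + 1, a + 1 + 1} : Finset (Fin n)).card := (hcardP (a + 1)).symm
        _ ≤ (G ∩ eT a).card := Finset.card_le_card hsubint
      obtain ⟨k, hk⟩ := hup hG (heTE a) hGne h2
      rw [hk] at hsubint ⊢
      refine (Finset.eq_of_subset_of_card_le hsubint ?_).symm
      rw [hcardP (a + 1)]
      exact Finset.card_insert_le _ _ |>.trans (by simp)
    by_cases hB : B₁ = eT a
    · refine ⟨B₂, hB₂, ?_, key B₂ hB₂ ?_ hpB₂⟩ <;> · rw [← hB]; exact hBne.symm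
    · exact ⟨B₁, hB₁, hB, key B₁ hB₁ hB hpB₁⟩
  choose Gd hGdE hGdne hGdint using hsecond
  have hpGd : ∀ a : Fin n, ({a + 1, a + 1 + 1} : Finset (Fin n)) ⊆ Gd a := by
    intro a; rw [← hGdint a]; exact Finset.inter_subset_left
  have hGdsd : ∀ a : Fin n, (Gd a \ {a + 1, a + 1 + 1}).card = 2 := by
    intro a
    rw [Finset.card_sdiff_of_subset (hpGd a), hunif _ (hGdE a), hcardP (a + 1)]
  have hxy : ∀ a : Fin n, ∃ x y : Fin n, x.val < y.val ∧ Gd a \ {a + 1, a + 1 + 1} = {x, y} := by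
    intro a
    obtain ⟨u, v, huv, hp⟩ := Finset.card_eq_two.mp (hGdsd a)
    rcases Nat.lt_trichotomy u.val v.val with h | h | h
    · exact ⟨u, v, h, hp⟩
    · exact absurd (Fin.ext h) huv
    · exact ⟨v, u, h, by rw [hp, Finset.pair_comm]⟩
  choose xG yG hxylt hGdxy using hxy
  have hxGmem : ∀ a : Fin n, xG a ∈ Gd a \ ({a + 1, a + 1 + 1} : Finset (Fin n)) := by
    intro a; rw [hGdxy a]; simp
  have hyGmem : ∀ a : Fin n, yG a ∈ Gd a \ ({a + 1, a + 1 + 1} : Finset (Fin n)) := by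
    intro a; rw [hGdxy a]; simp
  have hGdeq : ∀ a : Fin n, Gd a = {a + 1, a + 1 + 1, xG a, yG a} := by
    intro a
    have h1 := Finset.union_sdiff_of_subset (hpGd a)
    rw [hGdxy a] at h1
    rw [← h1]
    ext x
    simp only [Finset.mem_union, Finset.mem_insert, Finset.mem_singleton]
    tauto
  have hxnotF : ∀ a : Fin n, xG a ∉ eT a := by
    intro a hmem
    have h1 := Finset.mem_sdiff.mp (hxGmem a)
    have : xG a ∈ Gd a ∩ eT a := Finset.mem_inter.mpr ⟨h1.1, hmem⟩
    rw [hGdint a] at this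
    exact h1.2 this
  have hynotF : ∀ a : Fin n, yG a ∉ eT a := by
    intro a hmem
    have h1 := Finset.mem_sdiff.mp (hyGmem a)
    have : yG a ∈ Gd a ∩ eT a := Finset.mem_inter.mpr ⟨h1.1, hmem⟩
    rw [hGdint a] at this
    exact h1.2 this
  -- mask computations
  have hmF : ∀ i : ℕ, msk (eT (i : Fin n)) = fm n i ((wF ((i : Fin n))).val) := by
    intro i
    rw [heTeq ((i : Fin n))]
    rw [show ({(i : Fin n), (i : Fin n) + 1, (i : Fin n) + 1 + 1, wF ((i : Fin n))} :
        Finset (Fin n)) = insert ((i : Fin n)) (insert ((i : Fin n) + 1)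
        (insert ((i : Fin n) + 1 + 1) {wF ((i : Fin n))})) from rfl]
    rw [msk_insert, msk_insert, msk_insert, msk_singleton]
    simp only [hv1, Fin.val_natCast, Nat.mod_add_mod, fm, Nat.lor_assoc]
  have hmG : ∀ i : ℕ, msk (Gd (i : Fin n))
      = gm n i ((xG ((i : Fin n))).val) ((yG ((i : Fin n))).val) := by
    intro i
    rw [hGdeq ((i : Fin n))]
    rw [show ({(i : Fin n) + 1, (i : Fin n) + 1 + 1, xG ((i : Fin n)), yG ((i : Fin n))} :
        Finset (Fin n)) = insert ((i : Fin n) + 1) (insert ((i : Fin n) + 1 + 1)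
        (insert (xG ((i : Fin n))) {yG ((i : Fin n))})) from rfl]
    rw [msk_insert, msk_insert, msk_insert, msk_singleton]
    simp only [hv1, Fin.val_natCast, Nat.mod_add_mod, gm, Nat.lor_assoc]
  have hmT : ∀ i : ℕ, msk ({(i : Fin n), (i : Fin n) + 1, (i : Fin n) + 1 + 1} : Finset (Fin n))
      = 2 ^ (i % n) ||| 2 ^ ((i+1) % n) ||| 2 ^ ((i+2) % n) := by
    intro i
    rw [show ({(i : Fin n), (i : Fin n) + 1, (i : Fin n) + 1 + 1} : Finset (Fin n))
      = insert ((i : Fin n)) (insert ((i : Fin n) + 1) {(i : Fin n) + 1 + 1}) from rfl]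
    rw [msk_insert, msk_insert, msk_singleton]
    simp only [hv1, Fin.val_natCast, Nat.mod_add_mod, Nat.lor_assoc]
  -- the okb fact for any two edges
  have hok : ∀ A B : Finset (Fin n), A ∈ E → B ∈ E →
      okb (plist n) (msk A) (msk B) = true := by
    intro A B hA hB
    unfold okb
    rcases eq_or_ne A B with rfl | hne
    · simp
    · by_cases h2 : 2 ≤ (A ∩ B).card
      · obtain ⟨k, hk⟩ := hup hA hB hne h2
        have hmAB : msk A &&& msk B = 2 ^ k.val ||| 2 ^ ((k.val + 1) % n) := by
          rw [← msk_inter, hk]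
          rw [show ({k, k + 1} : Finset (Fin n)) = insert k {k + 1} from rfl]
          rw [msk_insert, msk_singleton, hv1]
        rw [hmAB]
        have hmem : (2 ^ k.val ||| 2 ^ ((k.val + 1) % n)) ∈ plist n :=
          List.mem_map.mpr ⟨k.val, List.mem_range.mpr k.isLt, rfl⟩
        have : (plist n).contains (2 ^ k.val ||| 2 ^ ((k.val + 1) % n)) = true := by
          rw [List.contains]
          exact List.elem_eq_true_of_mem hmem
        rw [this]
        simp
      · have hle : (A ∩ B).card ≤ 1 := by omega
        have := single_bit_land hle
        rw [msk_inter] at this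
        rw [this]
        simp
  -- assemble and run the search
  have hgo : goW n (plist n) n 0 [] = true := by
    refine goW_complete (W := fun i => (wF ((i : Fin n))).val)
      (X := fun i => (xG ((i : Fin n))).val) (Y := fun i => (yG ((i : Fin n))).val)
      ?_ ?_ ?_ ?_ ?_ ?_ ?_ ?_ ?_ ?_
    · intro i; exact (wF _).isLt
    · intro i
      rw [← hmT i]
      exact land_msk_eq_zero (hwFT _)
    · intro i j
      rw [← hmF i, ← hmF j]
      exact hok _ _ (heTE _) (heTE _)
    · intro i; exact (xG _).isLt
    · intro i; exact (yG _).isLt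
    · intro i; exact hxylt _
    · intro i
      rw [← hmF i]
      exact land_msk_eq_zero (hxnotF _)
    · intro i
      rw [← hmF i]
      exact land_msk_eq_zero (hynotF _)
    · intro i j
      rw [← hmG i, ← hmF j]
      exact hok _ _ (hGdE _) (heTE _)
    · intro i j
      rw [← hmG i, ← hmG j]
      exact hok _ _ (hGdE _) (hGdE _)
  have hfalse := noCore n hn4 (by omega)
  rw [hfalse] at hgo
  exact Bool.noConfusion hgo
end

section
/- For every n ≥ 11, the 4-uniform hypergraph H on V = {1,...,n} with hyperedge set E = { {i, i+1, i+2, i+5} : i ∈ {1,...,n} } (indices mod n) satisfies EI(H) = C_n and has exactly n hyperedges. -/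
open Finset

section

open scoped Fin.NatCast Fin.CommRing

variable {n : ℕ} [NeZero n]

def S (a : ℕ) : Prop := a = 0 ∨ a = 1 ∨ a = 2 ∨ a = 5

lemma castinj (hn : 11 ≤ n) {a b : ℕ} (ha : a < n) (hb : b < n) :
    ((a : Fin n) = (b : Fin n)) ↔ a = b := by
  constructor
  · intro h
    have := congrArg Fin.val h
    rwa [Fin.val_cast_of_lt ha, Fin.val_cast_of_lt hb] at this
  · rintro rfl; rfl

lemma mem_e (i v : Fin n) :
    v ∈ ({i, i + 1, i + 2, i + 5} : Finset (Fin n)) ↔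
      ∃ a : ℕ, S a ∧ v = i + (a : Fin n) := by
  simp only [Finset.mem_insert, Finset.mem_singleton]
  constructor
  · rintro (rfl | rfl | rfl | rfl)
    · exact ⟨0, Or.inl rfl, by push_cast; ring⟩
    · exact ⟨1, by right;left;rfl, by push_cast; ring⟩
    · exact ⟨2, by right;right;left;rfl, by push_cast; ring⟩
    · exact ⟨5, by right;right;right;rfl, by push_cast; ring⟩
  · rintro ⟨a, (rfl | rfl | rfl | rfl), rfl⟩
    · left; push_cast; ring
    · right; left; push_cast; ring
    · right; right; left; push_cast; ring
    · right; right; right; push_cast; ring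

lemma key_nat {a1 b1 a2 b2 : ℕ} (h1 : S a1) (h2 : S b1) (h3 : S a2) (h4 : S b2)
    (hne : a1 ≠ a2) (hne2 : a1 ≠ b1) (heq : a1 + b2 = a2 + b1) :
    (a1 = 1 ∧ b1 = 0 ∧ a2 = 2 ∧ b2 = 1) ∨ (a1 = 2 ∧ b1 = 1 ∧ a2 = 1 ∧ b2 = 0) ∨
    (a1 = 0 ∧ b1 = 1 ∧ a2 = 1 ∧ b2 = 2) ∨ (a1 = 1 ∧ b1 = 2 ∧ a2 = 0 ∧ b2 = 1) := by
  rcases h1 with rfl|rfl|rfl|rfl <;> rcases h2 with rfl|rfl|rfl|rfl <;>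
    rcases h3 with rfl|rfl|rfl|rfl <;> rcases h4 with rfl|rfl|rfl|rfl <;> omega

lemma succ_key {a b : ℕ} (h1 : S a) (h2 : S b) (heq : a = b + 1) :
    (a = 1 ∧ b = 0) ∨ (a = 2 ∧ b = 1) := by
  rcases h1 with rfl|rfl|rfl|rfl <;> rcases h2 with rfl|rfl|rfl|rfl <;> omega

lemma S_lt (hn : 11 ≤ n) {a : ℕ} (h : S a) : a < n := by unfold S at h; omega

lemma inter_eq (hn : 11 ≤ n) (i : Fin n) :
    ({i, i + 1, i + 2, i + 5} : Finset (Fin n)) ∩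
      ({i+1, (i+1) + 1, (i+1) + 2, (i+1) + 5} : Finset (Fin n)) = {i + 1, i + 2} := by
  ext x
  rw [Finset.mem_inter, mem_e, mem_e, Finset.mem_insert, Finset.mem_singleton]
  constructor
  · rintro ⟨⟨a, ha, rfl⟩, ⟨b, hb, hx⟩⟩
    have hab : (a : Fin n) = ((b + 1 : ℕ) : Fin n) := by
      push_cast
      have : i + (a:Fin n) = i + ((b:Fin n) + 1) := by rw [hx]; ring
      exact add_left_cancel this
    have hb1 : b + 1 < n := by have hb' := hb; unfold S at hb'; omega
    rw [castinj hn (S_lt hn ha) hb1] at hab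
    rcases succ_key ha hb hab with ⟨rfl, rfl⟩ | ⟨rfl, rfl⟩
    · left; push_cast; ring
    · right; push_cast; ring
  · rintro (rfl | rfl)
    · exact ⟨⟨1, by right;left;rfl, by push_cast; ring⟩,
        ⟨0, Or.inl rfl, by push_cast; ring⟩⟩
    · exact ⟨⟨2, by right;right;left;rfl, by push_cast; ring⟩,
        ⟨1, by right;left;rfl, by push_cast; ring⟩⟩

lemma oneNeZero (hn : 11 ≤ n) : (1 : Fin n) ≠ 0 := by
  have : ((1:ℕ) : Fin n) ≠ ((0:ℕ) : Fin n) := by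
    rw [Ne, castinj hn (by omega) (by omega)]; omega
  simpa using this

lemma e_inj (hn : 11 ≤ n) {i j : Fin n}
    (h : ({i, i + 1, i + 2, i + 5} : Finset (Fin n)) = {j, j + 1, j + 2, j + 5}) :
    i = j := by
  have hi : i ∈ ({j, j + 1, j + 2, j + 5} : Finset (Fin n)) := by
    rw [← h]; simp
  have hj : j ∈ ({i, i + 1, i + 2, i + 5} : Finset (Fin n)) := by
    rw [h]; simp
  rw [mem_e] at hi hj
  obtain ⟨a, ha, hia⟩ := hi
  obtain ⟨b, hb, hjb⟩ := hj
  have hsum : i + (((a + b : ℕ)) : Fin n) = i + ((0:ℕ) : Fin n) := by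
    push_cast
    rw [hjb] at hia
    linear_combination -hia
  have := add_left_cancel hsum
  rw [castinj hn (by have ha2 := ha; have hb2 := hb; unfold S at ha2 hb2; omega) (by omega)] at this
  have ha0 : a = 0 := by omega
  subst ha0
  simpa using hia

lemma cyc_subset_EIh (hn : 11 ≤ n) :
    cyc n ⊆ EIh (Finset.univ.image fun i : Fin n =>
      ({i, i + 1, i + 2, i + 5} : Finset (Fin n))) := by
  intro A hA
  rw [cyc, Finset.mem_image] at hA
  obtain ⟨k, -, rfl⟩ := hA
  rw [EIh, Finset.mem_image]
  refine ⟨(({(k-1), (k-1) + 1, (k-1) + 2, (k-1) + 5} : Finset (Fin n)),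
    ({(k-1)+1, ((k-1)+1) + 1, ((k-1)+1) + 2, ((k-1)+1) + 5} : Finset (Fin n))), ?_, ?_⟩
  · rw [Finset.mem_filter, Finset.mem_product]
    refine ⟨⟨Finset.mem_image_of_mem _ (Finset.mem_univ _),
      Finset.mem_image_of_mem _ (Finset.mem_univ _)⟩, ?_, ?_⟩
    · intro h
      have := e_inj hn h
      have h1 : (1 : Fin n) = 0 := by linear_combination -this
      exact oneNeZero hn h1
    · rw [inter_eq hn]
      rw [Finset.card_insert_of_notMem (by
        simp only [Finset.mem_singleton]
        intro h
        have h1 : (1 : Fin n) = 0 := by linear_combination -h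
        exact oneNeZero hn h1), Finset.card_singleton]
  · rw [inter_eq hn]
    have h1 : k - 1 + 1 = k := by ring
    have h2 : k - 1 + 2 = k + 1 := by ring
    rw [h1, h2]

lemma EIh_subset_cyc (hn : 11 ≤ n) :
    EIh (Finset.univ.image fun i : Fin n =>
      ({i, i + 1, i + 2, i + 5} : Finset (Fin n))) ⊆ cyc n := by
  intro A hA
  rw [EIh, Finset.mem_image] at hA
  obtain ⟨p, hp, rfl⟩ := hA
  rw [Finset.mem_filter, Finset.mem_product] at hp
  obtain ⟨⟨h1, h2⟩, hne, hcard⟩ := hp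
  rw [Finset.mem_image] at h1 h2
  obtain ⟨i, -, hi⟩ := h1
  obtain ⟨j, -, hj⟩ := h2
  obtain ⟨p1, p2⟩ := p
  simp only at hi hj hne hcard ⊢
  subst hi hj
  have hij : i ≠ j := fun h => hne (by rw [h])
  obtain ⟨v, hv, w, hw, hvw⟩ := Finset.one_lt_card.mp hcard
  rw [Finset.mem_inter, mem_e, mem_e] at hv hw
  obtain ⟨⟨a1, ha1, hva1⟩, ⟨b1, hb1, hvb1⟩⟩ := hv
  obtain ⟨⟨a2, ha2, hwa2⟩, ⟨b2, hb2, hwb2⟩⟩ := hw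
  have hS1 := ha1; have hS2 := hb1; have hS3 := ha2; have hS4 := hb2
  unfold S at hS1 hS2 hS3 hS4
  have hna : a1 ≠ a2 := by
    rintro rfl
    exact hvw (by rw [hva1, hwa2])
  have hnb : a1 ≠ b1 := by
    rintro rfl
    apply hij
    have h := hva1.symm.trans hvb1
    exact add_right_cancel h
  have heq : a1 + b2 = a2 + b1 := by
    have hc : ((a1 + b2 : ℕ) : Fin n) = ((a2 + b1 : ℕ) : Fin n) := by
      push_cast
      have e1 := hva1.symm.trans hvb1
      have e2 := hwa2.symm.trans hwb2
      linear_combination e1 - e2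
    rwa [castinj hn (by omega) (by omega)] at hc
  rw [cyc, Finset.mem_image]
  rcases key_nat ha1 hb1 ha2 hb2 hna hnb heq with
    ⟨rfl, rfl, rfl, rfl⟩ | ⟨rfl, rfl, rfl, rfl⟩ | ⟨rfl, rfl, rfl, rfl⟩ | ⟨rfl, rfl, rfl, rfl⟩
  · -- a1=1, b1=0 : j = i + 1
    have hji : j = i + 1 := by
      have h := hva1.symm.trans hvb1
      push_cast at h
      linear_combination -h
    subst hji
    refine ⟨i + 1, Finset.mem_univ _, ?_⟩
    rw [inter_eq hn, show (i:Fin n) + 2 = i + 1 + 1 from by ring]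
  · -- a1=2, b1=1 : j = i + 1
    have hji : j = i + 1 := by
      have h := hva1.symm.trans hvb1
      push_cast at h
      linear_combination -h
    subst hji
    refine ⟨i + 1, Finset.mem_univ _, ?_⟩
    rw [inter_eq hn, show (i:Fin n) + 2 = i + 1 + 1 from by ring]
  · -- a1=0, b1=1 : i = j + 1
    have hji : i = j + 1 := by
      have h := hva1.symm.trans hvb1
      push_cast at h
      linear_combination h
    subst hji
    refine ⟨j + 1, Finset.mem_univ _, ?_⟩
    rw [Finset.inter_comm, inter_eq hn, show (j:Fin n) + 2 = j + 1 + 1 from by ring]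
  · -- a1=1, b1=2 : i = j + 1
    have hji : i = j + 1 := by
      have h := hva1.symm.trans hvb1
      push_cast at h
      linear_combination h
    subst hji
    refine ⟨j + 1, Finset.mem_univ _, ?_⟩
    rw [Finset.inter_comm, inter_eq hn, show (j:Fin n) + 2 = j + 1 + 1 from by ring]

end

theorem stmt_5 (n : ℕ) [NeZero n] (hn : 11 ≤ n) :
    letI E : Finset (Finset (Fin n)) :=
      Finset.univ.image fun i : Fin n => ({i, i + 1, i + 2, i + 5} : Finset (Fin n))
    EIh E = cyc n ∧ E.card = n := by
  refine ⟨Finset.Subset.antisymm (EIh_subset_cyc hn) (cyc_subset_EIh hn), ?_⟩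
  rw [Finset.card_image_of_injective _ fun i j h => e_inj hn h, Finset.card_univ,
    Fintype.card_fin]
end

section
/- Let n ≥ 12 with n ≡ 0 (mod 4). The 4-uniform hypergraph H on V = {1,...,n} with hyperedges E = { {i, i+1, i+2, i+3} : i ∈ {1, 3, 5, ..., n−1} } ∪ { {i, i+1, n/2 + i, n/2 + i + 1} : i ∈ {2, 4, ..., n/2} } (indices mod n) satisfies EI(H) = C_n and |E| = 3n/4; moreover, no 4-uniform hypergraph H' with EI(H') = C_n has fewer hyperedges. -/
open Finset
open Fin.NatCast
open Fin.CommRing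

set_option linter.unusedSectionVars false
set_option linter.unusedVariables false
set_option linter.unusedTactic false
set_option maxHeartbeats 1000000

namespace Stmt6

variable {n : ℕ} [NeZero n]

def pE (n : ℕ) [NeZero n] (i : ℕ) : Finset (Fin n) :=
  {(i : Fin n), ((i + 1 : ℕ) : Fin n), ((i + 2 : ℕ) : Fin n), ((i + 3 : ℕ) : Fin n)}

def mE (n : ℕ) [NeZero n] (i : ℕ) : Finset (Fin n) :=
  {(i : Fin n), ((i + 1 : ℕ) : Fin n), ((n / 2 + i : ℕ) : Fin n), ((n / 2 + i + 1 : ℕ) : Fin n)}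

lemma castEq (p q : ℕ) : (p : Fin n) = (q : Fin n) ↔ (n : ℤ) ∣ (p : ℤ) - (q : ℤ) := by
  rw [Fin.ext_iff, Fin.val_natCast, Fin.val_natCast,
    show ((p : ℤ) - q) = -((q : ℤ) - p) by ring, dvd_neg]
  exact Nat.modEq_iff_dvd

lemma flatten (hn : 12 ≤ n) {D : ℤ} (h : (n : ℤ) ∣ D) (h1 : -(n : ℤ) < D) (h2 : D < n) :
    D = 0 :=
  Int.eq_zero_of_abs_lt_dvd h (abs_lt.mpr ⟨h1, h2⟩)

lemma mem_pE {x : Fin n} {i : ℕ} : x ∈ pE n i ↔ ∃ a, a ≤ 3 ∧ x = ((i + a : ℕ) : Fin n) := by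
  simp only [pE, mem_insert, mem_singleton]
  constructor
  · rintro (rfl | rfl | rfl | rfl)
    exacts [⟨0, by omega, by norm_num⟩, ⟨1, by omega, rfl⟩, ⟨2, by omega, rfl⟩,
      ⟨3, by omega, rfl⟩]
  · rintro ⟨a, ha, rfl⟩
    interval_cases a
    · left; norm_num
    · right; left; rfl
    · right; right; left; rfl
    · right; right; right; rfl

lemma mem_mE {x : Fin n} {i : ℕ} :
    x ∈ mE n i ↔ ∃ b, (b = 0 ∨ b = 1 ∨ b = n / 2 ∨ b = n / 2 + 1) ∧
      x = ((i + b : ℕ) : Fin n) := by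
  simp only [mE, mem_insert, mem_singleton]
  constructor
  · rintro (rfl | rfl | rfl | rfl)
    · exact ⟨0, by tauto, by norm_num⟩
    · exact ⟨1, by tauto, rfl⟩
    · exact ⟨n / 2, by tauto, by rw [Nat.add_comm]⟩
    · exact ⟨n / 2 + 1, by tauto, by rw [show i + (n / 2 + 1) = n / 2 + i + 1 by ring]⟩
  · rintro ⟨b, (rfl | rfl | rfl | rfl), rfl⟩
    · left; norm_num
    · right; left; rfl
    · right; right; left; rw [Nat.add_comm]
    · right; right; right; rw [show i + (n / 2 + 1) = n / 2 + i + 1 by ring]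

lemma cast_succ (m : ℕ) : ((m + 1 : ℕ) : Fin n) = (m : Fin n) + 1 := by push_cast; ring

lemma pE_congr {i j : ℕ} (h : (n : ℤ) ∣ (i : ℤ) - j) : pE n i = pE n j := by
  have key : ∀ t : ℕ, ((i + t : ℕ) : Fin n) = ((j + t : ℕ) : Fin n) := by
    intro t
    rw [castEq]
    have : ((i + t : ℕ) : ℤ) - ((j + t : ℕ) : ℤ) = (i : ℤ) - j := by push_cast; ring
    rw [this]; exact h
  have h0 : (i : Fin n) = (j : Fin n) := by have := key 0; simpa using this
  rw [pE, pE, h0, key 1, key 2, key 3]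

lemma pE_ne (hn : 12 ≤ n) {i j : ℕ} (hi : i < n) (hj : j < n) (hij : i ≠ j) :
    pE n i ≠ pE n j := by
  intro heq
  have h1 : (i : Fin n) ∈ pE n j := by
    rw [← heq, mem_pE]; exact ⟨0, by omega, by norm_num⟩
  have h2 : (j : Fin n) ∈ pE n i := by
    rw [heq, mem_pE]; exact ⟨0, by omega, by norm_num⟩
  obtain ⟨a, ha, hxa⟩ := mem_pE.mp h1
  obtain ⟨b, hb, hxb⟩ := mem_pE.mp h2
  have d1 := (castEq _ _).mp hxa
  have d2 := (castEq _ _).mp hxb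
  have d3 : (n : ℤ) ∣ -(((a : ℤ)) + b) := by
    have := dvd_add d1 d2
    have e : ((i : ℤ) - ((j + a : ℕ) : ℤ)) + (((j : ℤ)) - ((i + b : ℕ) : ℤ))
        = -(((a : ℤ)) + b) := by push_cast; ring
    rwa [e] at this
  rw [dvd_neg] at d3
  have hz := flatten hn d3 (by push_cast; omega) (by push_cast; omega)
  have hab : a = 0 ∧ b = 0 := by omega
  obtain ⟨rfl, rfl⟩ := hab
  have d1' : (n : ℤ) ∣ (i : ℤ) - j := by
    have e : ((i : ℤ)) - ((j + 0 : ℕ) : ℤ) = (i : ℤ) - j := by push_cast; ring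
    rwa [e] at d1
  have := flatten hn d1' (by push_cast; omega) (by push_cast; omega)
  omega

lemma pmE_ne (hn : 12 ≤ n) (hmod : n % 4 = 0) {i j : ℕ} (hj1 : 2 ≤ j) (hj2 : j ≤ n / 2) :
    pE n i ≠ mE n j := by
  intro heq
  have h1 : ((j : ℕ) : Fin n) ∈ pE n i := by
    rw [heq, mem_mE]; exact ⟨0, by tauto, by norm_num⟩
  have h2 : ((j + n / 2 : ℕ) : Fin n) ∈ pE n i := by
    rw [heq, mem_mE]; exact ⟨n / 2, by tauto, rfl⟩
  obtain ⟨a, ha, hxa⟩ := mem_pE.mp h1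
  obtain ⟨b, hb, hxb⟩ := mem_pE.mp h2
  have d1 := (castEq _ _).mp hxa
  have d2 := (castEq _ _).mp hxb
  have d3 : (n : ℤ) ∣ ((n / 2 : ℕ) : ℤ) - b + a := by
    have := dvd_sub d2 d1
    have e : (((j + n / 2 : ℕ) : ℤ) - ((i + b : ℕ) : ℤ)) - (((j : ℕ) : ℤ) - ((i + a : ℕ) : ℤ))
        = ((n / 2 : ℕ) : ℤ) - b + a := by push_cast; ring
    rwa [e] at this
  have := flatten hn d3 (by push_cast; omega) (by push_cast; omega)
  omega

-- adjacency: two path edges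
lemma adjPP (hn : 12 ≤ n) (hmod : n % 4 = 0) {i j : ℕ} (hi : i < n) (hi2 : i % 2 = 1)
    (hj : j < n) (hj2 : j % 2 = 1) (hne : pE n i ≠ pE n j) {x y : Fin n}
    (hx1 : x ∈ pE n i) (hx2 : x ∈ pE n j) (hy1 : y ∈ pE n i) (hy2 : y ∈ pE n j)
    (hxy : x ≠ y) : y = x + 1 ∨ x = y + 1 := by
  obtain ⟨a, ha, rfl⟩ := mem_pE.mp hx1
  obtain ⟨b, hb, hxb⟩ := mem_pE.mp hx2
  obtain ⟨c, hc, rfl⟩ := mem_pE.mp hy1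
  obtain ⟨d, hd, hyd⟩ := mem_pE.mp hy2
  have d1 := (castEq _ _).mp hxb
  have d2 := (castEq _ _).mp hyd
  have hac : a ≠ c := fun h => hxy (by rw [h])
  have hij : ¬ (n : ℤ) ∣ (i : ℤ) - j := fun h => hne (pE_congr h)
  have hab : a ≠ b := by
    rintro rfl
    exact hij (by
      have e : ((i + a : ℕ) : ℤ) - ((j + a : ℕ) : ℤ) = (i : ℤ) - j := by push_cast; ring
      rwa [e] at d1)
  have star : (a : ℤ) - c = (b : ℤ) - d := by
    have d3 := dvd_sub d1 d2
    have e : (((i + a : ℕ) : ℤ) - ((j + b : ℕ) : ℤ)) - (((i + c : ℕ) : ℤ) - ((j + d : ℕ) : ℤ))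
        = ((a : ℤ) - c) - ((b : ℤ) - d) := by push_cast; ring
    rw [e] at d3
    have := flatten hn d3 (by omega) (by omega)
    omega
  have par : (2 : ℤ) ∣ ((i : ℤ) + a) - ((j : ℤ) + b) := by
    have h2n : (2 : ℤ) ∣ (n : ℤ) := by omega
    have := dvd_trans h2n d1
    have e : ((i + a : ℕ) : ℤ) - ((j + b : ℕ) : ℤ) = ((i : ℤ) + a) - ((j : ℤ) + b) := by
      push_cast; ring
    rwa [e] at this
  have hkey : c = a + 1 ∨ a = c + 1 := by omega
  rcases hkey with h | h
  · left; rw [show i + c = (i + a) + 1 by omega, cast_succ]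
  · right; rw [show i + a = (i + c) + 1 by omega, cast_succ]

-- adjacency: path edge and match edge
lemma adjPM (hn : 12 ≤ n) (hmod : n % 4 = 0) {i j : ℕ} (hj1 : 2 ≤ j) (hj2 : j ≤ n / 2)
    {x y : Fin n}
    (hx1 : x ∈ pE n i) (hx2 : x ∈ mE n j) (hy1 : y ∈ pE n i) (hy2 : y ∈ mE n j)
    (hxy : x ≠ y) : y = x + 1 ∨ x = y + 1 := by
  obtain ⟨a, ha, rfl⟩ := mem_pE.mp hx1
  obtain ⟨b, hb, hxb⟩ := mem_mE.mp hx2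
  obtain ⟨c, hc, rfl⟩ := mem_pE.mp hy1
  obtain ⟨d, hd, hyd⟩ := mem_mE.mp hy2
  have d1 := (castEq _ _).mp hxb
  have d2 := (castEq _ _).mp hyd
  have hac : a ≠ c := fun h => hxy (by rw [h])
  have star : (a : ℤ) - c = (b : ℤ) - d := by
    have d3 := dvd_sub d1 d2
    have e : (((i + a : ℕ) : ℤ) - ((j + b : ℕ) : ℤ)) - (((i + c : ℕ) : ℤ) - ((j + d : ℕ) : ℤ))
        = ((a : ℤ) - c) - ((b : ℤ) - d) := by push_cast; ring
    rw [e] at d3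
    have := flatten hn d3 (by omega) (by omega)
    omega
  have hkey : c = a + 1 ∨ a = c + 1 := by omega
  rcases hkey with h | h
  · left; rw [show i + c = (i + a) + 1 by omega, cast_succ]
  · right; rw [show i + a = (i + c) + 1 by omega, cast_succ]

-- two distinct match edges share no vertex
lemma adjMM (hn : 12 ≤ n) (hmod : n % 4 = 0) {i j : ℕ} (hi1 : 2 ≤ i) (hi2 : i ≤ n / 2)
    (hi3 : i % 2 = 0) (hj1 : 2 ≤ j) (hj2 : j ≤ n / 2) (hj3 : j % 2 = 0) (hij : i ≠ j)
    {x : Fin n} (hx1 : x ∈ mE n i) (hx2 : x ∈ mE n j) : False := by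
  obtain ⟨b, hb, rfl⟩ := mem_mE.mp hx1
  obtain ⟨b', hb', hxb⟩ := mem_mE.mp hx2
  have d1 := (castEq _ _).mp hxb
  have e : ((i + b : ℕ) : ℤ) - ((j + b' : ℕ) : ℤ)
      = ((i : ℤ) + b) - ((j : ℤ) + b') := by push_cast; ring
  rw [e] at d1
  have := flatten hn d1 (by omega) (by omega)
  omega

def Ed (n : ℕ) [NeZero n] : Finset (Finset (Fin n)) :=
  (((Finset.range n).filter fun i => i % 2 = 1).image fun i => pE n i) ∪
  (((Finset.Icc 2 (n / 2)).filter fun i => i % 2 = 0).image fun i => mE n i)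

lemma memEd {e : Finset (Fin n)} :
    e ∈ Ed n ↔ (∃ i, (i < n ∧ i % 2 = 1) ∧ e = pE n i) ∨
      (∃ i, (2 ≤ i ∧ i ≤ n / 2 ∧ i % 2 = 0) ∧ e = mE n i) := by
  simp only [Ed, mem_union, mem_image, mem_filter, mem_range, mem_Icc]
  constructor
  · rintro (⟨i, ⟨h1, h2⟩, rfl⟩ | ⟨i, ⟨⟨h1, h2⟩, h3⟩, rfl⟩)
    · exact Or.inl ⟨i, ⟨h1, h2⟩, rfl⟩
    · exact Or.inr ⟨i, ⟨h1, h2, h3⟩, rfl⟩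
  · rintro (⟨i, ⟨h1, h2⟩, rfl⟩ | ⟨i, ⟨h1, h2, h3⟩, rfl⟩)
    · exact Or.inl ⟨i, ⟨h1, h2⟩, rfl⟩
    · exact Or.inr ⟨i, ⟨⟨h1, h2⟩, h3⟩, rfl⟩

lemma adjE (hn : 12 ≤ n) (hmod : n % 4 = 0) {e1 e2 : Finset (Fin n)} (h1 : e1 ∈ Ed n)
    (h2 : e2 ∈ Ed n) (hne : e1 ≠ e2) {x y : Fin n} (hx : x ∈ e1 ∩ e2) (hy : y ∈ e1 ∩ e2)
    (hxy : x ≠ y) : y = x + 1 ∨ x = y + 1 := by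
  simp only [mem_inter] at hx hy
  rcases memEd.mp h1 with ⟨i, ⟨hi1, hi2⟩, rfl⟩ | ⟨i, ⟨hi1, hi2, hi3⟩, rfl⟩ <;>
    rcases memEd.mp h2 with ⟨j, ⟨hj1, hj2⟩, rfl⟩ | ⟨j, ⟨hj1, hj2, hj3⟩, rfl⟩
  · exact adjPP hn hmod hi1 hi2 hj1 hj2 hne hx.1 hx.2 hy.1 hy.2 hxy
  · exact adjPM hn hmod hj1 hj2 hx.1 hx.2 hy.1 hy.2 hxy
  · exact adjPM hn hmod hi1 hi2 hx.2 hx.1 hy.2 hy.1 hxy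
  · by_cases hij : i = j
    · exact absurd (hij ▸ rfl) hne
    · exact (adjMM hn hmod hi1 hi2 hi3 hj1 hj2 hj3 hij hx.1 hx.2).elim

lemma addNat_ne (hn : 12 ≤ n) {t : ℕ} (h1 : 1 ≤ t) (h2 : t ≤ 6) (u : Fin n) :
    u + (t : Fin n) ≠ u := by
  intro h
  have h0 : u + (t : Fin n) = u + ((0 : ℕ) : Fin n) := by rw [h]; norm_num
  have := add_left_cancel h0
  have hd := (castEq t 0).mp this
  have := flatten hn hd (by omega) (by omega)
  omega

lemma add_one_ne (hn : 12 ≤ n) (u : Fin n) : u + 1 ≠ u := by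
  have := addNat_ne hn (t := 1) (by norm_num) (by norm_num) u
  simpa using this

lemma add_three_ne (hn : 12 ≤ n) (u : Fin n) : u + 1 + 1 + 1 ≠ u := by
  have h3 : u + 1 + 1 + 1 = u + ((3 : ℕ) : Fin n) := by push_cast; ring
  rw [h3]
  exact addNat_ne hn (by norm_num) (by norm_num) u

lemma inter_eq (hn : 12 ≤ n) (hmod : n % 4 = 0) {e1 e2 : Finset (Fin n)} (h1 : e1 ∈ Ed n)
    (h2 : e2 ∈ Ed n) (hne : e1 ≠ e2) {j : Fin n} (hj1 : j ∈ e1 ∩ e2)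
    (hj2 : j + 1 ∈ e1 ∩ e2) : e1 ∩ e2 = {j, j + 1} := by
  apply Finset.Subset.antisymm
  · intro z hz
    simp only [mem_insert, mem_singleton]
    by_contra hcon
    push_neg at hcon
    obtain ⟨hz1, hz2⟩ := hcon
    have a1 := adjE hn hmod h1 h2 hne hz hj1 hz1
    have a2 := adjE hn hmod h1 h2 hne hz hj2 hz2
    rcases a1 with a1 | a1
    · rcases a2 with a2 | a2
      · exact hz1 (add_right_cancel a2).symm
      · apply add_three_ne hn j
        rw [← a2, ← a1]
    · exact hz2 a1
  · intro z hz
    simp only [mem_insert, mem_singleton] at hz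
    rcases hz with rfl | rfl
    · exact hj1
    · exact hj2

lemma mem_EIh_of {E : Finset (Finset (Fin n))} {e f g : Finset (Fin n)} (he : e ∈ E)
    (hf : f ∈ E) (hne : e ≠ f) (hcard : 2 ≤ (e ∩ f).card) (hg : e ∩ f = g) : g ∈ EIh E := by
  rw [EIh, mem_image]
  exact ⟨(e, f), mem_filter.mpr ⟨mem_product.mpr ⟨he, hf⟩, hne, hcard⟩, hg⟩

lemma pair_mem_EIh (hn : 12 ≤ n) (hmod : n % 4 = 0) {e f : Finset (Fin n)} (he : e ∈ Ed n)
    (hf : f ∈ Ed n) (hne : e ≠ f) {j : Fin n} (h1e : j ∈ e) (h1f : j ∈ f)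
    (h2e : j + 1 ∈ e) (h2f : j + 1 ∈ f) : ({j, j + 1} : Finset (Fin n)) ∈ EIh (Ed n) := by
  have hj1 : j ∈ e ∩ f := mem_inter.mpr ⟨h1e, h1f⟩
  have hj2 : j + 1 ∈ e ∩ f := mem_inter.mpr ⟨h2e, h2f⟩
  refine mem_EIh_of he hf hne ?_ (inter_eq hn hmod he hf hne hj1 hj2)
  exact Finset.one_lt_card.mpr ⟨j, hj1, j + 1, hj2, fun h => add_one_ne hn j h.symm⟩

lemma jmem {j : Fin n} {m : ℕ} (h : (n : ℤ) ∣ (j.val : ℤ) - m) : j = ((m : ℕ) : Fin n) := by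
  rw [← Fin.cast_val_eq_self j]
  exact (castEq _ _).mpr h

lemma j1mem {j : Fin n} {m : ℕ} (h : (n : ℤ) ∣ ((j.val : ℤ) + 1) - m) :
    j + 1 = ((m : ℕ) : Fin n) := by
  rw [← Fin.cast_val_eq_self j, ← cast_succ]
  refine (castEq _ _).mpr ?_
  have e : ((j.val + 1 : ℕ) : ℤ) - m = ((j.val : ℤ) + 1) - m := by push_cast; ring
  rwa [e]

lemma EIh_Ed (hn : 12 ≤ n) (hmod : n % 4 = 0) : EIh (Ed n) = cyc n := by
  apply Finset.Subset.antisymm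
  · -- every intersection is a cycle edge
    intro g hg
    rw [EIh, mem_image] at hg
    obtain ⟨⟨e, f⟩, hp, rfl⟩ := hg
    rw [mem_filter, mem_product] at hp
    obtain ⟨⟨he, hf⟩, hne, hcard⟩ := hp
    obtain ⟨x, hx, y, hy, hxy⟩ := Finset.one_lt_card.mp hcard
    have hadj := adjE hn hmod he hf hne hy hx (Ne.symm hxy)
    rw [cyc, mem_image]
    rcases hadj with h | h
    · exact ⟨y, mem_univ y, by
        rw [← h, inter_eq hn hmod he hf hne hy (h ▸ hx), h]⟩
    · exact ⟨x, mem_univ x, by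
        rw [← h, inter_eq hn hmod he hf hne hx (h ▸ hy), h]⟩
  · -- every cycle edge is an intersection
    intro g hg
    rw [cyc, mem_image] at hg
    obtain ⟨j, _, rfl⟩ := hg
    have hk : j.val < n := j.isLt
    have hcase : j.val % 2 = 1 ∨ j.val = 0 ∨ (j.val % 2 = 0 ∧ 2 ≤ j.val ∧ j.val ≤ n / 2) ∨
        (j.val % 2 = 0 ∧ n / 2 + 2 ≤ j.val ∧ j.val ≤ n - 2) := by omega
    rcases hcase with h | h | ⟨h1, h2, h3⟩ | ⟨h1, h2, h3⟩
    · -- j.val odd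
      by_cases h1 : j.val = 1
      · -- k = 1 : use pE 1 and pE (n-1)
        refine pair_mem_EIh hn hmod (e := pE n 1) (f := pE n (n - 1))
          (memEd.mpr (Or.inl ⟨1, ⟨by omega, by omega⟩, rfl⟩))
          (memEd.mpr (Or.inl ⟨n - 1, ⟨by omega, by omega⟩, rfl⟩))
          (pE_ne hn (by omega) (by omega) (by omega)) ?_ ?_ ?_ ?_
        · exact mem_pE.mpr ⟨0, by omega, jmem ⟨0, by omega⟩⟩
        · exact mem_pE.mpr ⟨2, by omega, jmem ⟨-1, by omega⟩⟩
        · exact mem_pE.mpr ⟨1, by omega, j1mem ⟨0, by omega⟩⟩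
        · exact mem_pE.mpr ⟨3, by omega, j1mem ⟨-1, by omega⟩⟩
      · -- k odd, k ≥ 3 : use pE k and pE (k-2)
        obtain ⟨m, hm⟩ : ∃ m, j.val = m + 3 ∧ m % 2 = 0 := ⟨j.val - 3, by omega⟩
        obtain ⟨hm1, hm2⟩ := hm
        refine pair_mem_EIh hn hmod (e := pE n (m + 3)) (f := pE n (m + 1))
          (memEd.mpr (Or.inl ⟨m + 3, ⟨by omega, by omega⟩, rfl⟩))
          (memEd.mpr (Or.inl ⟨m + 1, ⟨by omega, by omega⟩, rfl⟩))
          (pE_ne hn (by omega) (by omega) (by omega)) ?_ ?_ ?_ ?_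
        · exact mem_pE.mpr ⟨0, by omega, jmem ⟨0, by omega⟩⟩
        · exact mem_pE.mpr ⟨2, by omega, jmem ⟨0, by omega⟩⟩
        · exact mem_pE.mpr ⟨1, by omega, j1mem ⟨0, by omega⟩⟩
        · exact mem_pE.mpr ⟨3, by omega, j1mem ⟨0, by omega⟩⟩
    · -- k = 0 : use pE (n-1) and mE (n/2)
      refine pair_mem_EIh hn hmod (e := pE n (n - 1)) (f := mE n (n / 2))
        (memEd.mpr (Or.inl ⟨n - 1, ⟨by omega, by omega⟩, rfl⟩))
        (memEd.mpr (Or.inr ⟨n / 2, ⟨by omega, by omega, by omega⟩, rfl⟩))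
        (pmE_ne hn hmod (by omega) (by omega)) ?_ ?_ ?_ ?_
      · exact mem_pE.mpr ⟨1, by omega, jmem ⟨-1, by omega⟩⟩
      · exact mem_mE.mpr ⟨n / 2, by tauto, jmem ⟨-1, by omega⟩⟩
      · exact mem_pE.mpr ⟨2, by omega, j1mem ⟨-1, by omega⟩⟩
      · exact mem_mE.mpr ⟨n / 2 + 1, by tauto, j1mem ⟨-1, by omega⟩⟩
    · -- k even, 2 ≤ k ≤ n/2 : use pE (k-1) and mE k
      obtain ⟨m, hm⟩ : ∃ m, j.val = m + 2 ∧ m % 2 = 0 := ⟨j.val - 2, by omega⟩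
      obtain ⟨hm1, hm2⟩ := hm
      refine pair_mem_EIh hn hmod (e := pE n (m + 1)) (f := mE n (m + 2))
        (memEd.mpr (Or.inl ⟨m + 1, ⟨by omega, by omega⟩, rfl⟩))
        (memEd.mpr (Or.inr ⟨m + 2, ⟨by omega, by omega, by omega⟩, rfl⟩))
        (pmE_ne hn hmod (by omega) (by omega)) ?_ ?_ ?_ ?_
      · exact mem_pE.mpr ⟨1, by omega, jmem ⟨0, by omega⟩⟩
      · exact mem_mE.mpr ⟨0, by tauto, jmem ⟨0, by omega⟩⟩
      · exact mem_pE.mpr ⟨2, by omega, j1mem ⟨0, by omega⟩⟩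
      · exact mem_mE.mpr ⟨1, by tauto, j1mem ⟨0, by omega⟩⟩
    · -- k even, n/2+2 ≤ k ≤ n-2 : use pE (k-1) and mE (k - n/2)
      obtain ⟨m, hm⟩ : ∃ m, j.val = n / 2 + m + 2 ∧ m % 2 = 0 := ⟨j.val - n / 2 - 2, by omega⟩
      obtain ⟨hm1, hm2⟩ := hm
      refine pair_mem_EIh hn hmod (e := pE n (n / 2 + m + 1)) (f := mE n (m + 2))
        (memEd.mpr (Or.inl ⟨n / 2 + m + 1, ⟨by omega, by omega⟩, rfl⟩))
        (memEd.mpr (Or.inr ⟨m + 2, ⟨by omega, by omega, by omega⟩, rfl⟩))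
        (pmE_ne hn hmod (by omega) (by omega)) ?_ ?_ ?_ ?_
      · exact mem_pE.mpr ⟨1, by omega, jmem ⟨0, by omega⟩⟩
      · exact mem_mE.mpr ⟨n / 2, by tauto, jmem ⟨0, by omega⟩⟩
      · exact mem_pE.mpr ⟨2, by omega, j1mem ⟨0, by omega⟩⟩
      · exact mem_mE.mpr ⟨n / 2 + 1, by tauto, j1mem ⟨0, by omega⟩⟩

lemma add_two_ne (hn : 12 ≤ n) (u : Fin n) : u + 1 + 1 ≠ u := by
  have h3 : u + 1 + 1 = u + ((2 : ℕ) : Fin n) := by push_cast; ring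
  rw [h3]; exact addNat_ne hn (by norm_num) (by norm_num) u

/-- a nonempty subset of `Fin n` closed under `+1` is everything -/
lemma closed_eq_univ {T : Finset (Fin n)} (hne : T.Nonempty)
    (hcl : ∀ x ∈ T, x + 1 ∈ T) : T = univ := by
  obtain ⟨i, hi⟩ := hne
  have key : ∀ m : ℕ, i + (m : Fin n) ∈ T := by
    intro m
    induction m with
    | zero => simpa using hi
    | succ m ih =>
      rw [cast_succ, ← add_assoc]
      exact hcl _ ih
  rw [eq_univ_iff_forall]
  intro x
  have := key ((x - i).val)
  rwa [Fin.cast_val_eq_self, show i + (x - i) = x by ring] at this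

def pv (v : Fin n) : Finset (Fin n) := {v, v + 1, v + 1 + 1, v + 1 + 1 + 1}

def wP (e : Finset (Fin n)) : Finset (Fin n) :=
  univ.filter fun i => i ∈ e ∧ i + 1 ∈ e

lemma wP_subset (e : Finset (Fin n)) : wP e ⊆ e := by
  intro x hx
  exact (mem_filter.mp hx).2.1

lemma weight_le3 (hn : 12 ≤ n) {e : Finset (Fin n)} (he : e.card = 4) : (wP e).card ≤ 3 := by
  by_contra hcon
  push_neg at hcon
  have hsub := wP_subset e
  have h4 : (wP e).card ≤ 4 := he ▸ card_le_card hsub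
  have heq : wP e = e := eq_of_subset_of_card_le hsub (by omega)
  have hclosed : ∀ x ∈ e, x + 1 ∈ e := by
    intro x hx
    have : x ∈ wP e := heq.symm ▸ hx
    exact (mem_filter.mp this).2.2
  have : e = univ := closed_eq_univ ⟨_, (card_pos.mp (by omega)).choose_spec⟩ hclosed
  rw [this, card_univ, Fintype.card_fin] at he
  omega

lemma weight3_block (hn : 12 ≤ n) {e : Finset (Fin n)} (he : e.card = 4)
    (hw : (wP e).card = 3) : ∃ v : Fin n, e = pv v := by
  set P := wP e with hPdef
  have hPe : P ⊆ e := wP_subset e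
  have hsucc : ∀ x ∈ P, x + 1 ∈ e := fun x hx => (mem_filter.mp hx).2.2
  have hmemP : ∀ x, x ∈ e → x + 1 ∈ e → x ∈ P := fun x h1 h2 =>
    mem_filter.mpr ⟨mem_univ x, h1, h2⟩
  -- the extra vertex d
  have hcd : (e \ P).card = 1 := by rw [card_sdiff_of_subset hPe, he, hw]
  obtain ⟨d, hd⟩ := card_eq_one.mp hcd
  have hde : d ∈ e := (mem_sdiff.mp (hd ▸ mem_singleton_self d)).1
  have hdP : d ∉ P := (mem_sdiff.mp (hd ▸ mem_singleton_self d)).2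
  have hd1 : d + 1 ∉ e := fun h => hdP (hmemP d hde h)
  have heP : e = insert d P := by
    apply Finset.Subset.antisymm
    · intro z hz
      by_cases hzP : z ∈ P
      · exact mem_insert_of_mem hzP
      · have hzd : z ∈ e \ P := mem_sdiff.mpr ⟨hz, hzP⟩
        rw [hd, mem_singleton] at hzd
        rw [hzd]; exact mem_insert_self d P
    · intro z hz
      rcases mem_insert.mp hz with h | h
      · exact h ▸ hde
      · exact hPe h
  have hmem_e : ∀ z ∈ e, z ≠ d → z ∈ P := by
    intro z hz hzd
    rcases mem_insert.mp (heP ▸ hz) with h | h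
    · exact absurd h hzd
    · exact h
  -- the successor image Q
  set Q := P.image (· + 1) with hQdef
  have hQcard : Q.card = 3 := by
    rw [hQdef, card_image_of_injective _ (add_left_injective 1), hw]
  have hQe : Q ⊆ e := by
    intro z hz
    obtain ⟨x, hx, rfl⟩ := mem_image.mp hz
    exact hsucc x hx
  -- not closed: P nonempty & card 3 < n
  have hnotclosed : ¬ (∀ x ∈ P, x + 1 ∈ P) := by
    intro hcl
    have : P = univ := closed_eq_univ ⟨_, (card_pos.mp (by omega)).choose_spec⟩ hcl
    rw [this, card_univ, Fintype.card_fin] at hw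
    omega
  -- d ∈ Q
  have hdQ : d ∈ Q := by
    by_contra hdQ
    have hQP : Q ⊆ P := by
      intro z hz
      refine hmem_e z (hQe hz) ?_
      rintro rfl
      exact hdQ hz
    have : Q = P := eq_of_subset_of_card_le hQP (by omega)
    exact hnotclosed (fun x hx => this ▸ mem_image_of_mem _ hx)
  -- the unique element of P not in Q
  have hQoutside : Q \ P = {d} := by
    apply Finset.Subset.antisymm
    · intro z hz
      obtain ⟨hzQ, hzP⟩ := mem_sdiff.mp hz
      rw [mem_singleton]
      by_contra hzd
      exact hzP (hmem_e z (hQe hzQ) hzd)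
    · intro z hz
      rw [mem_singleton.mp hz]
      exact mem_sdiff.mpr ⟨hdQ, hdP⟩
  have hPQcard : (P \ Q).card = 1 := by
    rw [card_sdiff_comm (by omega), hQoutside, card_singleton]
  obtain ⟨x, hx⟩ := card_eq_one.mp hPQcard
  have hxP : x ∈ P := (mem_sdiff.mp (hx ▸ mem_singleton_self x)).1
  have hxQ : x ∉ Q := (mem_sdiff.mp (hx ▸ mem_singleton_self x)).2
  have hPmQ : ∀ z ∈ P, z ≠ x → z ∈ Q := by
    intro z hz hzx
    by_contra hzQ
    have : z ∈ P \ Q := mem_sdiff.mpr ⟨hz, hzQ⟩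
    rw [hx] at this
    exact hzx (mem_singleton.mp this)
  -- step 1 : x + 1 ∈ P
  have hx1P : x + 1 ∈ P := by
    by_cases hx1d : x + 1 = d
    · -- contradiction : P \ {x} closed under pred
      exfalso
      set T := P.erase x with hT
      have hTcl : ∀ y ∈ T, y - 1 ∈ T := by
        intro y hy
        obtain ⟨hyx, hyP⟩ := mem_erase.mp hy
        obtain ⟨p, hp, hpy⟩ := mem_image.mp (hPmQ y hyP hyx)
        have hpx : p ≠ x := by
          rintro rfl
          rw [hx1d] at hpy
          exact hdP (hpy ▸ hyP)
        have hy1p : y - 1 = p := by rw [← hpy]; ring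
        rw [hy1p]
        exact mem_erase.mpr ⟨hpx, hp⟩
      have hTcard : T.card = 2 := by rw [hT, card_erase_of_mem hxP, hw]
      set T' := T.image (fun y => -y) with hT'
      have hT'cl : ∀ z ∈ T', z + 1 ∈ T' := by
        intro z hz
        obtain ⟨y, hy, rfl⟩ := mem_image.mp hz
        have : -y + 1 = -(y - 1) := by ring
        rw [this]
        exact mem_image_of_mem _ (hTcl y hy)
      have hT'ne : T'.Nonempty := by
        rw [hT']
        apply Nonempty.image
        rw [← card_pos, hTcard]; norm_num
      have := closed_eq_univ hT'ne hT'cl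
      have hcard' : T'.card = n := by rw [this, card_univ, Fintype.card_fin]
      rw [hT', card_image_of_injective _ neg_injective, hTcard] at hcard'
      omega
    · exact hmem_e _ (hsucc x hxP) hx1d
  -- step 2 : x + 1 + 1 ∈ P
  have hxne1 : x ≠ x + 1 := fun h => add_one_ne hn x h.symm
  have hx2P : x + 1 + 1 ∈ P := by
    by_cases hx2d : x + 1 + 1 = d
    · exfalso
      have hzcard : 1 ≤ (P \ {x, x + 1}).card := by
        have h1 := card_le_card_sdiff_add_card (s := P) (t := ({x, x + 1} : Finset (Fin n)))
        have h2 : ({x, x + 1} : Finset (Fin n)).card ≤ 2 :=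
          (card_insert_le _ _).trans (by norm_num)
        omega
      obtain ⟨z, hz⟩ := card_pos.mp (show 0 < (P \ {x, x + 1}).card by omega)
      obtain ⟨hzP, hznot⟩ := mem_sdiff.mp hz
      simp only [mem_insert, mem_singleton, not_or] at hznot
      obtain ⟨hzx, hzx1⟩ := hznot
      have hcard3 : ({x, x + 1, z} : Finset (Fin n)).card = 3 := by
        rw [card_insert_of_notMem (by
            simp only [mem_insert, mem_singleton, not_or]
            exact ⟨hxne1, fun h => hzx h.symm⟩),
          card_insert_of_notMem (by simp only [mem_singleton]; exact fun h => hzx1 h.symm),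
          card_singleton]
      have hPfull : P = {x, x + 1, z} := by
        refine (eq_of_subset_of_card_le ?_ (by omega)).symm
        intro w hw'
        simp only [mem_insert, mem_singleton] at hw'
        rcases hw' with rfl | rfl | rfl
        exacts [hxP, hx1P, hzP]
      obtain ⟨p, hp, hpy⟩ := mem_image.mp (hPmQ z hzP hzx)
      rw [hPfull] at hp
      simp only [mem_insert, mem_singleton] at hp
      rcases hp with rfl | rfl | rfl
      · exact hzx1 hpy.symm
      · rw [hx2d] at hpy
        exact hdP (hpy ▸ hzP)
      · exact add_one_ne hn p hpy
    · exact hmem_e _ (hsucc _ hx1P) hx2d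
  -- P = {x, x+1, x+2}
  have hxne2 : x ≠ x + 1 + 1 := fun h => add_two_ne hn x h.symm
  have hx1ne2 : x + 1 ≠ x + 1 + 1 := fun h => add_one_ne hn (x + 1) h.symm
  have hcard3 : ({x, x + 1, x + 1 + 1} : Finset (Fin n)).card = 3 := by
    rw [card_insert_of_notMem (by
        simp only [mem_insert, mem_singleton, not_or]
        exact ⟨hxne1, hxne2⟩),
      card_insert_of_notMem (by simp only [mem_singleton]; exact hx1ne2),
      card_singleton]
  have hPfull : P = {x, x + 1, x + 1 + 1} := by
    refine (eq_of_subset_of_card_le ?_ (by omega)).symm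
    intro w hw'
    simp only [mem_insert, mem_singleton] at hw'
    rcases hw' with rfl | rfl | rfl
    exacts [hxP, hx1P, hx2P]
  -- d = x + 3
  have hx3d : x + 1 + 1 + 1 = d := by
    have hx3e : x + 1 + 1 + 1 ∈ e := hsucc _ hx2P
    by_contra hx3d
    have : x + 1 + 1 + 1 ∈ P := hmem_e _ hx3e hx3d
    rw [hPfull] at this
    simp only [mem_insert, mem_singleton] at this
    rcases this with h | h | h
    · exact add_three_ne hn x h
    · exact add_two_ne hn x (add_right_cancel h)
    · exact add_one_ne hn (x + 1 + 1) h
  refine ⟨x, ?_⟩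
  rw [heP, hPfull, ← hx3d, pv]
  ext z
  simp only [mem_insert, mem_singleton]
  tauto

lemma add_four_ne (hn : 12 ≤ n) (u : Fin n) : u + 1 + 1 + 1 + 1 ≠ u := by
  have h3 : u + 1 + 1 + 1 + 1 = u + ((4 : ℕ) : Fin n) := by push_cast; ring
  rw [h3]; exact addNat_ne hn (by norm_num) (by norm_num) u


lemma pv_ne_succ (hn : 12 ≤ n) (v : Fin n) : pv v ≠ pv (v + 1) := by
  intro h
  have hv : v ∈ pv (v + 1) := h ▸ (by simp [pv])
  simp only [pv, mem_insert, mem_singleton] at hv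
  rcases hv with h' | h' | h' | h'
  · exact add_one_ne hn v h'.symm
  · exact add_two_ne hn v h'.symm
  · exact add_three_ne hn v h'.symm
  · exact add_four_ne hn v h'.symm

lemma consec_not_both (hn : 12 ≤ n) {E' : Finset (Finset (Fin n))} (hEI : EIh E' = cyc n)
    {v : Fin n} (h1 : pv v ∈ E') (h2 : pv (v + 1) ∈ E') : False := by
  have hm1 : v + 1 ∈ pv v ∩ pv (v + 1) := by
    rw [mem_inter]; constructor <;> simp [pv]
  have hm2 : v + 1 + 1 ∈ pv v ∩ pv (v + 1) := by
    rw [mem_inter]; constructor <;> simp [pv]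
  have hm3 : v + 1 + 1 + 1 ∈ pv v ∩ pv (v + 1) := by
    rw [mem_inter]; constructor <;> simp [pv]
  have hne12 : v + 1 ≠ v + 1 + 1 := fun h => add_one_ne hn (v + 1) h.symm
  have hne13 : v + 1 ≠ v + 1 + 1 + 1 := fun h => add_two_ne hn (v + 1) h.symm
  have hne23 : v + 1 + 1 ≠ v + 1 + 1 + 1 := fun h => add_one_ne hn (v + 1 + 1) h.symm
  have hmemI : pv v ∩ pv (v + 1) ∈ EIh E' :=
    mem_EIh_of h1 h2 (pv_ne_succ hn v)
      (Finset.one_lt_card.mpr ⟨_, hm1, _, hm2, hne12⟩) rfl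
  rw [hEI, cyc, mem_image] at hmemI
  obtain ⟨j, _, hj⟩ := hmemI
  have hsub : ({v + 1, v + 1 + 1, v + 1 + 1 + 1} : Finset (Fin n)) ⊆ {j, j + 1} := by
    intro z hz
    rw [hj]
    simp only [mem_insert, mem_singleton] at hz
    rcases hz with rfl | rfl | rfl
    exacts [hm1, hm2, hm3]
  have hc3 : ({v + 1, v + 1 + 1, v + 1 + 1 + 1} : Finset (Fin n)).card = 3 := by
    rw [card_insert_of_notMem (by
        simp only [mem_insert, mem_singleton, not_or]
        exact ⟨hne12, hne13⟩),
      card_insert_of_notMem (by simp only [mem_singleton]; exact hne23),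
      card_singleton]
  have hc2 : ({j, j + 1} : Finset (Fin n)).card ≤ 2 :=
    (card_insert_le _ _).trans (by simp)
  have := card_le_card hsub
  omega

lemma S_le (hn : 12 ≤ n) {E' : Finset (Finset (Fin n))} (hEI : EIh E' = cyc n) :
    2 * (univ.filter fun v : Fin n => pv v ∈ E').card ≤ n := by
  set S := univ.filter fun v : Fin n => pv v ∈ E' with hS
  set T := S.image (· + 1) with hT
  have hdis : Disjoint S T := by
    rw [disjoint_left]
    intro u hu hT'
    obtain ⟨w, hw, rfl⟩ := mem_image.mp hT'
    exact consec_not_both hn hEI (mem_filter.mp hw).2 (mem_filter.mp hu).2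
  have hcardT : T.card = S.card := card_image_of_injective _ (add_left_injective 1)
  have := card_le_card (subset_univ (S ∪ T))
  rw [card_union_of_disjoint hdis, card_univ, Fintype.card_fin] at this
  omega

lemma sum_upper (hn : 12 ≤ n) {E' : Finset (Finset (Fin n))} (h4 : ∀ e ∈ E', e.card = 4)
    (hEI : EIh E' = cyc n) :
    ∑ e ∈ E', (wP e).card ≤ 2 * E'.card + (univ.filter fun v : Fin n => pv v ∈ E').card := by
  have step : ∀ e ∈ E', (wP e).card ≤ 2 + (if ∃ v : Fin n, e = pv v then 1 else 0) := by
    intro e he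
    by_cases hb : ∃ v : Fin n, e = pv v
    · rw [if_pos hb]
      exact weight_le3 hn (h4 e he)
    · rw [if_neg hb]
      by_contra hcon
      push_neg at hcon
      have h3 := weight_le3 hn (h4 e he)
      exact hb (weight3_block hn (h4 e he) (by omega))
  calc ∑ e ∈ E', (wP e).card
      ≤ ∑ e ∈ E', (2 + if ∃ v : Fin n, e = pv v then 1 else 0) := sum_le_sum step
    _ = 2 * E'.card + (E'.filter fun e => ∃ v : Fin n, e = pv v).card := by
        rw [sum_add_distrib, sum_const, smul_eq_mul, mul_comm, sum_boole]
        simp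
    _ ≤ 2 * E'.card + (univ.filter fun v : Fin n => pv v ∈ E').card := by
        have hsub : (E'.filter fun e => ∃ v : Fin n, e = pv v) ⊆
            (univ.filter fun v : Fin n => pv v ∈ E').image pv := by
          intro e he'
          obtain ⟨he, v, rfl⟩ := mem_filter.mp he'
          exact mem_image_of_mem _ (mem_filter.mpr ⟨mem_univ v, he⟩)
        have := (card_le_card hsub).trans card_image_le
        omega

lemma sum_lower {E' : Finset (Finset (Fin n))} (hEI : EIh E' = cyc n) :
    2 * n ≤ ∑ e ∈ E', (wP e).card := by
  have swap : ∑ e ∈ E', (wP e).card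
      = ∑ i : Fin n, (E'.filter fun e => i ∈ e ∧ i + 1 ∈ e).card := by
    simp only [wP, card_filter]
    exact Finset.sum_comm
  rw [swap]
  have key : ∀ i : Fin n, 2 ≤ (E'.filter fun e => i ∈ e ∧ i + 1 ∈ e).card := by
    intro i
    have hmem : ({i, i + 1} : Finset (Fin n)) ∈ EIh E' := by
      rw [hEI, cyc, mem_image]
      exact ⟨i, mem_univ i, rfl⟩
    rw [EIh, mem_image] at hmem
    obtain ⟨⟨e, f⟩, hp, hef⟩ := hmem
    rw [mem_filter, mem_product] at hp
    obtain ⟨⟨he, hf⟩, hne, _⟩ := hp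
    have hi : i ∈ e ∩ f := hef.symm ▸ mem_insert_self i _
    have hi1 : i + 1 ∈ e ∩ f := hef.symm ▸ mem_insert_of_mem (mem_singleton_self _)
    rw [mem_inter] at hi hi1
    refine Finset.one_lt_card.mpr ⟨e, ?_, f, ?_, hne⟩
    · exact mem_filter.mpr ⟨he, hi.1, hi1.1⟩
    · exact mem_filter.mpr ⟨hf, hi.2, hi1.2⟩
  calc 2 * n = ∑ _i : Fin n, 2 := by simp [Finset.card_univ, mul_comm]
    _ ≤ _ := sum_le_sum (fun i _ => key i)

lemma lower (hn : 12 ≤ n) {E' : Finset (Finset (Fin n))} (h4 : ∀ e ∈ E', e.card = 4)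
    (hEI : EIh E' = cyc n) : 3 * n ≤ 4 * E'.card := by
  have h1 := sum_lower hEI
  have h2 := sum_upper hn h4 hEI
  have h3 := S_le hn hEI
  omega

lemma card_Ed (hn : 12 ≤ n) (hmod : n % 4 = 0) : 4 * (Ed n).card = 3 * n := by
  have filt1 : ((Finset.range n).filter fun i => i % 2 = 1)
      = (Finset.range (n / 2)).image (fun m => 2 * m + 1) := by
    ext x
    simp only [mem_filter, mem_range, mem_image]
    constructor
    · intro ⟨h1, h2⟩
      exact ⟨x / 2, by omega, by omega⟩
    · rintro ⟨m, hm, rfl⟩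
      omega
  have filt2 : ((Finset.Icc 2 (n / 2)).filter fun i => i % 2 = 0)
      = (Finset.range (n / 4)).image (fun m => 2 * m + 2) := by
    ext x
    simp only [mem_filter, mem_Icc, mem_range, mem_image]
    constructor
    · intro ⟨⟨h1, h2⟩, h3⟩
      exact ⟨x / 2 - 1, by omega, by omega⟩
    · rintro ⟨m, hm, rfl⟩
      omega
  have hc1 : (((Finset.range n).filter fun i => i % 2 = 1).image fun i => pE n i).card
      = n / 2 := by
    rw [card_image_of_injOn (fun i hi j hj hij => by
      simp only [coe_filter, Set.mem_setOf_eq, mem_range] at hi hj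
      by_contra hne
      exact pE_ne hn hi.1 hj.1 hne hij)]
    rw [filt1, card_image_of_injective _ (fun a b h => by omega), card_range]
  have hc2 : ((((Finset.Icc 2 (n / 2)).filter fun i => i % 2 = 0)).image fun i => mE n i).card
      = n / 4 := by
    rw [card_image_of_injOn (fun i hi j hj hij => by
      simp only [coe_filter, Set.mem_setOf_eq, mem_Icc] at hi hj
      by_contra hne
      have hx : (i : Fin n) ∈ mE n i := by simp [mE]
      exact adjMM hn hmod hi.1.1 hi.1.2 hi.2 hj.1.1 hj.1.2 hj.2 hne hx (hij ▸ hx))]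
    rw [filt2, card_image_of_injective _ (fun a b h => by omega), card_range]
  have hdisj : Disjoint (((Finset.range n).filter fun i => i % 2 = 1).image fun i => pE n i)
      ((((Finset.Icc 2 (n / 2)).filter fun i => i % 2 = 0)).image fun i => mE n i) := by
    rw [disjoint_left]
    intro e he1 he2
    obtain ⟨i, hi, rfl⟩ := mem_image.mp he1
    obtain ⟨j, hj, hj'⟩ := mem_image.mp he2
    simp only [mem_filter, mem_Icc] at hj
    exact pmE_ne hn hmod hj.1.1 hj.1.2 hj'.symm
  rw [Ed, card_union_of_disjoint hdisj, hc1, hc2]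
  omega

end Stmt6

open Stmt6 in
open Fin.NatCast in
theorem stmt_6 (n : ℕ) [NeZero n] (hn : 12 ≤ n) (hmod : n % 4 = 0) :
    letI E : Finset (Finset (Fin n)) :=
      (((Finset.range n).filter fun i => i % 2 = 1).image fun i : ℕ =>
        ({(i : Fin n), ((i + 1 : ℕ) : Fin n), ((i + 2 : ℕ) : Fin n),
          ((i + 3 : ℕ) : Fin n)} : Finset (Fin n))) ∪
      (((Finset.Icc 2 (n / 2)).filter fun i => i % 2 = 0).image fun i : ℕ =>
        ({(i : Fin n), ((i + 1 : ℕ) : Fin n), ((n / 2 + i : ℕ) : Fin n),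
          ((n / 2 + i + 1 : ℕ) : Fin n)} : Finset (Fin n)))
    EIh E = cyc n ∧ 4 * E.card = 3 * n ∧
      (∀ E' : Finset (Finset (Fin n)), (∀ e ∈ E', e.card = 4) → EIh E' = cyc n →
        E.card ≤ E'.card) := by
  show EIh (Ed n) = cyc n ∧ 4 * (Ed n).card = 3 * n ∧
      (∀ E' : Finset (Finset (Fin n)), (∀ e ∈ E', e.card = 4) → EIh E' = cyc n →
        (Ed n).card ≤ E'.card)
  refine ⟨EIh_Ed hn hmod, card_Ed hn hmod, fun E' h4 hEI => ?_⟩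
  have h1 := lower hn h4 hEI
  have h2 := card_Ed hn hmod
  omega
end

section
/- Let n ≥ 13 with n ≡ 1 (mod 4). The 4-uniform hypergraph H on V = {1,...,n} with hyperedges E = { {i, i+1, i+2, i+3} : i ∈ {1, 3, ..., n−2} } ∪ { {i, i+1, (n−1)/2 + i, (n−1)/2 + i + 1} : i ∈ {2, 4, ..., (n−1)/2} } ∪ { {n, 1, 2, 5} } (indices mod n) satisfies EI(H) = C_n and |E| = ⌈3n/4⌉. -/
open Finset
open Fin.NatCast

open Finset

namespace S7

variable {n : ℕ} [NeZero n]

def F (s : Finset ℕ) : Finset (Fin n) := s.image (Nat.cast)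

lemma cinj {a b : ℕ} (ha : a < n) (hb : b < n) (h : (a : Fin n) = b) : a = b := by
  have := congrArg Fin.val h
  rwa [Fin.val_natCast, Fin.val_natCast, Nat.mod_eq_of_lt ha, Nat.mod_eq_of_lt hb] at this

lemma Finter {s t : Finset ℕ} (hs : ∀ a ∈ s, a < n) (ht : ∀ a ∈ t, a < n) :
    (F s : Finset (Fin n)) ∩ F t = F (s ∩ t) := by
  ext x
  simp only [F, mem_inter, mem_image]
  constructor
  · rintro ⟨⟨a, ha, rfl⟩, ⟨b, hb, hba⟩⟩
    exact ⟨a, ⟨ha, (cinj (ht b hb) (hs a ha) hba) ▸ hb⟩, rfl⟩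
  · rintro ⟨a, ha, rfl⟩
    exact ⟨⟨a, ha.1, rfl⟩, ⟨a, ha.2, rfl⟩⟩

lemma Fcard {s : Finset ℕ} (hs : ∀ a ∈ s, a < n) : (F s : Finset (Fin n)).card = s.card :=
  Finset.card_image_of_injOn (fun a ha b hb h => cinj (hs a ha) (hs b hb) h)

lemma FinjEq {s t : Finset ℕ} (hs : ∀ a ∈ s, a < n) (ht : ∀ a ∈ t, a < n)
    (h : (F s : Finset (Fin n)) = F t) : s = t := by
  ext a
  constructor
  · intro hm
    have : (a : Fin n) ∈ F t := h ▸ (Finset.mem_image_of_mem _ hm)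
    obtain ⟨b, hb, hba⟩ := Finset.mem_image.mp this
    rwa [cinj (ht b hb) (hs a hm) hba] at hb
  · intro hm
    have : (a : Fin n) ∈ F s := h ▸ (Finset.mem_image_of_mem _ hm)
    obtain ⟨b, hb, hba⟩ := Finset.mem_image.mp this
    rwa [cinj (hs b hb) (ht a hm) hba] at hb

lemma cyc_mem1 (j : ℕ) : (F {j, j+1} : Finset (Fin n)) ∈ cyc n := by
  have : (F {j, j+1} : Finset (Fin n)) = {(j : Fin n), (j : Fin n) + 1} := by
    simp [F]
  rw [this, cyc]
  exact Finset.mem_image.mpr ⟨(j : Fin n), mem_univ _, rfl⟩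

lemma cyc_mem2 (hn : 1 < n) : (F {0, n-1} : Finset (Fin n)) ∈ cyc n := by
  have h1 : (((n-1 : ℕ) : Fin n) : Fin n) + 1 = ((0:ℕ) : Fin n) := by
    have : ((n-1 : ℕ) : Fin n) + 1 = ((n-1+1 : ℕ) : Fin n) := by push_cast; ring
    rw [this, show n - 1 + 1 = n by omega, Fin.natCast_self, Nat.cast_zero]
  have : (F {0, n-1} : Finset (Fin n)) = {((n-1:ℕ) : Fin n), ((n-1:ℕ) : Fin n) + 1} := by
    rw [h1]; simp [F, Finset.pair_comm]
  rw [this, cyc]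
  exact Finset.mem_image.mpr ⟨((n-1:ℕ) : Fin n), mem_univ _, rfl⟩

lemma mem_cyc_iff {s : Finset (Fin n)} :
    s ∈ cyc n ↔ ∃ j : ℕ, j < n ∧ s = {(j : Fin n), (j : Fin n) + 1} := by
  simp only [cyc, Finset.mem_image, mem_univ, true_and]
  constructor
  · rintro ⟨i, rfl⟩
    exact ⟨i.val, i.isLt, by rw [Fin.cast_val_eq_self]⟩
  · rintro ⟨j, hj, rfl⟩
    exact ⟨(j : Fin n), rfl⟩

lemma mem_EIh_iff {E : Finset (Finset (Fin n))} {s : Finset (Fin n)} :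
    s ∈ EIh E ↔ ∃ e1 ∈ E, ∃ e2 ∈ E, e1 ≠ e2 ∧ 2 ≤ (e1 ∩ e2).card ∧ e1 ∩ e2 = s := by
  simp only [EIh, Finset.mem_image, Finset.mem_filter, Finset.mem_product]
  constructor
  · rintro ⟨⟨e1, e2⟩, ⟨⟨h1, h2⟩, hne, hc⟩, rfl⟩
    exact ⟨e1, h1, e2, h2, hne, hc, rfl⟩
  · rintro ⟨e1, h1, e2, h2, hne, hc, rfl⟩
    exact ⟨(e1, e2), ⟨⟨h1, h2⟩, hne, hc⟩, rfl⟩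

def Ar (i : ℕ) : Finset ℕ := {i, i+1, i+2, i+3}
def AW (n : ℕ) : Finset ℕ := {n-2, n-1, 0, 1}
def Br (k i : ℕ) : Finset ℕ := {i, i+1, 2*k+i, 2*k+i+1}
def BW (n k : ℕ) : Finset ℕ := {2*k, 2*k+1, n-1, 0}
def Xe : Finset ℕ := {0, 1, 2, 5}

def Edef (n : ℕ) [NeZero n] : Finset (Finset (Fin n)) :=
  (((Finset.range n).filter fun i => i % 2 = 1).image fun i : ℕ =>
    ({(i : Fin n), ((i + 1 : ℕ) : Fin n), ((i + 2 : ℕ) : Fin n),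
      ((i + 3 : ℕ) : Fin n)} : Finset (Fin n))) ∪
  (((Finset.Icc 2 ((n - 1) / 2)).filter fun i => i % 2 = 0).image fun i : ℕ =>
    ({(i : Fin n), ((i + 1 : ℕ) : Fin n), (((n - 1) / 2 + i : ℕ) : Fin n),
      (((n - 1) / 2 + i + 1 : ℕ) : Fin n)} : Finset (Fin n))) ∪
  {({(n : Fin n), 1, 2, 5} : Finset (Fin n))}

variable {k : ℕ}

lemma castn (a : ℕ) (h : a = n) : ((a : ℕ) : Fin n) = ((0:ℕ) : Fin n) := by
  subst h; rw [Fin.natCast_self, Nat.cast_zero]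

lemma castn1 (a : ℕ) (h : a = n + 1) : ((a : ℕ) : Fin n) = ((1:ℕ) : Fin n) := by
  subst h; rw [Nat.cast_add, Fin.natCast_self, zero_add]

lemma castEq (a b : ℕ) (h : a = b) : ((a : ℕ) : Fin n) = ((b:ℕ) : Fin n) := by rw [h]

lemma two_elems {s t : Finset ℕ} (hs : ∀ a ∈ s, a < n) (ht : ∀ a ∈ t, a < n)
    (hcard : 2 ≤ ((F s : Finset (Fin n)) ∩ F t).card) : ∃ x ∈ s ∩ t, ∃ y ∈ s ∩ t, x ≠ y := by
  rw [Finter hs ht, Fcard (fun a ha => hs a (Finset.mem_of_mem_inter_left ha))] at hcard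
  exact Finset.one_lt_card.mp hcard

lemma Fpair1 (j : ℕ) : (F {j, j+1} : Finset (Fin n)) = {(j : Fin n), (j : Fin n) + 1} := by
  simp [F]

lemma Fpair2 (hn : 1 < n) :
    (F {0, n-1} : Finset (Fin n)) = {((n-1 : ℕ) : Fin n), ((n-1:ℕ) : Fin n) + 1} := by
  have h1 : ((n-1 : ℕ) : Fin n) + 1 = ((0:ℕ) : Fin n) := by
    have h2 : ((n-1 : ℕ) : Fin n) + 1 = ((n-1+1 : ℕ) : Fin n) := by push_cast; ring
    rw [h2, show n - 1 + 1 = n by omega, Fin.natCast_self, Nat.cast_zero]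
  rw [h1]; simp [F, Finset.pair_comm]

lemma build {s t : Finset ℕ} {j : ℕ} (hs : ∀ a ∈ s, a < n) (ht : ∀ a ∈ t, a < n)
    (h1 : (F s : Finset (Fin n)) ∈ Edef n) (h2 : (F t : Finset (Fin n)) ∈ Edef n)
    (hne : s ≠ t) (hst : s ∩ t = {j, j+1}) :
    ({(j : Fin n), (j : Fin n) + 1} : Finset (Fin n)) ∈ EIh (Edef n) := by
  rw [mem_EIh_iff]
  refine ⟨F s, h1, F t, h2, fun h => hne (FinjEq hs ht h), ?_, ?_⟩
  · rw [Finter hs ht, Fcard (fun a ha => hs a (Finset.mem_of_mem_inter_left ha)), hst]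
    rw [Finset.card_pair (by omega)]
  · rw [Finter hs ht, hst, Fpair1]

lemma build2 {s t : Finset ℕ} (hs : ∀ a ∈ s, a < n) (ht : ∀ a ∈ t, a < n)
    (h1 : (F s : Finset (Fin n)) ∈ Edef n) (h2 : (F t : Finset (Fin n)) ∈ Edef n)
    (hne : s ≠ t) (hst : s ∩ t = {0, n-1}) (hn : 2 < n) :
    ({((n-1:ℕ) : Fin n), ((n-1:ℕ) : Fin n) + 1} : Finset (Fin n)) ∈ EIh (Edef n) := by
  rw [mem_EIh_iff]
  refine ⟨F s, h1, F t, h2, fun h => hne (FinjEq hs ht h), ?_, ?_⟩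
  · rw [Finter hs ht, Fcard (fun a ha => hs a (Finset.mem_of_mem_inter_left ha)), hst]
    rw [Finset.card_pair (by omega)]
  · rw [Finter hs ht, hst, Fpair2 (by omega)]

section Main
variable (hk : n = 4*k+1) (hk3 : 3 ≤ k)
include hk hk3

lemma memE {e : Finset (Fin n)} : e ∈ Edef n ↔
    (∃ i, i % 2 = 1 ∧ 1 ≤ i ∧ i + 4 ≤ n ∧ e = F (Ar i)) ∨ e = F (AW n) ∨
    (∃ i, i % 2 = 0 ∧ 2 ≤ i ∧ i + 2 ≤ 2*k ∧ e = F (Br k i)) ∨ e = F (BW n k) ∨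
    e = F Xe := by
  have hm : (n - 1) / 2 = 2 * k := by omega
  constructor
  · intro he
    rw [Edef] at he
    simp only [Finset.mem_union, Finset.mem_image, Finset.mem_filter, Finset.mem_range,
      Finset.mem_Icc, Finset.mem_singleton] at he
    rcases he with (⟨i, ⟨hin, hodd⟩, rfl⟩ | ⟨i, ⟨⟨hi2, him⟩, hev⟩, rfl⟩) | rfl
    · by_cases hb : i + 4 ≤ n
      · exact Or.inl ⟨i, hodd, by omega, hb, by simp [F, Ar]⟩
      · have hi : i = n - 2 := by omega
        refine Or.inr (Or.inl ?_)
        subst hi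
        rw [castEq (n-2+1) (n-1) (by omega), castn (n-2+2) (by omega), castn1 (n-2+3) (by omega)]
        simp only [F, AW, image_insert, image_singleton, Nat.cast_zero, Nat.cast_one]
    · rw [hm] at him ⊢
      by_cases hb : i + 2 ≤ 2*k
      · exact Or.inr (Or.inr (Or.inl ⟨i, hev, hi2, hb, by simp [F, Br]⟩))
      · have hi : i = 2*k := by omega
        refine Or.inr (Or.inr (Or.inr (Or.inl ?_)))
        subst hi
        rw [castn (2*k+2*k+1) (by omega), castEq (2*k+2*k) (n-1) (by omega),
          castEq (2*k+1) (2*k+1) rfl]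
        simp only [F, BW, image_insert, image_singleton, Nat.cast_zero]
    · refine Or.inr (Or.inr (Or.inr (Or.inr ?_)))
      rw [show ((n : ℕ) : Fin n) = ((0:ℕ) : Fin n) from castn _ rfl]
      simp [F, Xe]
  · intro he
    rw [Edef]
    simp only [Finset.mem_union, Finset.mem_image, Finset.mem_filter, Finset.mem_range,
      Finset.mem_Icc, Finset.mem_singleton]
    rcases he with ⟨i, hodd, h1, h4, rfl⟩ | rfl | ⟨i, hev, h2, h2k, rfl⟩ | rfl | rfl
    · exact Or.inl (Or.inl ⟨i, ⟨by omega, hodd⟩, by simp [F, Ar]⟩)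
    · refine Or.inl (Or.inl ⟨n-2, ⟨by omega, by omega⟩, ?_⟩)
      rw [castEq (n-2+1) (n-1) (by omega), castn (n-2+2) (by omega), castn1 (n-2+3) (by omega)]
      simp only [F, AW, image_insert, image_singleton, Nat.cast_zero, Nat.cast_one]
    · exact Or.inl (Or.inr ⟨i, ⟨⟨h2, by omega⟩, hev⟩, by rw [hm]; simp [F, Br]⟩)
    · refine Or.inl (Or.inr ⟨2*k, ⟨⟨by omega, by omega⟩, by omega⟩, ?_⟩)
      rw [hm, castn (2*k+2*k+1) (by omega), castEq (2*k+2*k) (n-1) (by omega)]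
      simp only [F, BW, image_insert, image_singleton, Nat.cast_zero]
    · refine Or.inr ?_
      rw [show ((n : ℕ) : Fin n) = ((0:ℕ) : Fin n) from castn _ rfl]
      simp [F, Xe]

lemma bAr {i : ℕ} (h : i + 4 ≤ n) : ∀ a ∈ Ar i, a < n := by
  intro a ha; simp only [Ar, mem_insert, mem_singleton] at ha; omega

lemma bAW : ∀ a ∈ AW n, a < n := by
  intro a ha; simp only [AW, mem_insert, mem_singleton] at ha; omega

lemma bBr {i : ℕ} (h2 : i + 2 ≤ 2*k) : ∀ a ∈ Br k i, a < n := by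
  intro a ha; simp only [Br, mem_insert, mem_singleton] at ha; omega

lemma bBW : ∀ a ∈ BW n k, a < n := by
  intro a ha; simp only [BW, mem_insert, mem_singleton] at ha; omega

lemma bXe : ∀ a ∈ Xe, a < n := by
  intro a ha; simp only [Xe, mem_insert, mem_singleton] at ha; omega

lemma caseAA {i j : ℕ} (hi : i % 2 = 1) (hi1 : 1 ≤ i) (hi4 : i + 4 ≤ n)
    (hj : j % 2 = 1) (hj1 : 1 ≤ j) (hj4 : j + 4 ≤ n) (hne : i ≠ j)
    (hcard : 2 ≤ ((F (Ar i) : Finset (Fin n)) ∩ F (Ar j)).card) :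
    (F (Ar i) : Finset (Fin n)) ∩ F (Ar j) ∈ cyc n := by
  obtain ⟨x, hx, y, hy, hxy⟩ := two_elems (bAr hk hk3 hi4) (bAr hk hk3 hj4) hcard
  simp only [Ar, mem_inter, mem_insert, mem_singleton] at hx hy
  rw [Finter (bAr hk hk3 hi4) (bAr hk hk3 hj4)]
  have hd : j = i + 2 ∨ i = j + 2 := by omega
  rcases hd with rfl | rfl
  · rw [show Ar i ∩ Ar (i+2) = {i+2, i+2+1} from by
      ext a; simp only [Ar, mem_inter, mem_insert, mem_singleton]; omega]
    exact cyc_mem1 _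
  · rw [show Ar (j+2) ∩ Ar j = {j+2, j+2+1} from by
      ext a; simp only [Ar, mem_inter, mem_insert, mem_singleton]; omega]
    exact cyc_mem1 _

lemma caseA_AW {i : ℕ} (hi : i % 2 = 1) (hi1 : 1 ≤ i) (hi4 : i + 4 ≤ n)
    (hcard : 2 ≤ ((F (Ar i) : Finset (Fin n)) ∩ F (AW n)).card) :
    (F (Ar i) : Finset (Fin n)) ∩ F (AW n) ∈ cyc n := by
  obtain ⟨x, hx, y, hy, hxy⟩ := two_elems (bAr hk hk3 hi4) (bAW hk hk3) hcard
  simp only [Ar, AW, mem_inter, mem_insert, mem_singleton] at hx hy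
  have hd : i = n - 4 := by omega
  subst hd
  rw [Finter (bAr hk hk3 (by omega)) (bAW hk hk3),
    show Ar (n-4) ∩ AW n = {n-2, n-2+1} from by
      ext a; simp only [Ar, AW, mem_inter, mem_insert, mem_singleton]; omega]
  exact cyc_mem1 _

lemma caseA_B {i j : ℕ} (hi : i % 2 = 1) (hi1 : 1 ≤ i) (hi4 : i + 4 ≤ n)
    (hj : j % 2 = 0) (hj2 : 2 ≤ j) (hjk : j + 2 ≤ 2*k)
    (hcard : 2 ≤ ((F (Ar i) : Finset (Fin n)) ∩ F (Br k j)).card) :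
    (F (Ar i) : Finset (Fin n)) ∩ F (Br k j) ∈ cyc n := by
  obtain ⟨x, hx, y, hy, hxy⟩ := two_elems (bAr hk hk3 hi4) (bBr hk hk3 hjk) hcard
  simp only [Ar, Br, mem_inter, mem_insert, mem_singleton] at hx hy
  rw [Finter (bAr hk hk3 hi4) (bBr hk hk3 hjk)]
  have hd : j = i + 1 ∨ 2*k + j = i + 1 := by omega
  rcases hd with hd | hd
  · rw [show Ar i ∩ Br k j = {j, j+1} from by
      ext a; simp only [Ar, Br, mem_inter, mem_insert, mem_singleton]; omega]
    exact cyc_mem1 _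
  · rw [show Ar i ∩ Br k j = {2*k+j, 2*k+j+1} from by
      ext a; simp only [Ar, Br, mem_inter, mem_insert, mem_singleton]; omega]
    exact cyc_mem1 _

lemma caseA_BW {i : ℕ} (hi : i % 2 = 1) (hi1 : 1 ≤ i) (hi4 : i + 4 ≤ n)
    (hcard : 2 ≤ ((F (Ar i) : Finset (Fin n)) ∩ F (BW n k)).card) :
    (F (Ar i) : Finset (Fin n)) ∩ F (BW n k) ∈ cyc n := by
  obtain ⟨x, hx, y, hy, hxy⟩ := two_elems (bAr hk hk3 hi4) (bBW hk hk3) hcard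
  simp only [Ar, BW, mem_inter, mem_insert, mem_singleton] at hx hy
  have hd : i + 1 = 2*k := by omega
  rw [Finter (bAr hk hk3 hi4) (bBW hk hk3),
    show Ar i ∩ BW n k = {2*k, 2*k+1} from by
      ext a; simp only [Ar, BW, mem_inter, mem_insert, mem_singleton]; omega]
  exact cyc_mem1 _

lemma caseA_X {i : ℕ} (hi : i % 2 = 1) (hi1 : 1 ≤ i) (hi4 : i + 4 ≤ n)
    (hcard : 2 ≤ ((F (Ar i) : Finset (Fin n)) ∩ F Xe).card) :
    (F (Ar i) : Finset (Fin n)) ∩ F Xe ∈ cyc n := by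
  obtain ⟨x, hx, y, hy, hxy⟩ := two_elems (bAr hk hk3 hi4) (bXe hk hk3) hcard
  simp only [Ar, Xe, mem_inter, mem_insert, mem_singleton] at hx hy
  have hd : i = 1 := by omega
  subst hd
  rw [Finter (bAr hk hk3 (by omega)) (bXe hk hk3),
    show Ar 1 ∩ Xe = {1, 1+1} from by
      ext a; simp only [Ar, Xe, mem_inter, mem_insert, mem_singleton]; omega]
  exact cyc_mem1 _

lemma caseAW_B {j : ℕ} (hj : j % 2 = 0) (hj2 : 2 ≤ j) (hjk : j + 2 ≤ 2*k)
    (hcard : 2 ≤ ((F (AW n) : Finset (Fin n)) ∩ F (Br k j)).card) :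
    (F (AW n) : Finset (Fin n)) ∩ F (Br k j) ∈ cyc n := by
  obtain ⟨x, hx, y, hy, hxy⟩ := two_elems (bAW hk hk3) (bBr hk hk3 hjk) hcard
  simp only [AW, Br, mem_inter, mem_insert, mem_singleton] at hx hy
  exact (hxy (by omega)).elim

lemma caseAW_BW
    (hcard : 2 ≤ ((F (AW n) : Finset (Fin n)) ∩ F (BW n k)).card) :
    (F (AW n) : Finset (Fin n)) ∩ F (BW n k) ∈ cyc n := by
  rw [Finter (bAW hk hk3) (bBW hk hk3),
    show AW n ∩ BW n k = {0, n-1} from by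
      ext a; simp only [AW, BW, mem_inter, mem_insert, mem_singleton]; omega]
  exact cyc_mem2 (by omega)

lemma caseAW_X
    (hcard : 2 ≤ ((F (AW n) : Finset (Fin n)) ∩ F Xe).card) :
    (F (AW n) : Finset (Fin n)) ∩ F Xe ∈ cyc n := by
  rw [Finter (bAW hk hk3) (bXe hk hk3),
    show AW n ∩ Xe = {0, 0+1} from by
      ext a; simp only [AW, Xe, mem_inter, mem_insert, mem_singleton]; omega]
  exact cyc_mem1 _

lemma caseBB {i j : ℕ} (hi : i % 2 = 0) (hi2 : 2 ≤ i) (hik : i + 2 ≤ 2*k)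
    (hj : j % 2 = 0) (hj2 : 2 ≤ j) (hjk : j + 2 ≤ 2*k) (hne : i ≠ j)
    (hcard : 2 ≤ ((F (Br k i) : Finset (Fin n)) ∩ F (Br k j)).card) :
    (F (Br k i) : Finset (Fin n)) ∩ F (Br k j) ∈ cyc n := by
  obtain ⟨x, hx, y, hy, hxy⟩ := two_elems (bBr hk hk3 hik) (bBr hk hk3 hjk) hcard
  simp only [Br, mem_inter, mem_insert, mem_singleton] at hx hy
  exact (hxy (by omega)).elim

lemma caseB_BW {j : ℕ} (hj : j % 2 = 0) (hj2 : 2 ≤ j) (hjk : j + 2 ≤ 2*k)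
    (hcard : 2 ≤ ((F (Br k j) : Finset (Fin n)) ∩ F (BW n k)).card) :
    (F (Br k j) : Finset (Fin n)) ∩ F (BW n k) ∈ cyc n := by
  obtain ⟨x, hx, y, hy, hxy⟩ := two_elems (bBr hk hk3 hjk) (bBW hk hk3) hcard
  simp only [Br, BW, mem_inter, mem_insert, mem_singleton] at hx hy
  exact (hxy (by omega)).elim

lemma caseB_X {j : ℕ} (hj : j % 2 = 0) (hj2 : 2 ≤ j) (hjk : j + 2 ≤ 2*k)
    (hcard : 2 ≤ ((F (Br k j) : Finset (Fin n)) ∩ F Xe).card) :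
    (F (Br k j) : Finset (Fin n)) ∩ F Xe ∈ cyc n := by
  obtain ⟨x, hx, y, hy, hxy⟩ := two_elems (bBr hk hk3 hjk) (bXe hk hk3) hcard
  simp only [Br, Xe, mem_inter, mem_insert, mem_singleton] at hx hy
  exact (hxy (by omega)).elim

lemma caseBW_X
    (hcard : 2 ≤ ((F (BW n k) : Finset (Fin n)) ∩ F Xe).card) :
    (F (BW n k) : Finset (Fin n)) ∩ F Xe ∈ cyc n := by
  obtain ⟨x, hx, y, hy, hxy⟩ := two_elems (bBW hk hk3) (bXe hk hk3) hcard
  simp only [BW, Xe, mem_inter, mem_insert, mem_singleton] at hx hy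
  exact (hxy (by omega)).elim

lemma forward {e1 e2 : Finset (Fin n)} (h1 : e1 ∈ Edef n) (h2 : e2 ∈ Edef n)
    (hne : e1 ≠ e2) (hcard : 2 ≤ (e1 ∩ e2).card) : e1 ∩ e2 ∈ cyc n := by
  rcases (memE hk hk3).mp h1 with ⟨i, hi, hi1, hi4, rfl⟩ | rfl | ⟨i, hi, hi2, hik, rfl⟩ | rfl | rfl <;>
    rcases (memE hk hk3).mp h2 with ⟨j, hj, hj1, hj4, rfl⟩ | rfl | ⟨j, hj, hj2, hjk, rfl⟩ | rfl | rfl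
  · exact caseAA hk hk3 hi hi1 hi4 hj hj1 hj4 (by rintro rfl; exact hne rfl) hcard
  · exact caseA_AW hk hk3 hi hi1 hi4 hcard
  · exact caseA_B hk hk3 hi hi1 hi4 hj hj2 hjk hcard
  · exact caseA_BW hk hk3 hi hi1 hi4 hcard
  · exact caseA_X hk hk3 hi hi1 hi4 hcard
  · rw [Finset.inter_comm]
    exact caseA_AW hk hk3 hj hj1 hj4 (by rwa [Finset.inter_comm] at hcard)
  · exact (hne rfl).elim
  · exact caseAW_B hk hk3 hj hj2 hjk hcard
  · exact caseAW_BW hk hk3 hcard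
  · exact caseAW_X hk hk3 hcard
  · rw [Finset.inter_comm]
    exact caseA_B hk hk3 hj hj1 hj4 hi hi2 hik (by rwa [Finset.inter_comm] at hcard)
  · rw [Finset.inter_comm]
    exact caseAW_B hk hk3 hi hi2 hik (by rwa [Finset.inter_comm] at hcard)
  · exact caseBB hk hk3 hi hi2 hik hj hj2 hjk (by rintro rfl; exact hne rfl) hcard
  · exact caseB_BW hk hk3 hi hi2 hik hcard
  · exact caseB_X hk hk3 hi hi2 hik hcard
  · rw [Finset.inter_comm]
    exact caseA_BW hk hk3 hj hj1 hj4 (by rwa [Finset.inter_comm] at hcard)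
  · rw [Finset.inter_comm]
    exact caseAW_BW hk hk3 (by rwa [Finset.inter_comm] at hcard)
  · rw [Finset.inter_comm]
    exact caseB_BW hk hk3 hj hj2 hjk (by rwa [Finset.inter_comm] at hcard)
  · exact (hne rfl).elim
  · exact caseBW_X hk hk3 hcard
  · rw [Finset.inter_comm]
    exact caseA_X hk hk3 hj hj1 hj4 (by rwa [Finset.inter_comm] at hcard)
  · rw [Finset.inter_comm]
    exact caseAW_X hk hk3 (by rwa [Finset.inter_comm] at hcard)
  · rw [Finset.inter_comm]
    exact caseB_X hk hk3 hj hj2 hjk (by rwa [Finset.inter_comm] at hcard)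
  · rw [Finset.inter_comm]
    exact caseBW_X hk hk3 (by rwa [Finset.inter_comm] at hcard)
  · exact (hne rfl).elim

lemma backward (j : ℕ) (hj : j < n) :
    ({(j : Fin n), (j : Fin n) + 1} : Finset (Fin n)) ∈ EIh (Edef n) := by
  have hmE := fun e => (memE (n := n) hk hk3 (e := e)).mpr
  by_cases hpar : j % 2 = 1
  · by_cases hb : j + 2 < n
    · by_cases h3 : 3 ≤ j
      · refine build (bAr hk hk3 (i := j-2) (by omega)) (bAr hk hk3 (i := j) (by omega))
          (hmE _ (Or.inl ⟨j-2, by omega, by omega, by omega, rfl⟩))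
          (hmE _ (Or.inl ⟨j, by omega, by omega, by omega, rfl⟩))
          (by intro h; have h' := Finset.ext_iff.mp h (j+3);
              simp only [Ar, mem_insert, mem_singleton, or_true, true_or,
                iff_true, true_iff, or_false, false_or] at h'; omega)
          (by ext a; simp only [Ar, mem_inter, mem_insert, mem_singleton]; omega)
      · have hj1 : j = 1 := by omega
        subst hj1
        refine build (bXe hk hk3) (bAr hk hk3 (i := 1) (by omega))
          (hmE _ (Or.inr (Or.inr (Or.inr (Or.inr rfl)))))
          (hmE _ (Or.inl ⟨1, by omega, by omega, by omega, rfl⟩))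
          (by intro h; have h' := Finset.ext_iff.mp h 0;
              simp only [Xe, Ar, mem_insert, mem_singleton, or_true, true_or,
                iff_true, true_iff, or_false, false_or] at h'; omega)
          (by ext a; simp only [Xe, Ar, mem_inter, mem_insert, mem_singleton]; omega)
    · have hj2 : j = n - 2 := by omega
      subst hj2
      have hpair : ({(n-2 : ℕ), n-2+1} : Finset ℕ) = ({n-2, n-1} : Finset ℕ) := by
        rw [show n-2+1 = n-1 by omega]
      refine build (bAr hk hk3 (i := n-4) (by omega)) (bAW hk hk3)
        (hmE _ (Or.inl ⟨n-4, by omega, by omega, by omega, rfl⟩))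
        (hmE _ (Or.inr (Or.inl rfl)))
        (by intro h; have h' := Finset.ext_iff.mp h (n-4);
            simp only [Ar, AW, mem_insert, mem_singleton, or_true, true_or,
                iff_true, true_iff, or_false, false_or] at h'; omega)
        (by rw [hpair]; ext a; simp only [Ar, AW, mem_inter, mem_insert, mem_singleton]; omega)
  · by_cases h0 : j = 0
    · subst h0
      refine build (bAW hk hk3) (bXe hk hk3)
        (hmE _ (Or.inr (Or.inl rfl)))
        (hmE _ (Or.inr (Or.inr (Or.inr (Or.inr rfl)))))
        (by intro h; have h' := Finset.ext_iff.mp h (n-2);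
            simp only [AW, Xe, mem_insert, mem_singleton, or_true, true_or,
                iff_true, true_iff, or_false, false_or] at h'; omega)
        (by ext a; simp only [AW, Xe, mem_inter, mem_insert, mem_singleton]; omega)
    · by_cases hlo : j ≤ 2*k - 2
      · refine build (bBr hk hk3 (i := j) (by omega)) (bAr hk hk3 (i := j-1) (by omega))
          (hmE _ (Or.inr (Or.inr (Or.inl ⟨j, by omega, by omega, by omega, rfl⟩))))
          (hmE _ (Or.inl ⟨j-1, by omega, by omega, by omega, rfl⟩))
          (by intro h; have h' := Finset.ext_iff.mp h (2*k+j);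
              simp only [Br, Ar, mem_insert, mem_singleton, or_true, true_or,
                iff_true, true_iff, or_false, false_or] at h'; omega)
          (by ext a; simp only [Br, Ar, mem_inter, mem_insert, mem_singleton]; omega)
      · by_cases hmid : j = 2*k
        · subst hmid
          refine build (bBW hk hk3) (bAr hk hk3 (i := 2*k-1) (by omega))
            (hmE _ (Or.inr (Or.inr (Or.inr (Or.inl rfl)))))
            (hmE _ (Or.inl ⟨2*k-1, by omega, by omega, by omega, rfl⟩))
            (by intro h; have h' := Finset.ext_iff.mp h 0;
                simp only [BW, Ar, mem_insert, mem_singleton, or_true, true_or,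
                iff_true, true_iff, or_false, false_or] at h'; omega)
            (by ext a; simp only [BW, Ar, mem_inter, mem_insert, mem_singleton]; omega)
        · by_cases hhi : j ≤ 4*k - 2
          · refine build (bBr hk hk3 (i := j-2*k) (by omega)) (bAr hk hk3 (i := j-1) (by omega))
              (hmE _ (Or.inr (Or.inr (Or.inl ⟨j-2*k, by omega, by omega, by omega, rfl⟩))))
              (hmE _ (Or.inl ⟨j-1, by omega, by omega, by omega, rfl⟩))
              (by intro h; have h' := Finset.ext_iff.mp h (j-2*k);
                  simp only [Br, Ar, mem_insert, mem_singleton, or_true, true_or,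
                iff_true, true_iff, or_false, false_or] at h'; omega)
              (by ext a; simp only [Br, Ar, mem_inter, mem_insert, mem_singleton]; omega)
          · have hj4 : j = n - 1 := by omega
            subst hj4
            refine build2 (bBW hk hk3) (bAW hk hk3)
              (hmE _ (Or.inr (Or.inr (Or.inr (Or.inl rfl)))))
              (hmE _ (Or.inr (Or.inl rfl)))
              (by intro h; have h' := Finset.ext_iff.mp h (2*k);
                  simp only [BW, AW, mem_insert, mem_singleton, or_true, true_or,
                iff_true, true_iff, or_false, false_or] at h'; omega)
              (by ext a; simp only [BW, AW, mem_inter, mem_insert, mem_singleton]; omega)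
              (by omega)

lemma EIh_eq : EIh (Edef n) = cyc n := by
  ext s
  constructor
  · intro hs
    obtain ⟨e1, h1, e2, h2, hne, hc, rfl⟩ := mem_EIh_iff.mp hs
    exact forward hk hk3 h1 h2 hne hc
  · intro hs
    obtain ⟨j, hj, rfl⟩ := mem_cyc_iff.mp hs
    exact backward hk hk3 j hj

lemma Aform (i : ℕ) (hodd : i % 2 = 1) (hlt : i < n) :
    ({(i : Fin n), ((i + 1 : ℕ) : Fin n), ((i + 2 : ℕ) : Fin n),
      ((i + 3 : ℕ) : Fin n)} : Finset (Fin n)) = F (Ar i) ∧ i + 4 ≤ n ∨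
    ({(i : Fin n), ((i + 1 : ℕ) : Fin n), ((i + 2 : ℕ) : Fin n),
      ((i + 3 : ℕ) : Fin n)} : Finset (Fin n)) = F (AW n) ∧ i = n - 2 := by
  by_cases hb : i + 4 ≤ n
  · exact Or.inl ⟨by simp [F, Ar], hb⟩
  · have hi : i = n - 2 := by omega
    subst hi
    refine Or.inr ⟨?_, rfl⟩
    rw [castEq (n-2+1) (n-1) (by omega), castn (n-2+2) (by omega), castn1 (n-2+3) (by omega)]
    simp only [F, AW, image_insert, image_singleton, Nat.cast_zero, Nat.cast_one]

lemma Bform (i : ℕ) (hev : i % 2 = 0) (h2 : 2 ≤ i) (hle : i ≤ (n-1)/2) :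
    ({(i : Fin n), ((i + 1 : ℕ) : Fin n), (((n-1)/2 + i : ℕ) : Fin n),
      (((n-1)/2 + i + 1 : ℕ) : Fin n)} : Finset (Fin n)) = F (Br k i) ∧ i + 2 ≤ 2*k ∨
    ({(i : Fin n), ((i + 1 : ℕ) : Fin n), (((n-1)/2 + i : ℕ) : Fin n),
      (((n-1)/2 + i + 1 : ℕ) : Fin n)} : Finset (Fin n)) = F (BW n k) ∧ i = 2*k := by
  have hm : (n-1)/2 = 2*k := by omega
  rw [hm] at hle ⊢
  by_cases hb : i + 2 ≤ 2*k
  · exact Or.inl ⟨by simp [F, Br], hb⟩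
  · have hi : i = 2*k := by omega
    subst hi
    refine Or.inr ⟨?_, rfl⟩
    rw [castn (2*k+2*k+1) (by omega), castEq (2*k+2*k) (n-1) (by omega)]
    simp only [F, BW, image_insert, image_singleton, Nat.cast_zero]

lemma Xform : ({(n : Fin n), 1, 2, 5} : Finset (Fin n)) = F Xe := by
  rw [show ((n : ℕ) : Fin n) = ((0:ℕ) : Fin n) from castn _ rfl]
  simp [F, Xe]

lemma card_E : (Edef n).card = 3*k + 1 := by
  classical
  have hm2k : (n-1)/2 = 2*k := by omega
  set fA := fun i : ℕ => ({(i : Fin n), ((i + 1 : ℕ) : Fin n), ((i + 2 : ℕ) : Fin n),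
      ((i + 3 : ℕ) : Fin n)} : Finset (Fin n)) with hfA
  set fB := fun i : ℕ => ({(i : Fin n), ((i + 1 : ℕ) : Fin n), (((n-1)/2 + i : ℕ) : Fin n),
      (((n-1)/2 + i + 1 : ℕ) : Fin n)} : Finset (Fin n)) with hfB
  set sA := (Finset.range n).filter (fun i => i % 2 = 1) with hsA
  set sB := (Finset.Icc 2 ((n-1)/2)).filter (fun i => i % 2 = 0) with hsB
  have hmemA : ∀ i ∈ sA, i % 2 = 1 ∧ i < n := by
    intro i hi; rw [hsA, Finset.mem_filter, Finset.mem_range] at hi; exact ⟨hi.2, hi.1⟩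
  have hmemB : ∀ i ∈ sB, i % 2 = 0 ∧ 2 ≤ i ∧ i ≤ (n-1)/2 := by
    intro i hi; rw [hsB, Finset.mem_filter, Finset.mem_Icc] at hi
    exact ⟨hi.2, hi.1.1, hi.1.2⟩
  have hEd : Edef n = (sA.image fA ∪ sB.image fB) ∪ {({(n : Fin n), 1, 2, 5} : Finset (Fin n))} := rfl
  -- injectivity of fA on sA
  have injA : Set.InjOn fA ↑sA := by
    intro i hi j hj hij
    obtain ⟨hoi, hlti⟩ := hmemA i hi
    obtain ⟨hoj, hltj⟩ := hmemA j hj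
    rcases Aform hk hk3 i hoi hlti with ⟨hei, h4i⟩ | ⟨hei, hwi⟩ <;>
      rcases Aform hk hk3 j hoj hltj with ⟨hej, h4j⟩ | ⟨hej, hwj⟩
    · have h := FinjEq (bAr hk hk3 h4i) (bAr hk hk3 h4j) (by rw [← hei, ← hej]; exact hij)
      have e1 := Finset.ext_iff.mp h i
      have e2 := Finset.ext_iff.mp h j
      simp only [Ar, mem_insert, mem_singleton, or_true, true_or, iff_true, true_iff,
        or_false, false_or] at e1 e2
      omega
    · have h := FinjEq (bAr hk hk3 h4i) (bAW hk hk3) (by rw [← hei, ← hej]; exact hij)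
      have e1 := Finset.ext_iff.mp h 0
      simp only [Ar, AW, mem_insert, mem_singleton, or_true, true_or, iff_true, true_iff,
        or_false, false_or] at e1
      omega
    · have h := FinjEq (bAr hk hk3 h4j) (bAW hk hk3) (by rw [← hei, ← hej]; exact hij.symm)
      have e1 := Finset.ext_iff.mp h 0
      simp only [Ar, AW, mem_insert, mem_singleton, or_true, true_or, iff_true, true_iff,
        or_false, false_or] at e1
      omega
    · omega
  have injB : Set.InjOn fB ↑sB := by
    intro i hi j hj hij
    obtain ⟨hoi, h2i, hlei⟩ := hmemB i hi
    obtain ⟨hoj, h2j, hlej⟩ := hmemB j hj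
    rcases Bform hk hk3 i hoi h2i hlei with ⟨hei, h4i⟩ | ⟨hei, hwi⟩ <;>
      rcases Bform hk hk3 j hoj h2j hlej with ⟨hej, h4j⟩ | ⟨hej, hwj⟩
    · have h := FinjEq (bBr hk hk3 h4i) (bBr hk hk3 h4j) (by rw [← hei, ← hej]; exact hij)
      have e1 := Finset.ext_iff.mp h i
      have e2 := Finset.ext_iff.mp h j
      simp only [Br, mem_insert, mem_singleton, or_true, true_or, iff_true, true_iff,
        or_false, false_or] at e1 e2
      omega
    · have h := FinjEq (bBr hk hk3 h4i) (bBW hk hk3) (by rw [← hei, ← hej]; exact hij)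
      have e1 := Finset.ext_iff.mp h i
      simp only [Br, BW, mem_insert, mem_singleton, or_true, true_or, iff_true, true_iff,
        or_false, false_or] at e1
      omega
    · have h := FinjEq (bBr hk hk3 h4j) (bBW hk hk3) (by rw [← hei, ← hej]; exact hij.symm)
      have e1 := Finset.ext_iff.mp h j
      simp only [Br, BW, mem_insert, mem_singleton, or_true, true_or, iff_true, true_iff,
        or_false, false_or] at e1
      omega
    · omega
  have cardA : (sA.image fA).card = 2*k := by
    rw [Finset.card_image_of_injOn injA]
    have : sA = (range (2*k)).image (fun t => 2*t+1) := by
      ext a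
      rw [hsA]
      simp only [Finset.mem_filter, Finset.mem_range, Finset.mem_image]
      constructor
      · rintro ⟨h1, h2⟩; exact ⟨a/2, by omega, by omega⟩
      · rintro ⟨t, ht, rfl⟩; omega
    rw [this, Finset.card_image_of_injective _ (fun a b h => by omega), Finset.card_range]
  have cardB : (sB.image fB).card = k := by
    rw [Finset.card_image_of_injOn injB]
    have : sB = (range k).image (fun t => 2*t+2) := by
      ext a
      rw [hsB]
      simp only [Finset.mem_filter, Finset.mem_Icc, Finset.mem_image, Finset.mem_range]
      rw [hm2k]
      constructor
      · rintro ⟨⟨h1, h2⟩, h3⟩; exact ⟨a/2 - 1, by omega, by omega⟩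
      · rintro ⟨t, ht, rfl⟩; omega
    rw [this, Finset.card_image_of_injective _ (fun a b h => by omega), Finset.card_range]
  have dAB : Disjoint (sA.image fA) (sB.image fB) := by
    rw [Finset.disjoint_left]
    rintro e heA heB
    obtain ⟨i, hi, hei⟩ := Finset.mem_image.mp heA
    obtain ⟨j, hj, hej⟩ := Finset.mem_image.mp heB
    obtain ⟨hoi, hlti⟩ := hmemA i hi
    obtain ⟨hoj, h2j, hlej⟩ := hmemB j hj
    have hij : fA i = fB j := by rw [hei, hej]
    rcases Aform hk hk3 i hoi hlti with ⟨hfi, h4i⟩ | ⟨hfi, hwi⟩ <;>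
      rcases Bform hk hk3 j hoj h2j hlej with ⟨hfj, h4j⟩ | ⟨hfj, hwj⟩
    · have h := FinjEq (bAr hk hk3 h4i) (bBr hk hk3 h4j) (by rw [← hfi, ← hfj]; exact hij)
      have e1 := Finset.ext_iff.mp h j
      have e2 := Finset.ext_iff.mp h (2*k+j)
      simp only [Ar, Br, mem_insert, mem_singleton, or_true, true_or, iff_true, true_iff,
        or_false, false_or] at e1 e2
      omega
    · have h := FinjEq (bAr hk hk3 h4i) (bBW hk hk3) (by rw [← hfi, ← hfj]; exact hij)
      have e1 := Finset.ext_iff.mp h (2*k)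
      have e2 := Finset.ext_iff.mp h (n-1)
      simp only [Ar, BW, mem_insert, mem_singleton, or_true, true_or, iff_true, true_iff,
        or_false, false_or] at e1 e2
      omega
    · have h := FinjEq (bAW hk hk3) (bBr hk hk3 h4j) (by rw [← hfi, ← hfj]; exact hij)
      have e1 := Finset.ext_iff.mp h j
      simp only [AW, Br, mem_insert, mem_singleton, or_true, true_or, iff_true, true_iff,
        or_false, false_or] at e1
      omega
    · have h := FinjEq (bAW hk hk3) (bBW hk hk3) (by rw [← hfi, ← hfj]; exact hij)
      have e1 := Finset.ext_iff.mp h (2*k)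
      simp only [AW, BW, mem_insert, mem_singleton, or_true, true_or, iff_true, true_iff,
        or_false, false_or] at e1
      omega
  have dX : Disjoint (sA.image fA ∪ sB.image fB)
      ({({(n : Fin n), 1, 2, 5} : Finset (Fin n))} : Finset (Finset (Fin n))) := by
    rw [Finset.disjoint_right]
    rintro e he heU
    rw [Finset.mem_singleton] at he
    subst he
    rcases Finset.mem_union.mp heU with heA | heB
    · obtain ⟨i, hi, hei⟩ := Finset.mem_image.mp heA
      obtain ⟨hoi, hlti⟩ := hmemA i hi
      rcases Aform hk hk3 i hoi hlti with ⟨hfi, h4i⟩ | ⟨hfi, hwi⟩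
      · have h := FinjEq (bAr hk hk3 h4i) (bXe hk hk3) (by rw [← hfi, ← Xform hk hk3]; exact hei)
        have e1 := Finset.ext_iff.mp h 0
        simp only [Ar, Xe, mem_insert, mem_singleton, or_true, true_or, iff_true, true_iff,
          or_false, false_or] at e1
        omega
      · have h := FinjEq (bAW hk hk3) (bXe hk hk3) (by rw [← hfi, ← Xform hk hk3]; exact hei)
        have e1 := Finset.ext_iff.mp h 5
        simp only [AW, Xe, mem_insert, mem_singleton, or_true, true_or, iff_true, true_iff,
          or_false, false_or] at e1
        omega
    · obtain ⟨j, hj, hej⟩ := Finset.mem_image.mp heB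
      obtain ⟨hoj, h2j, hlej⟩ := hmemB j hj
      rcases Bform hk hk3 j hoj h2j hlej with ⟨hfj, h4j⟩ | ⟨hfj, hwj⟩
      · have h := FinjEq (bBr hk hk3 h4j) (bXe hk hk3) (by rw [← hfj, ← Xform hk hk3]; exact hej)
        have e1 := Finset.ext_iff.mp h 1
        simp only [Br, Xe, mem_insert, mem_singleton, or_true, true_or, iff_true, true_iff,
          or_false, false_or] at e1
        omega
      · have h := FinjEq (bBW hk hk3) (bXe hk hk3) (by rw [← hfj, ← Xform hk hk3]; exact hej)
        have e1 := Finset.ext_iff.mp h 1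
        simp only [BW, Xe, mem_insert, mem_singleton, or_true, true_or, iff_true, true_iff,
          or_false, false_or] at e1
        omega
  rw [hEd, Finset.card_union_of_disjoint dX, Finset.card_union_of_disjoint dAB,
    Finset.card_singleton, cardA, cardB]
  ring

end Main
end S7

theorem stmt_7 (n : ℕ) [NeZero n] (hn : 13 ≤ n) (hmod : n % 4 = 1) :
    letI E : Finset (Finset (Fin n)) :=
      (((Finset.range n).filter fun i => i % 2 = 1).image fun i : ℕ =>
        ({(i : Fin n), ((i + 1 : ℕ) : Fin n), ((i + 2 : ℕ) : Fin n),
          ((i + 3 : ℕ) : Fin n)} : Finset (Fin n))) ∪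
      (((Finset.Icc 2 ((n - 1) / 2)).filter fun i => i % 2 = 0).image fun i : ℕ =>
        ({(i : Fin n), ((i + 1 : ℕ) : Fin n), (((n - 1) / 2 + i : ℕ) : Fin n),
          (((n - 1) / 2 + i + 1 : ℕ) : Fin n)} : Finset (Fin n))) ∪
      {({(n : Fin n), 1, 2, 5} : Finset (Fin n))}
    EIh E = cyc n ∧ E.card = (3 * n + 3) / 4 := by
  obtain ⟨k, hk, hk3⟩ : ∃ k, n = 4*k+1 ∧ 3 ≤ k := ⟨n/4, by omega⟩
  refine ⟨S7.EIh_eq hk hk3, ?_⟩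
  rw [show (3*n+3)/4 = 3*k+1 by omega]
  exact S7.card_E hk hk3
end

section
/- Let n ≥ 14 with n ≡ 2 (mod 4). The 4-uniform hypergraph H on V = {1,...,n} with hyperedges E = { {i, i+1, i+2, i+3} : i ∈ {1, 3, ..., n−1} } ∪ { {i, i+1, n/2 + i − 1, n/2 + i} : i ∈ {2, 4, ..., n/2 − 1} } ∪ { {n, 1, n/2 + 1, n/2 + 2} } (indices mod n) satisfies EI(H) = C_n and |E| = ⌈3n/4⌉. -/
open Finset
open Fin.NatCast

namespace S8
lemma natmod (a n : ℕ) (h : a < 2*n) (h0 : 0 < n) : a % n < n ∧ (a % n = a ∨ a % n + n = a) := by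
  refine ⟨Nat.mod_lt _ h0, ?_⟩
  rcases Nat.lt_or_ge a n with h' | h'
  · exact Or.inl (Nat.mod_eq_of_lt h')
  · right; rw [Nat.mod_eq_sub_mod h', Nat.mod_eq_of_lt (by omega)]; omega

lemma mem_cast_iff {n : ℕ} [NeZero n] (x : Fin n) (a : ℕ) (ha : a < 2*n) :
    x = (a : Fin n) ↔ (x.val = a ∨ x.val + n = a) := by
  have h0 : 0 < n := Nat.pos_of_ne_zero (NeZero.ne n)
  rw [Fin.ext_iff, Fin.val_natCast]
  have := natmod a n ha h0; have := x.isLt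
  omega

lemma cast_eq_iff {n : ℕ} [NeZero n] (a b : ℕ) (ha : a < 2*n) (hb : b < 2*n) :
    (a : Fin n) = (b : Fin n) ↔ (a = b ∨ a + n = b ∨ b + n = a) := by
  have h0 : 0 < n := Nat.pos_of_ne_zero (NeZero.ne n)
  rw [Fin.ext_iff, Fin.val_natCast, Fin.val_natCast]
  have := natmod a n ha h0; have := natmod b n hb h0
  omega

def eA (n : ℕ) [NeZero n] (i : ℕ) : Finset (Fin n) :=
  {(i : Fin n), ((i + 1 : ℕ) : Fin n), ((i + 2 : ℕ) : Fin n), ((i + 3 : ℕ) : Fin n)}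

def eB (n : ℕ) [NeZero n] (m i : ℕ) : Finset (Fin n) :=
  {(i : Fin n), ((i + 1 : ℕ) : Fin n), ((m + i - 1 : ℕ) : Fin n), ((m + i : ℕ) : Fin n)}

def eC (n : ℕ) [NeZero n] (m : ℕ) : Finset (Fin n) :=
  {(n : Fin n), 1, ((m + 1 : ℕ) : Fin n), ((m + 2 : ℕ) : Fin n)}

lemma memA {n : ℕ} [NeZero n] (i : ℕ) (x : Fin n) (hn : 4 ≤ n) (h : i < n) :
    x ∈ eA n i ↔ (x.val = i ∨ (x.val = i+1 ∨ x.val + n = i+1) ∨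
      (x.val = i+2 ∨ x.val + n = i+2) ∨ (x.val = i+3 ∨ x.val + n = i+3)) := by
  have hx := x.isLt
  simp only [eA, mem_insert, mem_singleton]
  rw [mem_cast_iff x i (by omega), mem_cast_iff x (i+1) (by omega),
    mem_cast_iff x (i+2) (by omega), mem_cast_iff x (i+3) (by omega)]
  omega

lemma memB {n : ℕ} [NeZero n] (m i : ℕ) (x : Fin n) (hm : 1 ≤ m) (h1 : 1 ≤ i) (h : m + i < n) :
    x ∈ eB n m i ↔ (x.val = i ∨ x.val = i+1 ∨ x.val = m+i-1 ∨ x.val = m+i) := by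
  have hx := x.isLt
  simp only [eB, mem_insert, mem_singleton]
  rw [mem_cast_iff x i (by omega), mem_cast_iff x (i+1) (by omega),
    mem_cast_iff x (m+i-1) (by omega), mem_cast_iff x (m+i) (by omega)]
  omega

lemma memC {n : ℕ} [NeZero n] (m : ℕ) (x : Fin n) (h : m + 2 < n) :
    x ∈ eC n m ↔ (x.val = 0 ∨ x.val = 1 ∨ x.val = m+1 ∨ x.val = m+2) := by
  have hx := x.isLt
  simp only [eC, mem_insert, mem_singleton,
    show (1 : Fin n) = ((1:ℕ) : Fin n) from Nat.cast_one.symm]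
  rw [mem_cast_iff x n (by omega), mem_cast_iff x 1 (by omega),
    mem_cast_iff x (m+1) (by omega), mem_cast_iff x (m+2) (by omega)]
  omega

lemma memPair {n : ℕ} [NeZero n] (k : ℕ) (x : Fin n) (h : k + 1 < 2*n) :
    x ∈ ({(k : Fin n), ((k + 1 : ℕ) : Fin n)} : Finset (Fin n)) ↔
      ((x.val = k ∨ x.val + n = k) ∨ (x.val = k+1 ∨ x.val + n = k+1)) := by
  simp only [mem_insert, mem_singleton]
  rw [mem_cast_iff x k (by omega), mem_cast_iff x (k+1) (by omega)]

set_option maxHeartbeats 1000000 in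
lemma interAB (n m : ℕ) [NeZero n] (hnm : n = 2 * m) (hm : m % 2 = 1) (h7 : 7 ≤ m)
    (i j : ℕ) (hi : i < n) (hi2 : i % 2 = 1) (hj1 : 2 ≤ j) (hj : j ≤ m - 1) (hj2 : j % 2 = 0)
    (x y : Fin n) (hx : x ∈ eA n i ∩ eB n m j) (hy : y ∈ eA n i ∩ eB n m j) (hxy : x ≠ y) :
    ∃ k : ℕ, eA n i ∩ eB n m j = {(k : Fin n), ((k + 1 : ℕ) : Fin n)} := by
  have hvxy : x.val ≠ y.val := fun h => hxy (Fin.ext h)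
  have hxlt := x.isLt; have hylt := y.isLt
  rw [mem_inter, memA i x (by omega) (by omega), memB m j x (by omega) (by omega) (by omega)] at hx
  rw [mem_inter, memA i y (by omega) (by omega), memB m j y (by omega) (by omega) (by omega)] at hy
  have hrel1 : (i + 1 = j) ∨ (i + 2 = m + j) ∨
      ((i = j + 1) ∨ (i + 3 = j ∨ i + 3 = j + n) ∨ (i + 4 = m + j) ∨ (i = m + j)) := by
    clear hy hvxy hylt
    omega
  rcases hrel1 with h | h | h
  · refine ⟨j, ?_⟩
    ext a
    have halt := a.isLt
    rw [mem_inter, memA i a (by omega) (by omega), memB m j a (by omega) (by omega) (by omega),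
      memPair j a (by omega)]
    clear hx hy hvxy
    omega
  · refine ⟨m + j - 1, ?_⟩
    ext a
    have halt := a.isLt
    rw [mem_inter, memA i a (by omega) (by omega), memB m j a (by omega) (by omega) (by omega),
      memPair (m+j-1) a (by omega)]
    clear hx hy hvxy
    omega
  · exact absurd (by omega : x.val = y.val) hvxy

set_option maxHeartbeats 1000000 in
lemma interAA (n m : ℕ) [NeZero n] (hnm : n = 2 * m) (hm : m % 2 = 1) (h7 : 7 ≤ m)
    (i j : ℕ) (hi : i < n) (hi2 : i % 2 = 1) (hj : j < n) (hj2 : j % 2 = 1)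
    (hne : eA n i ≠ eA n j) (x : Fin n) (hx : x ∈ eA n i ∩ eA n j) :
    ∃ k : ℕ, eA n i ∩ eA n j = {(k : Fin n), ((k + 1 : ℕ) : Fin n)} := by
  have hij : i ≠ j := fun h => hne (by rw [h])
  have hxlt := x.isLt
  rw [mem_inter, memA i x (by omega) (by omega), memA j x (by omega) (by omega)] at hx
  have hrel : (j + 2 = i ∨ j + 2 = i + n) ∨ (i + 2 = j ∨ i + 2 = j + n) := by omega
  rcases hrel with h | h
  · refine ⟨j + 2, ?_⟩
    ext a
    have halt := a.isLt
    rw [mem_inter, memA i a (by omega) (by omega), memA j a (by omega) (by omega),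
      memPair (j+2) a (by omega)]
    clear hx
    omega
  · refine ⟨i + 2, ?_⟩
    ext a
    have halt := a.isLt
    rw [mem_inter, memA i a (by omega) (by omega), memA j a (by omega) (by omega),
      memPair (i+2) a (by omega)]
    clear hx
    omega

set_option maxHeartbeats 1000000 in
lemma interAC (n m : ℕ) [NeZero n] (hnm : n = 2 * m) (hm : m % 2 = 1) (h7 : 7 ≤ m)
    (i : ℕ) (hi : i < n) (hi2 : i % 2 = 1)
    (x y : Fin n) (hx : x ∈ eA n i ∩ eC n m) (hy : y ∈ eA n i ∩ eC n m) (hxy : x ≠ y) :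
    ∃ k : ℕ, eA n i ∩ eC n m = {(k : Fin n), ((k + 1 : ℕ) : Fin n)} := by
  have hvxy : x.val ≠ y.val := fun h => hxy (Fin.ext h)
  have hxlt := x.isLt; have hylt := y.isLt
  rw [mem_inter, memA i x (by omega) (by omega), memC m x (by omega)] at hx
  rw [mem_inter, memA i y (by omega) (by omega), memC m y (by omega)] at hy
  have hrel1 : i = n - 1 ∨ i = m ∨ (i = n - 3 ∨ i = 1 ∨ i = m - 2 ∨ i = m + 2) := by
    clear hy hvxy hylt
    omega
  rcases hrel1 with h | h | h
  · refine ⟨n, ?_⟩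
    ext a
    have halt := a.isLt
    rw [mem_inter, memA i a (by omega) (by omega), memC m a (by omega),
      memPair n a (by omega)]
    clear hx hy hvxy
    omega
  · refine ⟨m + 1, ?_⟩
    ext a
    have halt := a.isLt
    rw [mem_inter, memA i a (by omega) (by omega), memC m a (by omega),
      memPair (m+1) a (by omega)]
    clear hx hy hvxy
    omega
  · exact absurd (by omega : x.val = y.val) hvxy

set_option maxHeartbeats 1000000 in
lemma interBC (n m : ℕ) [NeZero n] (hnm : n = 2 * m) (hm : m % 2 = 1) (h7 : 7 ≤ m)
    (j : ℕ) (hj1 : 2 ≤ j) (hj : j ≤ m - 1) (hj2 : j % 2 = 0)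
    (x : Fin n) (hx : x ∈ eB n m j ∩ eC n m) :
    ∃ k : ℕ, eB n m j ∩ eC n m = {(k : Fin n), ((k + 1 : ℕ) : Fin n)} := by
  have hxlt := x.isLt
  rw [mem_inter, memB m j x (by omega) (by omega) (by omega), memC m x (by omega)] at hx
  have hrel : j = 2 := by omega
  refine ⟨m + 1, ?_⟩
  ext a
  have halt := a.isLt
  rw [mem_inter, memB m j a (by omega) (by omega) (by omega), memC m a (by omega),
    memPair (m+1) a (by omega)]
  clear hx
  omega

set_option maxHeartbeats 1000000 in
lemma interBB (n m : ℕ) [NeZero n] (hnm : n = 2 * m) (hm : m % 2 = 1) (h7 : 7 ≤ m)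
    (i j : ℕ) (hi1 : 2 ≤ i) (hi : i ≤ m - 1) (hi2 : i % 2 = 0)
    (hj1 : 2 ≤ j) (hj : j ≤ m - 1) (hj2 : j % 2 = 0)
    (x : Fin n) (hx : x ∈ eB n m i ∩ eB n m j) : i = j := by
  have hxlt := x.isLt
  rw [mem_inter, memB m i x (by omega) (by omega) (by omega),
    memB m j x (by omega) (by omega) (by omega)] at hx
  omega

lemma eA_inj (n m : ℕ) [NeZero n] (hnm : n = 2 * m) (h7 : 7 ≤ m)
    (i j : ℕ) (hi : i < n) (hj : j < n) (h : eA n i = eA n j) : i = j := by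
  have h1 : ((i : ℕ) : Fin n) ∈ eA n j := by rw [← h]; simp [eA]
  have h2 : ((j : ℕ) : Fin n) ∈ eA n i := by rw [h]; simp [eA]
  rw [memA j _ (by omega) (by omega)] at h1
  rw [memA i _ (by omega) (by omega)] at h2
  rw [Fin.val_cast_of_lt hi] at h1
  rw [Fin.val_cast_of_lt hj] at h2
  omega

lemma eB_inj (n m : ℕ) [NeZero n] (hnm : n = 2 * m) (h7 : 7 ≤ m)
    (i j : ℕ) (hi1 : 2 ≤ i) (hi : i ≤ m - 1) (hj1 : 2 ≤ j) (hj : j ≤ m - 1)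
    (h : eB n m i = eB n m j) : i = j := by
  have h1 : ((i : ℕ) : Fin n) ∈ eB n m j := by rw [← h]; simp [eB]
  have h2 : ((j : ℕ) : Fin n) ∈ eB n m i := by rw [h]; simp [eB]
  rw [memB m j _ (by omega) (by omega) (by omega)] at h1
  rw [memB m i _ (by omega) (by omega) (by omega)] at h2
  rw [Fin.val_cast_of_lt (show i < n by omega)] at h1
  rw [Fin.val_cast_of_lt (show j < n by omega)] at h2
  omega

lemma eA_ne_eB (n m : ℕ) [NeZero n] (hnm : n = 2 * m) (h7 : 7 ≤ m)
    (i j : ℕ) (hi : i < n) (hj1 : 2 ≤ j) (hj : j ≤ m - 1) : eA n i ≠ eB n m j := by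
  intro h
  have h1 : ((j : ℕ) : Fin n) ∈ eA n i := by rw [h]; simp [eB]
  have h2 : ((m + j : ℕ) : Fin n) ∈ eA n i := by rw [h]; simp [eB]
  rw [memA i _ (by omega) (by omega)] at h1 h2
  rw [Fin.val_cast_of_lt (show j < n by omega)] at h1
  rw [Fin.val_cast_of_lt (show m + j < n by omega)] at h2
  omega

lemma eA_ne_eC (n m : ℕ) [NeZero n] (hnm : n = 2 * m) (h7 : 7 ≤ m)
    (i : ℕ) (hi : i < n) : eA n i ≠ eC n m := by
  intro h
  have h1 : ((n : ℕ) : Fin n) ∈ eA n i := by rw [h]; simp [eC]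
  have h2 : ((m + 1 : ℕ) : Fin n) ∈ eA n i := by rw [h]; simp [eC]
  rw [memA i _ (by omega) (by omega)] at h1 h2
  have hv : ((n : ℕ) : Fin n).val = 0 := by simp
  rw [hv] at h1
  rw [Fin.val_cast_of_lt (show m + 1 < n by omega)] at h2
  omega

lemma eB_ne_eC (n m : ℕ) [NeZero n] (hnm : n = 2 * m) (h7 : 7 ≤ m)
    (j : ℕ) (hj1 : 2 ≤ j) (hj : j ≤ m - 1) : eB n m j ≠ eC n m := by
  intro h
  have h1 : ((n : ℕ) : Fin n) ∈ eB n m j := by rw [h]; simp [eC]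
  rw [memB m j _ (by omega) (by omega) (by omega)] at h1
  have hv : ((n : ℕ) : Fin n).val = 0 := by simp
  rw [hv] at h1
  omega

lemma cardA (n m : ℕ) (hnm : n = 2 * m) :
    ((Finset.range n).filter fun i => i % 2 = 1).card = m := by
  have he : ((Finset.range n).filter fun i => i % 2 = 1) =
      (Finset.range m).image fun k => 2 * k + 1 := by
    ext x
    simp only [mem_filter, mem_range, mem_image]
    constructor
    · rintro ⟨h1, h2⟩; exact ⟨x / 2, by omega, by omega⟩
    · rintro ⟨k, hk, rfl⟩; omega
  rw [he, card_image_of_injective _ fun a b h => by omega, card_range]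

lemma cardB (m : ℕ) (hm : m % 2 = 1) :
    ((Finset.Icc 2 (m - 1)).filter fun i => i % 2 = 0).card = (m - 1) / 2 := by
  have he : ((Finset.Icc 2 (m - 1)).filter fun i => i % 2 = 0) =
      (Finset.range ((m - 1) / 2)).image fun k => 2 * k + 2 := by
    ext x
    simp only [mem_filter, mem_Icc, mem_range, mem_image]
    constructor
    · rintro ⟨⟨h1, h2⟩, h3⟩; exact ⟨x / 2 - 1, by omega, by omega⟩
    · rintro ⟨k, hk, rfl⟩; omega
  rw [he, card_image_of_injective _ fun a b h => by omega, card_range]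

lemma pair_card (n : ℕ) [NeZero n] (hn : 2 ≤ n) (k : ℕ) (hk : k < n) :
    ({(k : Fin n), ((k + 1 : ℕ) : Fin n)} : Finset (Fin n)).card = 2 := by
  rw [card_insert_of_notMem, card_singleton]
  simp only [mem_singleton]
  rw [cast_eq_iff k (k + 1) (by omega) (by omega)]
  omega

def EE (n m : ℕ) [NeZero n] : Finset (Finset (Fin n)) :=
  (((Finset.range n).filter fun i => i % 2 = 1).image fun i : ℕ => eA n i) ∪
  (((Finset.Icc 2 (m - 1)).filter fun i => i % 2 = 0).image fun i : ℕ => eB n m i) ∪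
  {eC n m}

lemma EIh_mem_intro {n : ℕ} [NeZero n] (hn : 2 ≤ n) (E : Finset (Finset (Fin n)))
    (e1 e2 : Finset (Fin n)) (h1 : e1 ∈ E) (h2 : e2 ∈ E) (hne : e1 ≠ e2) (k : ℕ) (hk : k < n)
    (hint : e1 ∩ e2 = {(k : Fin n), ((k + 1 : ℕ) : Fin n)}) :
    ({(k : Fin n), ((k + 1 : ℕ) : Fin n)} : Finset (Fin n)) ∈ EIh E := by
  rw [EIh, mem_image]
  exact ⟨(e1, e2), mem_filter.2 ⟨mem_product.2 ⟨h1, h2⟩, hne,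
    by rw [hint]; exact (pair_card n hn k hk).ge⟩, hint⟩

lemma pair_mem_cyc {n : ℕ} [NeZero n] (k : ℕ) :
    ({(k : Fin n), ((k + 1 : ℕ) : Fin n)} : Finset (Fin n)) ∈ cyc n := by
  rw [cyc, mem_image]
  exact ⟨(k : Fin n), mem_univ _, by rw [Nat.cast_add, Nat.cast_one]⟩

set_option maxHeartbeats 1000000 in
lemma EIh_sub (n m : ℕ) [NeZero n] (hnm : n = 2 * m) (hm : m % 2 = 1) (h7 : 7 ≤ m) :
    EIh (EE n m) ⊆ cyc n := by
  intro s hs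
  rw [EIh, mem_image] at hs
  obtain ⟨p, hp, hps⟩ := hs
  obtain ⟨e1, e2⟩ := p
  rw [mem_filter, mem_product] at hp
  obtain ⟨⟨h1, h2⟩, hne, hcard⟩ := hp
  simp only at hps hne hcard
  obtain ⟨x, hx, y, hy, hxy⟩ := Finset.one_lt_card.mp hcard
  have key : ∃ k : ℕ, e1 ∩ e2 = {(k : Fin n), ((k + 1 : ℕ) : Fin n)} := by
    simp only [EE, mem_union, mem_image, mem_filter, mem_range, mem_Icc,
      mem_singleton] at h1 h2
    rcases h1 with (⟨i, ⟨hi1, hi2⟩, rfl⟩ | ⟨i, ⟨⟨hi1, hi1'⟩, hi2⟩, rfl⟩) | rfl <;>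
      rcases h2 with (⟨j, ⟨hj1, hj2⟩, rfl⟩ | ⟨j, ⟨⟨hj1, hj1'⟩, hj2⟩, rfl⟩) | rfl
    · exact interAA n m hnm hm h7 i j hi1 hi2 hj1 hj2 hne x hx
    · exact interAB n m hnm hm h7 i j hi1 hi2 hj1 hj1' hj2 x y hx hy hxy
    · exact interAC n m hnm hm h7 i hi1 hi2 x y hx hy hxy
    · rw [inter_comm] at hx hy
      rw [inter_comm]
      exact interAB n m hnm hm h7 j i hj1 hj2 hi1 hi1' hi2 x y hx hy hxy
    · have := interBB n m hnm hm h7 i j hi1 hi1' hi2 hj1 hj1' hj2 x hx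
      subst this
      exact (hne rfl).elim
    · exact interBC n m hnm hm h7 i hi1 hi1' hi2 x hx
    · rw [inter_comm] at hx hy
      rw [inter_comm]
      exact interAC n m hnm hm h7 j hj1 hj2 x y hx hy hxy
    · rw [inter_comm] at hx
      rw [inter_comm]
      exact interBC n m hnm hm h7 j hj1 hj1' hj2 x hx
    · exact (hne rfl).elim
  obtain ⟨k, hk⟩ := key
  rw [← hps, hk]
  exact pair_mem_cyc k

lemma memEE_A (n m : ℕ) [NeZero n] (p : ℕ) (hp : p < n) (hp2 : p % 2 = 1) :
    eA n p ∈ EE n m :=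
  mem_union_left _ (mem_union_left _
    (mem_image_of_mem _ (mem_filter.2 ⟨mem_range.2 hp, hp2⟩)))

lemma memEE_B (n m : ℕ) [NeZero n] (p : ℕ) (hp1 : 2 ≤ p) (hp : p ≤ m - 1) (hp2 : p % 2 = 0) :
    eB n m p ∈ EE n m :=
  mem_union_left _ (mem_union_right _
    (mem_image_of_mem _ (mem_filter.2 ⟨mem_Icc.2 ⟨hp1, hp⟩, hp2⟩)))

lemma memEE_C (n m : ℕ) [NeZero n] : eC n m ∈ EE n m :=
  mem_union_right _ (mem_singleton_self _)

set_option maxHeartbeats 1000000 in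
lemma cyc_sub (n m : ℕ) [NeZero n] (hnm : n = 2 * m) (hm : m % 2 = 1) (h7 : 7 ≤ m) :
    cyc n ⊆ EIh (EE n m) := by
  intro s hs
  rw [cyc, mem_image] at hs
  obtain ⟨i, -, rfl⟩ := hs
  have hvlt : i.val < n := i.isLt
  have hgoal : ({i, i + 1} : Finset (Fin n)) =
      {((i.val : ℕ) : Fin n), ((i.val + 1 : ℕ) : Fin n)} := by
    rw [Nat.cast_add, Nat.cast_one, Fin.cast_val_eq_self]
  rw [hgoal]
  have hn2 : 2 ≤ n := by omega
  have hcases : i.val = 0 ∨ (i.val % 2 = 1 ∧ 3 ≤ i.val) ∨ i.val = 1 ∨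
      (i.val % 2 = 0 ∧ 2 ≤ i.val ∧ i.val ≤ m - 1) ∨
      (i.val % 2 = 0 ∧ m + 1 ≤ i.val ∧ i.val ≤ n - 2) := by omega
  rcases hcases with h | h | h | h | h
  · refine EIh_mem_intro hn2 _ (eA n (n - 1)) (eC n m) (memEE_A n m _ (by omega) (by omega))
      (memEE_C n m) (eA_ne_eC n m hnm h7 _ (by omega)) i.val hvlt ?_
    ext a
    have halt := a.isLt
    rw [mem_inter, memA (n-1) a (by omega) (by omega), memC m a (by omega),
      memPair i.val a (by omega)]
    omega
  · refine EIh_mem_intro hn2 _ (eA n (i.val - 2)) (eA n i.val)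
      (memEE_A n m _ (by omega) (by omega)) (memEE_A n m _ (by omega) (by omega))
      (fun heq => by have := eA_inj n m hnm h7 _ _ (by omega) (by omega) heq; omega)
      i.val hvlt ?_
    ext a
    have halt := a.isLt
    rw [mem_inter, memA (i.val - 2) a (by omega) (by omega), memA i.val a (by omega) (by omega),
      memPair i.val a (by omega)]
    omega
  · refine EIh_mem_intro hn2 _ (eA n (n - 1)) (eA n 1)
      (memEE_A n m _ (by omega) (by omega)) (memEE_A n m _ (by omega) (by omega))
      (fun heq => by have := eA_inj n m hnm h7 _ _ (by omega) (by omega) heq; omega)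
      i.val hvlt ?_
    ext a
    have halt := a.isLt
    rw [mem_inter, memA (n - 1) a (by omega) (by omega), memA 1 a (by omega) (by omega),
      memPair i.val a (by omega)]
    omega
  · refine EIh_mem_intro hn2 _ (eA n (i.val - 1)) (eB n m i.val)
      (memEE_A n m _ (by omega) (by omega)) (memEE_B n m _ (by omega) (by omega) (by omega))
      (eA_ne_eB n m hnm h7 _ _ (by omega) (by omega) (by omega))
      i.val hvlt ?_
    ext a
    have halt := a.isLt
    rw [mem_inter, memA (i.val - 1) a (by omega) (by omega),
      memB m i.val a (by omega) (by omega) (by omega), memPair i.val a (by omega)]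
    omega
  · refine EIh_mem_intro hn2 _ (eA n (i.val - 1)) (eB n m (i.val - m + 1))
      (memEE_A n m _ (by omega) (by omega)) (memEE_B n m _ (by omega) (by omega) (by omega))
      (eA_ne_eB n m hnm h7 _ _ (by omega) (by omega) (by omega))
      i.val hvlt ?_
    ext a
    have halt := a.isLt
    rw [mem_inter, memA (i.val - 1) a (by omega) (by omega),
      memB m (i.val - m + 1) a (by omega) (by omega) (by omega), memPair i.val a (by omega)]
    omega

lemma cardE (n m : ℕ) [NeZero n] (hnm : n = 2 * m) (hm : m % 2 = 1) (h7 : 7 ≤ m) :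
    (EE n m).card = (3 * n + 3) / 4 := by
  have d1 : Disjoint (((Finset.range n).filter fun i => i % 2 = 1).image fun i : ℕ => eA n i)
      (((Finset.Icc 2 (m - 1)).filter fun i => i % 2 = 0).image fun i : ℕ => eB n m i) := by
    rw [disjoint_left]
    intro s hsA hsB
    simp only [mem_image, mem_filter, mem_range, mem_Icc] at hsA hsB
    obtain ⟨i, ⟨hi1, hi2⟩, rfl⟩ := hsA
    obtain ⟨j, ⟨⟨hj1, hj1'⟩, hj2⟩, heq⟩ := hsB
    exact eA_ne_eB n m hnm h7 i j hi1 hj1 hj1' heq.symm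
  have d2 : Disjoint ((((Finset.range n).filter fun i => i % 2 = 1).image fun i : ℕ => eA n i) ∪
      (((Finset.Icc 2 (m - 1)).filter fun i => i % 2 = 0).image fun i : ℕ => eB n m i))
      ({eC n m} : Finset (Finset (Fin n))) := by
    rw [disjoint_singleton_right, mem_union]
    rintro (hmem | hmem) <;> simp only [mem_image, mem_filter, mem_range, mem_Icc] at hmem
    · obtain ⟨i, ⟨hi1, hi2⟩, heq⟩ := hmem
      exact eA_ne_eC n m hnm h7 i hi1 heq
    · obtain ⟨j, ⟨⟨hj1, hj1'⟩, hj2⟩, heq⟩ := hmem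
      exact eB_ne_eC n m hnm h7 j hj1 hj1' heq
  have cA : (((Finset.range n).filter fun i => i % 2 = 1).image fun i : ℕ => eA n i).card = m := by
    rw [card_image_of_injOn, cardA n m hnm]
    intro a ha b hb h
    simp only [coe_filter, Set.mem_setOf_eq, mem_range] at ha hb
    exact eA_inj n m hnm h7 a b ha.1 hb.1 h
  have cB : (((Finset.Icc 2 (m - 1)).filter fun i => i % 2 = 0).image
      fun i : ℕ => eB n m i).card = (m - 1) / 2 := by
    rw [card_image_of_injOn, cardB m hm]
    intro a ha b hb h
    simp only [coe_filter, Set.mem_setOf_eq, mem_Icc] at ha hb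
    exact eB_inj n m hnm h7 a b ha.1.1 ha.1.2 hb.1.1 hb.1.2 h
  rw [EE, card_union_of_disjoint d2, card_union_of_disjoint d1, cA, cB, card_singleton]
  omega

lemma main (n m : ℕ) [NeZero n] (hnm : n = 2 * m) (hm : m % 2 = 1) (h7 : 7 ≤ m) :
    EIh (EE n m) = cyc n ∧ (EE n m).card = (3 * n + 3) / 4 :=
  ⟨subset_antisymm (EIh_sub n m hnm hm h7) (cyc_sub n m hnm hm h7), cardE n m hnm hm h7⟩

end S8


theorem stmt_8 (n : ℕ) [NeZero n] (hn : 14 ≤ n) (hmod : n % 4 = 2) :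
    letI E : Finset (Finset (Fin n)) :=
      (((Finset.range n).filter fun i => i % 2 = 1).image fun i : ℕ =>
        ({(i : Fin n), ((i + 1 : ℕ) : Fin n), ((i + 2 : ℕ) : Fin n),
          ((i + 3 : ℕ) : Fin n)} : Finset (Fin n))) ∪
      (((Finset.Icc 2 (n / 2 - 1)).filter fun i => i % 2 = 0).image fun i : ℕ =>
        ({(i : Fin n), ((i + 1 : ℕ) : Fin n), ((n / 2 + i - 1 : ℕ) : Fin n),
          ((n / 2 + i : ℕ) : Fin n)} : Finset (Fin n))) ∪
      {({(n : Fin n), 1, ((n / 2 + 1 : ℕ) : Fin n),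
        ((n / 2 + 2 : ℕ) : Fin n)} : Finset (Fin n))}
    EIh E = cyc n ∧ E.card = (3 * n + 3) / 4 := by
  exact S8.main n (n / 2) (by omega) (by omega) (by omega)
end

section
/- Let n ≥ 15 with n ≡ 3 (mod 4). The 4-uniform hypergraph H on V = {1,...,n} with hyperedges E = { {i, i+1, i+2, i+3} : i ∈ {1, 3, ..., n−2} } ∪ { {i, i+1, (n−1)/2 + i − 1, (n−1)/2 + i} : i ∈ {2, 4, ..., (n−1)/2 − 1} } ∪ { {n−1, n, (n+1)/2, (n+1)/2 + 1}, {n, 1, 2, 5} } (indices mod n) satisfies EI(H) = C_n and |E| = ⌈3n/4⌉. -/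
open Finset
open Fin.NatCast

/-! Auxiliary nat-level edge family -/

def qA (i : ℕ) : Finset ℕ := {i, i+1, i+2, i+3}
def qB (m i : ℕ) : Finset ℕ := {i, i+1, m+i-1, m+i}
def qA' (n : ℕ) : Finset ℕ := {n-2, n-1, 0, 1}
def qD1 (n m : ℕ) : Finset ℕ := {n-1, 0, m+1, m+2}
def qD2 : Finset ℕ := {0, 1, 2, 5}
def gA (n i : ℕ) : Finset ℕ := if i ≤ n-4 then qA i else qA' n

def Ffam (n m : ℕ) : Finset (Finset ℕ) :=
  (((Finset.range n).filter fun i => i % 2 = 1).image (gA n)) ∪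
  (((Finset.Icc 2 (m-1)).filter fun i => i % 2 = 0).image (qB m)) ∪
  {qD1 n m, qD2}

def imgc (n : ℕ) [NeZero n] (S : Finset ℕ) : Finset (Fin n) := S.image Nat.cast

lemma memF (n m : ℕ) (hn : n = 2*m+1) (hm : 7 ≤ m) (S : Finset ℕ) :
    S ∈ Ffam n m ↔ (∃ i, i % 2 = 1 ∧ i ≤ n - 4 ∧ S = qA i) ∨
      (∃ i, i % 2 = 0 ∧ 2 ≤ i ∧ i ≤ m - 1 ∧ S = qB m i) ∨
      S = qA' n ∨ S = qD1 n m ∨ S = qD2 := by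
  simp only [Ffam, mem_union, mem_image, mem_filter, mem_range, mem_Icc, mem_insert,
    mem_singleton]
  constructor
  · rintro ((⟨i, ⟨hi, ho⟩, rfl⟩ | ⟨i, ⟨⟨h2, h3⟩, he⟩, rfl⟩) | (h | h))
    · by_cases hc : i ≤ n - 4
      · exact Or.inl ⟨i, ho, hc, by simp [gA, hc]⟩
      · right; right; left; simp [gA, hc]
    · exact Or.inr (Or.inl ⟨i, he, h2, h3, rfl⟩)
    · exact Or.inr (Or.inr (Or.inr (Or.inl h)))
    · exact Or.inr (Or.inr (Or.inr (Or.inr h)))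
  · rintro (⟨i, ho, hc, rfl⟩ | ⟨i, he, h2, h3, rfl⟩ | rfl | rfl | rfl)
    · exact Or.inl (Or.inl ⟨i, ⟨by omega, ho⟩, by simp [gA, hc]⟩)
    · exact Or.inl (Or.inr ⟨i, ⟨⟨h2, h3⟩, he⟩, rfl⟩)
    · refine Or.inl (Or.inl ⟨n-2, ⟨by omega, by omega⟩, ?_⟩)
      simp [gA, show ¬ (n-2 ≤ n-4) by omega]
    · exact Or.inr (Or.inl rfl)
    · exact Or.inr (Or.inr rfl)

lemma boundsF (n m : ℕ) (hn : n = 2*m+1) (hm : 7 ≤ m) (S : Finset ℕ)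
    (hS : S ∈ Ffam n m) : ∀ a ∈ S, a < n := by
  rw [memF n m hn hm] at hS
  rcases hS with ⟨i, ho, hc, rfl⟩ | ⟨i, he, h2, h3, rfl⟩ | rfl | rfl | rfl <;>
    intro a ha <;> simp [qA, qB, qA', qD1, qD2] at ha <;> omega

lemma cast_injOn (n : ℕ) [NeZero n] (S : Set ℕ) (hS : ∀ a ∈ S, a < n) :
    Set.InjOn (Nat.cast : ℕ → Fin n) S := by
  intro a ha b hb h
  have h2 : ((a : Fin n) : ℕ) = ((b : Fin n) : ℕ) := by rw [h]
  rwa [Fin.val_cast_of_lt (hS a ha), Fin.val_cast_of_lt (hS b hb)] at h2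

lemma imgc_card (n : ℕ) [NeZero n] (S : Finset ℕ) (hS : ∀ a ∈ S, a < n) :
    (imgc n S).card = S.card :=
  Finset.card_image_of_injOn (cast_injOn n S (by simpa using hS))

lemma imgc_inter (n : ℕ) [NeZero n] (S T : Finset ℕ) (hS : ∀ a ∈ S, a < n)
    (hT : ∀ a ∈ T, a < n) : imgc n S ∩ imgc n T = imgc n (S ∩ T) := by
  refine (Finset.image_inter_of_injOn S T ?_).symm
  refine cast_injOn n _ ?_
  intro a ha
  rcases ha with ha | ha
  · exact hS a (by simpa using ha)
  · exact hT a (by simpa using ha)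

lemma imgc_back (n : ℕ) [NeZero n] (S : Finset ℕ) (hS : ∀ a ∈ S, a < n) :
    (imgc n S).image Fin.val = S := by
  rw [imgc, Finset.image_image]
  refine (Finset.image_congr (g := id) ?_).trans Finset.image_id
  intro a ha
  exact Fin.val_cast_of_lt (hS a (by simpa using ha))

lemma imgc_inj (n : ℕ) [NeZero n] (S T : Finset ℕ) (hS : ∀ a ∈ S, a < n)
    (hT : ∀ a ∈ T, a < n) (h : imgc n S = imgc n T) : S = T := by
  rw [← imgc_back n S hS, ← imgc_back n T hT, h]

lemma pair_goal (n : ℕ) (S T : Finset ℕ) (a : ℕ) (h1 : a + 1 < n) (h : S ∩ T = {a, a+1}) :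
    ∃ b, b < n ∧ S ∩ T = {b, (b+1) % n} :=
  ⟨a, by omega, by rw [Nat.mod_eq_of_lt h1]; exact h⟩

set_option maxHeartbeats 2000000 in
lemma main_inter (n m : ℕ) (hn : n = 2*m+1) (hm : 7 ≤ m) (hmo : m % 2 = 1) :
    ∀ S ∈ Ffam n m, ∀ T ∈ Ffam n m, S ≠ T → 2 ≤ (S ∩ T).card →
    ∃ a, a < n ∧ S ∩ T = {a, (a+1) % n} := by
  intro S hS T hT hne hcard
  obtain ⟨x, hx, y, hy, hxy⟩ := Finset.one_lt_card.mp hcard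
  rw [Finset.mem_inter] at hx hy
  obtain ⟨hx1, hx2⟩ := hx; obtain ⟨hy1, hy2⟩ := hy
  rw [memF n m hn hm] at hS hT
  rcases hS with ⟨i, ho, hc, rfl⟩ | ⟨i, he, h2, h3, rfl⟩ | rfl | rfl | rfl <;>
    rcases hT with ⟨j, ho', hc', rfl⟩ | ⟨j, he', h2', h3', rfl⟩ | rfl | rfl | rfl <;>
    simp only [qA, qB, qA', qD1, qD2, mem_insert, mem_singleton] at hx1 hx2 hy1 hy2
  -- A A
  · have hij : i ≠ j := fun h => hne (by rw [h])
    have hrel : j = i + 2 ∨ i = j + 2 := by omega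
    rcases hrel with hrel | hrel
    · refine pair_goal n _ _ (i+2) (by omega) ?_
      ext k; simp only [qA, mem_inter, mem_insert, mem_singleton]; omega
    · refine pair_goal n _ _ (j+2) (by omega) ?_
      ext k; simp only [qA, mem_inter, mem_insert, mem_singleton]; omega
  -- A B
  · have hrel : j = i + 1 ∨ i = m + j - 2 := by omega
    rcases hrel with hrel | hrel
    · refine pair_goal n _ _ (i+1) (by omega) ?_
      ext k; simp only [qA, qB, mem_inter, mem_insert, mem_singleton]; omega
    · refine pair_goal n _ _ (m+j-1) (by omega) ?_
      ext k; simp only [qA, qB, mem_inter, mem_insert, mem_singleton]; omega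
  -- A A'
  · have hrel : i = n - 4 := by omega
    refine pair_goal n _ _ (n-2) (by omega) ?_
    ext k; simp only [qA, qA', mem_inter, mem_insert, mem_singleton]; omega
  -- A D1
  · have hrel : i = m := by omega
    refine pair_goal n _ _ (m+1) (by omega) ?_
    ext k; simp only [qA, qD1, mem_inter, mem_insert, mem_singleton]; omega
  -- A D2
  · have hrel : i = 1 := by omega
    refine pair_goal n _ _ 1 (by omega) ?_
    ext k; simp only [qA, qD2, mem_inter, mem_insert, mem_singleton]; omega
  -- B A
  · have hrel : i = j + 1 ∨ j = m + i - 2 := by omega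
    rcases hrel with hrel | hrel
    · refine pair_goal n _ _ (j+1) (by omega) ?_
      ext k; simp only [qA, qB, mem_inter, mem_insert, mem_singleton]; omega
    · refine pair_goal n _ _ (m+i-1) (by omega) ?_
      ext k; simp only [qA, qB, mem_inter, mem_insert, mem_singleton]; omega
  -- B B
  · have hij : i ≠ j := fun h => hne (by rw [h])
    exfalso; omega
  -- B A'
  · exfalso; omega
  -- B D1
  · have hrel : i = 2 := by omega
    refine pair_goal n _ _ (m+1) (by omega) ?_
    ext k; simp only [qB, qD1, mem_inter, mem_insert, mem_singleton]; omega
  -- B D2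
  · exfalso; omega
  -- A' A
  · have hrel : j = n - 4 := by omega
    refine pair_goal n _ _ (n-2) (by omega) ?_
    ext k; simp only [qA, qA', mem_inter, mem_insert, mem_singleton]; omega
  -- A' B
  · exfalso; omega
  -- A' A'
  · exact absurd rfl hne
  -- A' D1
  · refine ⟨n-1, by omega, ?_⟩
    have h0 : (n-1+1) % n = 0 := by
      have e : n-1+1 = n := by omega
      rw [e, Nat.mod_self]
    rw [h0]; ext k; simp only [qA', qD1, mem_inter, mem_insert, mem_singleton]; omega
  -- A' D2
  · refine pair_goal n _ _ 0 (by omega) ?_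
    ext k; simp only [qA', qD2, mem_inter, mem_insert, mem_singleton]; omega
  -- D1 A
  · have hrel : j = m := by omega
    refine pair_goal n _ _ (m+1) (by omega) ?_
    ext k; simp only [qA, qD1, mem_inter, mem_insert, mem_singleton]; omega
  -- D1 B
  · have hrel : j = 2 := by omega
    refine pair_goal n _ _ (m+1) (by omega) ?_
    ext k; simp only [qB, qD1, mem_inter, mem_insert, mem_singleton]; omega
  -- D1 A'
  · refine ⟨n-1, by omega, ?_⟩
    have h0 : (n-1+1) % n = 0 := by
      have e : n-1+1 = n := by omega
      rw [e, Nat.mod_self]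
    rw [h0]; ext k; simp only [qA', qD1, mem_inter, mem_insert, mem_singleton]; omega
  -- D1 D1
  · exact absurd rfl hne
  -- D1 D2
  · exfalso; omega
  -- D2 A
  · have hrel : j = 1 := by omega
    refine pair_goal n _ _ 1 (by omega) ?_
    ext k; simp only [qA, qD2, mem_inter, mem_insert, mem_singleton]; omega
  -- D2 B
  · exfalso; omega
  -- D2 A'
  · refine pair_goal n _ _ 0 (by omega) ?_
    ext k; simp only [qA', qD2, mem_inter, mem_insert, mem_singleton]; omega
  -- D2 D1
  · exfalso; omega
  -- D2 D2
  · exact absurd rfl hne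

set_option maxHeartbeats 1000000 in
lemma main_rev (n m : ℕ) (hn : n = 2*m+1) (hm : 7 ≤ m) (hmo : m % 2 = 1) :
    ∀ a < n, ∃ S T, S ∈ Ffam n m ∧ T ∈ Ffam n m ∧ S ≠ T ∧ S ∩ T = {a, (a+1) % n} := by
  intro a ha
  have hmem := memF n m hn hm
  rcases (by omega : a = 0 ∨ a = 1 ∨ (a % 2 = 1 ∧ 3 ≤ a ∧ a ≤ n - 4) ∨ a = n - 2 ∨
      a = n - 1 ∨ (a % 2 = 0 ∧ 2 ≤ a ∧ a ≤ m - 1) ∨ (a % 2 = 0 ∧ m + 1 ≤ a ∧ a ≤ n - 3))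
    with rfl | rfl | ⟨hp, h3, h4⟩ | rfl | rfl | ⟨hp, h3, h4⟩ | ⟨hp, h3, h4⟩
  · -- a = 0 : A' ∩ D2 = {0,1}
    refine ⟨qA' n, qD2, (hmem _).2 (by tauto), (hmem _).2 (by tauto), ?_, ?_⟩
    · intro h
      have := Finset.ext_iff.mp h (n-2)
      simp only [qA', qD2, mem_insert, mem_singleton, true_or, or_true, iff_true, true_iff] at this; omega
    · rw [Nat.mod_eq_of_lt (by omega)]
      ext k; simp only [qA', qD2, mem_inter, mem_insert, mem_singleton]; omega
  · -- a = 1 : A 1 ∩ D2 = {1,2}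
    refine ⟨qA 1, qD2, (hmem _).2 (Or.inl ⟨1, by omega, by omega, rfl⟩),
      (hmem _).2 (by tauto), ?_, ?_⟩
    · intro h
      have := Finset.ext_iff.mp h 4
      simp only [qA, qD2, mem_insert, mem_singleton, true_or, or_true, iff_true, true_iff] at this; omega
    · rw [Nat.mod_eq_of_lt (by omega)]
      ext k; simp only [qA, qD2, mem_inter, mem_insert, mem_singleton]; omega
  · -- a odd in [3, n-4] : A (a-2) ∩ A a = {a, a+1}
    refine ⟨qA (a-2), qA a, (hmem _).2 (Or.inl ⟨a-2, by omega, by omega, rfl⟩),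
      (hmem _).2 (Or.inl ⟨a, by omega, by omega, rfl⟩), ?_, ?_⟩
    · intro h
      have := Finset.ext_iff.mp h (a+3)
      simp only [qA, mem_insert, mem_singleton, true_or, or_true, iff_true, true_iff] at this; omega
    · rw [Nat.mod_eq_of_lt (by omega)]
      ext k; simp only [qA, mem_inter, mem_insert, mem_singleton]; omega
  · -- a = n-2 : A (n-4) ∩ A' = {n-2, n-1}
    refine ⟨qA (n-4), qA' n, (hmem _).2 (Or.inl ⟨n-4, by omega, by omega, rfl⟩),
      (hmem _).2 (by tauto), ?_, ?_⟩
    · intro h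
      have := Finset.ext_iff.mp h 0
      simp only [qA, qA', mem_insert, mem_singleton, true_or, or_true, iff_true, true_iff] at this; omega
    · rw [Nat.mod_eq_of_lt (by omega)]
      ext k; simp only [qA, qA', mem_inter, mem_insert, mem_singleton]; omega
  · -- a = n-1 : A' ∩ D1 = {n-1, 0}
    refine ⟨qA' n, qD1 n m, (hmem _).2 (by tauto), (hmem _).2 (by tauto), ?_, ?_⟩
    · intro h
      have := Finset.ext_iff.mp h (n-2)
      simp only [qA', qD1, mem_insert, mem_singleton, true_or, or_true, iff_true, true_iff] at this; omega
    · have h0 : (n-1+1) % n = 0 := by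
        have e : n-1+1 = n := by omega
        rw [e, Nat.mod_self]
      rw [h0]
      ext k; simp only [qA', qD1, mem_inter, mem_insert, mem_singleton]; omega
  · -- a even in [2, m-1] : A (a-1) ∩ B a = {a, a+1}
    refine ⟨qA (a-1), qB m a, (hmem _).2 (Or.inl ⟨a-1, by omega, by omega, rfl⟩),
      (hmem _).2 (Or.inr (Or.inl ⟨a, by omega, by omega, by omega, rfl⟩)), ?_, ?_⟩
    · intro h
      have := Finset.ext_iff.mp h (m+a)
      simp only [qA, qB, mem_insert, mem_singleton, true_or, or_true, iff_true, true_iff] at this; omega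
    · rw [Nat.mod_eq_of_lt (by omega)]
      ext k; simp only [qA, qB, mem_inter, mem_insert, mem_singleton]; omega
  · -- a even in [m+1, n-3] : A (a-1) ∩ B (a-m+1) = {a, a+1}
    refine ⟨qA (a-1), qB m (a-m+1), (hmem _).2 (Or.inl ⟨a-1, by omega, by omega, rfl⟩),
      (hmem _).2 (Or.inr (Or.inl ⟨a-m+1, by omega, by omega, by omega, rfl⟩)), ?_, ?_⟩
    · intro h
      have := Finset.ext_iff.mp h (a-m+1)
      simp only [qA, qB, mem_insert, mem_singleton, true_or, or_true, iff_true, true_iff] at this; omega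
    · rw [Nat.mod_eq_of_lt (by omega)]
      ext k; simp only [qA, qB, mem_inter, mem_insert, mem_singleton]; omega

lemma card_odd_below (N : ℕ) : ((Finset.range N).filter fun i => i % 2 = 1).card = N / 2 := by
  induction N with
  | zero => simp
  | succ k ih =>
    rw [Finset.range_add_one, Finset.filter_insert]
    split_ifs with h
    · rw [Finset.card_insert_of_notMem (by simp)]; omega
    · omega

lemma card_even_from2 (N : ℕ) :
    ((Finset.range N).filter fun i => i % 2 = 0 ∧ 2 ≤ i).card = (N+1) / 2 - 1 := by
  induction N with
  | zero => simp
  | succ k ih =>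
    rw [Finset.range_add_one, Finset.filter_insert]
    split_ifs with h
    · rw [Finset.card_insert_of_notMem (by simp)]; omega
    · omega

set_option maxHeartbeats 1000000 in
lemma cardF (n m : ℕ) (hn : n = 2*m+1) (hm : 7 ≤ m) (hmo : m % 2 = 1) :
    (Ffam n m).card = (3*n+3) / 4 := by
  have epoint : ∀ (S T : Finset ℕ), S = T → ∀ a, (a ∈ S ↔ a ∈ T) :=
    fun S T h a => Finset.ext_iff.mp h a
  rw [Ffam]
  have h12 : Disjoint (((Finset.range n).filter fun i => i % 2 = 1).image (gA n))
      (((Finset.Icc 2 (m-1)).filter fun i => i % 2 = 0).image (qB m)) := by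
    rw [Finset.disjoint_left]
    rintro S hS hS'
    simp only [mem_image, mem_filter, mem_range, mem_Icc] at hS hS'
    obtain ⟨i, ⟨hi, ho⟩, rfl⟩ := hS
    obtain ⟨j, ⟨⟨hj2, hj3⟩, hje⟩, hEq⟩ := hS'
    unfold gA at hEq
    split_ifs at hEq with hc
    · have e1 := epoint _ _ hEq j
      have e2 := epoint _ _ hEq (m+j)
      simp only [qA, qB, mem_insert, mem_singleton, true_or, or_true, iff_true,
        true_iff] at e1 e2
      omega
    · have e1 := epoint _ _ hEq 0
      simp only [qA', qB, mem_insert, mem_singleton, true_or, or_true, iff_true,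
        true_iff] at e1
      omega
  have h3 : Disjoint ((((Finset.range n).filter fun i => i % 2 = 1).image (gA n)) ∪
      (((Finset.Icc 2 (m-1)).filter fun i => i % 2 = 0).image (qB m)))
      ({qD1 n m, qD2} : Finset (Finset ℕ)) := by
    rw [Finset.disjoint_left]
    rintro S hS hS'
    simp only [mem_union, mem_image, mem_filter, mem_range, mem_Icc, mem_insert,
      mem_singleton] at hS hS'
    rcases hS with ⟨i, ⟨hi, ho⟩, rfl⟩ | ⟨j, ⟨⟨hj2, hj3⟩, hje⟩, rfl⟩
    · unfold gA at hS'
      split_ifs at hS' with hc <;> rcases hS' with hEq | hEq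
      · have e1 := epoint _ _ hEq 0
        simp only [qA, qD1, mem_insert, mem_singleton, true_or, or_true, iff_true,
          true_iff] at e1
        omega
      · have e1 := epoint _ _ hEq 0
        simp only [qA, qD2, mem_insert, mem_singleton, true_or, or_true, iff_true,
          true_iff] at e1
        omega
      · have e1 := epoint _ _ hEq (n-2)
        simp only [qA', qD1, mem_insert, mem_singleton, true_or, or_true, iff_true,
          true_iff] at e1
        omega
      · have e1 := epoint _ _ hEq (n-2)
        simp only [qA', qD2, mem_insert, mem_singleton, true_or, or_true, iff_true,
          true_iff] at e1
        omega
    · rcases hS' with hEq | hEq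
      · have e1 := epoint _ _ hEq 0
        simp only [qB, qD1, mem_insert, mem_singleton, true_or, or_true, iff_true,
          true_iff] at e1
        omega
      · have e1 := epoint _ _ hEq 0
        simp only [qB, qD2, mem_insert, mem_singleton, true_or, or_true, iff_true,
          true_iff] at e1
        omega
  rw [Finset.card_union_of_disjoint h3, Finset.card_union_of_disjoint h12]
  have c1 : (((Finset.range n).filter fun i => i % 2 = 1).image (gA n)).card = n / 2 := by
    rw [Finset.card_image_of_injOn, card_odd_below]
    intro i hi j hj hEq
    simp only [coe_filter, mem_range, Set.mem_setOf_eq] at hi hj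
    unfold gA at hEq
    split_ifs at hEq with hc hd hd
    · have e1 := epoint _ _ hEq i
      have e2 := epoint _ _ hEq j
      simp only [qA, mem_insert, mem_singleton, true_or, or_true, iff_true,
        true_iff] at e1 e2
      omega
    · have e1 := epoint _ _ hEq 0
      simp only [qA, qA', mem_insert, mem_singleton, true_or, or_true, iff_true,
        true_iff] at e1
      omega
    · have e1 := epoint _ _ hEq 0
      simp only [qA, qA', mem_insert, mem_singleton, true_or, or_true, iff_true,
        true_iff] at e1
      omega
    · omega
  have c2 : ((((Finset.Icc 2 (m-1)).filter fun i => i % 2 = 0)).image (qB m)).card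
      = (m-1) / 2 := by
    rw [Finset.card_image_of_injOn]
    · have heq : ((Finset.Icc 2 (m-1)).filter fun i => i % 2 = 0)
          = ((Finset.range m).filter fun i => i % 2 = 0 ∧ 2 ≤ i) := by
        ext k
        simp only [mem_filter, mem_Icc, mem_range]
        omega
      rw [heq, card_even_from2]
      omega
    · intro i hi j hj hEq
      simp only [coe_filter, mem_Icc, Set.mem_setOf_eq] at hi hj
      have e1 := epoint _ _ hEq i
      have e2 := epoint _ _ hEq j
      simp only [qB, mem_insert, mem_singleton, true_or, or_true, iff_true,
        true_iff] at e1 e2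
      omega
  have c3 : ({qD1 n m, qD2} : Finset (Finset ℕ)).card = 2 := by
    rw [Finset.card_insert_of_notMem, Finset.card_singleton]
    simp only [mem_singleton]
    intro hEq
    have e1 := epoint _ _ hEq (n-1)
    simp only [qD1, qD2, mem_insert, mem_singleton, true_or, or_true, iff_true,
      true_iff] at e1
    omega
  rw [c1, c2, c3]
  omega


set_option maxHeartbeats 1000000 in
theorem stmt_9 (n : ℕ) [NeZero n] (hn : 15 ≤ n) (hmod : n % 4 = 3) :
    letI E : Finset (Finset (Fin n)) :=
      (((Finset.range n).filter fun i => i % 2 = 1).image fun i : ℕ =>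
        ({(i : Fin n), ((i + 1 : ℕ) : Fin n), ((i + 2 : ℕ) : Fin n),
          ((i + 3 : ℕ) : Fin n)} : Finset (Fin n))) ∪
      (((Finset.Icc 2 ((n - 1) / 2 - 1)).filter fun i => i % 2 = 0).image fun i : ℕ =>
        ({(i : Fin n), ((i + 1 : ℕ) : Fin n), (((n - 1) / 2 + i - 1 : ℕ) : Fin n),
          (((n - 1) / 2 + i : ℕ) : Fin n)} : Finset (Fin n))) ∪
      {({((n - 1 : ℕ) : Fin n), (n : Fin n), (((n + 1) / 2 : ℕ) : Fin n),
          (((n + 1) / 2 + 1 : ℕ) : Fin n)} : Finset (Fin n)),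
        ({(n : Fin n), 1, 2, 5} : Finset (Fin n))}
    EIh E = cyc n ∧ E.card = (3 * n + 3) / 4 := by
  obtain ⟨m, hn2, hm, hmo⟩ : ∃ m, n = 2*m+1 ∧ 7 ≤ m ∧ m % 2 = 1 :=
    ⟨(n-1)/2, by omega, by omega, by omega⟩
  have hbound := boundsF n m hn2 hm
  have hEF :
      (((Finset.range n).filter fun i => i % 2 = 1).image fun i : ℕ =>
        ({(i : Fin n), ((i + 1 : ℕ) : Fin n), ((i + 2 : ℕ) : Fin n),
          ((i + 3 : ℕ) : Fin n)} : Finset (Fin n))) ∪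
      (((Finset.Icc 2 ((n - 1) / 2 - 1)).filter fun i => i % 2 = 0).image fun i : ℕ =>
        ({(i : Fin n), ((i + 1 : ℕ) : Fin n), (((n - 1) / 2 + i - 1 : ℕ) : Fin n),
          (((n - 1) / 2 + i : ℕ) : Fin n)} : Finset (Fin n))) ∪
      {({((n - 1 : ℕ) : Fin n), (n : Fin n), (((n + 1) / 2 : ℕ) : Fin n),
          (((n + 1) / 2 + 1 : ℕ) : Fin n)} : Finset (Fin n)),
        ({(n : Fin n), 1, 2, 5} : Finset (Fin n))} = (Ffam n m).image (imgc n) := by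
    rw [show (n-1)/2 = m from by omega, show (n+1)/2 = m+1 from by omega]
    rw [Ffam, Finset.image_union, Finset.image_union]
    congr 1
    congr 1
    · -- part A
      rw [Finset.image_image]
      refine Finset.image_congr ?_
      intro i hi
      simp only [coe_filter, mem_range, Set.mem_setOf_eq] at hi
      simp only [Function.comp_apply]
      unfold gA
      split_ifs with hc
      · simp [imgc, qA]
      · have hi2 : i = n - 2 := by omega
        subst hi2
        simp only [imgc, qA', Finset.image_insert, Finset.image_singleton]
        rw [show n-2+1 = n-1 from by omega]
        have e2 : ((n-2+2 : ℕ) : Fin n) = ((0 : ℕ) : Fin n) := by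
          rw [show n-2+2 = n from by omega]; simp
        have e3 : ((n-2+3 : ℕ) : Fin n) = ((1 : ℕ) : Fin n) := by
          rw [show n-2+3 = n+1 from by omega]; push_cast; simp
        rw [e2, e3]
    · -- part B
      rw [Finset.image_image]
      refine Finset.image_congr ?_
      intro i hi
      simp only [Function.comp_apply]
      simp [imgc, qB]
    · -- part C
      simp only [Finset.image_insert, Finset.image_singleton]
      have d1 : imgc n (qD1 n m) = {((n - 1 : ℕ) : Fin n), (n : Fin n), ((m+1 : ℕ) : Fin n),
          ((m+1+1 : ℕ) : Fin n)} := by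
        simp only [imgc, qD1, Finset.image_insert, Finset.image_singleton]
        rw [show m+1+1 = m+2 from by omega]
        congr 2
        simp
      have d2 : imgc n qD2 = {(n : Fin n), 1, 2, 5} := by
        simp [imgc, qD2]
      rw [d1, d2]
  constructor
  · -- EIh E = cyc n
    rw [hEF]
    ext e
    simp only [EIh, cyc, Finset.mem_image, Finset.mem_filter, Finset.mem_product,
      Finset.mem_univ, true_and]
    constructor
    · rintro ⟨⟨e1, e2⟩, ⟨⟨he1, he2⟩, hne, hcard⟩, rfl⟩
      simp only [Finset.mem_image] at he1 he2
      obtain ⟨S, hS, rfl⟩ := he1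
      obtain ⟨T, hT, rfl⟩ := he2
      have hST : S ≠ T := fun h => hne (by rw [h])
      rw [imgc_inter n S T (hbound S hS) (hbound T hT)] at hcard ⊢
      rw [imgc_card n _ (fun a ha => hbound S hS a (Finset.mem_of_mem_inter_left ha))] at hcard
      obtain ⟨a, ha, hinter⟩ := main_inter n m hn2 hm hmo S hS T hT hST hcard
      refine ⟨(a : Fin n), ?_⟩
      rw [hinter]
      simp only [imgc, Finset.image_insert, Finset.image_singleton]
      have e1 : (((a+1) % n : ℕ) : Fin n) = ((a+1 : ℕ) : Fin n) := by
        simp only [Fin.ext_iff, Fin.val_natCast]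
        exact Nat.mod_mod_of_dvd _ dvd_rfl
      rw [e1]
      push_cast
      rfl
    · rintro ⟨i, rfl⟩
      obtain ⟨S, T, hS, hT, hST, hinter⟩ := main_rev n m hn2 hm hmo i.val i.isLt
      refine ⟨(imgc n S, imgc n T), ⟨⟨⟨S, hS, rfl⟩, ⟨T, hT, rfl⟩⟩,
        fun h => hST (imgc_inj n S T (hbound S hS) (hbound T hT) h), ?_⟩, ?_⟩
      · rw [imgc_inter n S T (hbound S hS) (hbound T hT),
          imgc_card n _ (fun a ha => hbound S hS a (Finset.mem_of_mem_inter_left ha)),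
          hinter]
        rw [Finset.card_insert_of_notMem, Finset.card_singleton]
        simp only [Finset.mem_singleton]
        by_cases hc : i.val + 1 = n
        · rw [hc, Nat.mod_self]; omega
        · rw [Nat.mod_eq_of_lt (by omega)]; omega
      · rw [imgc_inter n S T (hbound S hS) (hbound T hT), hinter]
        simp only [imgc, Finset.image_insert, Finset.image_singleton]
        have e1 : (((i.val+1) % n : ℕ) : Fin n) = ((i.val+1 : ℕ) : Fin n) := by
          simp only [Fin.ext_iff, Fin.val_natCast]
          exact Nat.mod_mod_of_dvd _ dvd_rfl
        rw [e1]
        push_cast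
        rfl
  · -- cardinality
    rw [hEF, Finset.card_image_of_injOn, cardF n m hn2 hm hmo]
    intro S hS T hT h
    exact imgc_inj n S T (hbound S (by simpa using hS)) (hbound T (by simpa using hT)) h
end
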